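/- arXiv:2005.00075 — 9 statements merged into one kernel-verified Lean document; each statement's English description precedes it below -/
import Mathlib

section
/- Let T ∈ L(H) and suppose β, γ are functions in the Wiener algebra such that the series Σ|β_n| T*^n T^n and Σ|γ_n| T*^n T^n both converge in the strong operator topology. Then the product δ = βγ also satisfies: Σ|δ_n| T*^n T^n converges in the strong operator topology. -/
open Filter Topology ContinuousLinearMap
open scoped InnerProductSpace

private lemma qf_bound' {H : Type*} [NormedAddCommGroup H] [InnerProductSpace ℂ H] [CompleteSpace H]
    (T : H →L[ℂ] H) (b : ℕ → ℝ) (hb : ∀ n, 0 ≤ b n) (S : H →L[ℂ] H)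
    (hS : ∀ x : H, Tendsto (fun N => ∑ n ∈ Finset.range N,
        ((b n : ℂ) • (adjoint (T ^ n)) ((T ^ n) x))) atTop (𝓝 (S x)))
    (x : H) (N : ℕ) :
    ∑ n ∈ Finset.range N, b n * ‖(T ^ n) x‖ ^ 2 ≤ ‖S‖ * ‖x‖ ^ 2 := by
  have hinner : ∀ M : ℕ, ⟪x, ∑ n ∈ Finset.range M, ((b n : ℂ) • (adjoint (T ^ n)) ((T ^ n) x))⟫_ℂ
      = ((∑ n ∈ Finset.range M, b n * ‖(T ^ n) x‖ ^ 2 : ℝ) : ℂ) := by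
    intro M
    rw [inner_sum, Complex.ofReal_sum]
    refine Finset.sum_congr rfl fun n _ => ?_
    rw [inner_smul_right, adjoint_inner_right, inner_self_eq_norm_sq_to_K,
      Complex.ofReal_mul, Complex.ofReal_pow]
    rfl
  have h1 : Tendsto (fun M => ((∑ n ∈ Finset.range M, b n * ‖(T ^ n) x‖ ^ 2 : ℝ) : ℂ))
      atTop (𝓝 (⟪x, S x⟫_ℂ)) := by
    simp_rw [← hinner]
    exact (continuous_const.inner continuous_id).continuousAt.tendsto.comp (hS x)
  have h2 : Tendsto (fun M => ∑ n ∈ Finset.range M, b n * ‖(T ^ n) x‖ ^ 2)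
      atTop (𝓝 ((⟪x, S x⟫_ℂ).re)) := by
    have h := (Complex.continuous_re.tendsto _).comp h1
    simp only [Function.comp_def, Complex.ofReal_re] at h
    exact h
  have hmono : Monotone (fun M => ∑ n ∈ Finset.range M, b n * ‖(T ^ n) x‖ ^ 2) := by
    intro i j hij
    exact Finset.sum_le_sum_of_subset_of_nonneg (Finset.range_subset_range.2 hij)
      (fun n _ _ => mul_nonneg (hb n) (sq_nonneg _))
  have hle := hmono.ge_of_tendsto h2 N
  refine hle.trans ?_
  calc (⟪x, S x⟫_ℂ).re ≤ ‖⟪x, S x⟫_ℂ‖ := Complex.re_le_norm _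
    _ ≤ ‖x‖ * ‖S x‖ := norm_inner_le_norm _ _
    _ ≤ ‖x‖ * (‖S‖ * ‖x‖) := mul_le_mul_of_nonneg_left (S.le_opNorm x) (norm_nonneg _)
    _ = ‖S‖ * ‖x‖ ^ 2 := by ring

private lemma finset_sum_le_of_range_le' {f : ℕ → ℝ} {c : ℝ} (hf : ∀ n, 0 ≤ f n)
    (h : ∀ N, ∑ n ∈ Finset.range N, f n ≤ c) (I : Finset ℕ) : ∑ n ∈ I, f n ≤ c := by
  refine le_trans ?_ (h (I.sup id + 1))
  refine Finset.sum_le_sum_of_subset_of_nonneg ?_ (fun n _ _ => hf n)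
  intro i hi
  exact Finset.mem_range.2 (Nat.lt_succ_of_le (Finset.le_sup (f := id) hi))

private lemma sum_tri_le' (F : ℕ → ℕ → ℝ) (hF : ∀ j k, 0 ≤ F j k) (N : ℕ) :
    ∑ n ∈ Finset.range N, ∑ j ∈ Finset.range (n + 1), F j (n - j)
      ≤ ∑ j ∈ Finset.range N, ∑ k ∈ Finset.range N, F j k := by
  rw [← Finset.sum_product']
  rw [Finset.sum_sigma']
  have hinj : ∀ p ∈ (Finset.range N).sigma (fun n => Finset.range (n + 1)),
      ∀ q ∈ (Finset.range N).sigma (fun n => Finset.range (n + 1)),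
      (fun p : Σ _ : ℕ, ℕ => (p.2, p.1 - p.2)) p = (fun p : Σ _ : ℕ, ℕ => (p.2, p.1 - p.2)) q → p = q := by
    rintro ⟨n, j⟩ hp ⟨m, k⟩ hq h
    simp only [Finset.mem_sigma, Finset.mem_range, Nat.lt_succ_iff] at hp hq
    simp only [Prod.mk.injEq] at h
    obtain ⟨h1, h2⟩ := h
    subst h1
    have : n = m := by omega
    subst this
    rfl
  calc ∑ p ∈ (Finset.range N).sigma (fun n => Finset.range (n + 1)), F p.2 (p.1 - p.2)
      = ∑ q ∈ ((Finset.range N).sigma (fun n => Finset.range (n + 1))).image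
          (fun p : Σ _ : ℕ, ℕ => (p.2, p.1 - p.2)), F q.1 q.2 := by
        rw [Finset.sum_image hinj]
    _ ≤ ∑ q ∈ Finset.range N ×ˢ Finset.range N, F q.1 q.2 := by
        refine Finset.sum_le_sum_of_subset_of_nonneg ?_ (fun q _ _ => hF q.1 q.2)
        intro q hq
        simp only [Finset.mem_image, Finset.mem_sigma, Finset.mem_range, Nat.lt_succ_iff] at hq
        obtain ⟨⟨n, j⟩, ⟨hn, hj⟩, rfl⟩ := hq
        simp only [Finset.mem_product, Finset.mem_range]
        exact ⟨lt_of_le_of_lt hj hn, lt_of_le_of_lt (Nat.sub_le _ _) hn⟩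

private lemma key_cs' {H : Type*} [NormedAddCommGroup H] [InnerProductSpace ℂ H] [CompleteSpace H]
    (T : H →L[ℂ] H) (a : ℕ → ℝ) (ha : ∀ n, 0 ≤ a n) (C : ℝ)
    (hbound : ∀ (y : H) (I : Finset ℕ), ∑ n ∈ I, a n * ‖(T ^ n) y‖ ^ 2 ≤ C * ‖y‖ ^ 2)
    (x : H) (I : Finset ℕ) :
    ‖∑ n ∈ I, (a n : ℂ) • (adjoint (T ^ n)) ((T ^ n) x)‖ ^ 2
      ≤ C * ∑ n ∈ I, a n * ‖(T ^ n) x‖ ^ 2 := by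
  set v := ∑ n ∈ I, (a n : ℂ) • (adjoint (T ^ n)) ((T ^ n) x) with hv
  set E := ∑ n ∈ I, a n * ‖(T ^ n) x‖ ^ 2 with hE
  have hE0 : 0 ≤ E := Finset.sum_nonneg fun n _ => mul_nonneg (ha n) (sq_nonneg _)
  have h0 : ∀ u : H, ⟪v, u⟫_ℂ = ∑ n ∈ I, (a n : ℂ) * ⟪(T ^ n) x, (T ^ n) u⟫_ℂ := by
    intro u
    rw [hv, sum_inner]
    refine Finset.sum_congr rfl fun n _ => ?_
    rw [inner_smul_left, adjoint_inner_left, Complex.conj_ofReal]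
  have h1 : ‖v‖ ^ 2 ≤ ∑ n ∈ I, a n * (‖(T ^ n) x‖ * ‖(T ^ n) v‖) := by
    have : (‖v‖ : ℝ) ^ 2 = (⟪v, v⟫_ℂ).re := by
      rw [inner_self_eq_norm_sq_to_K]
      norm_cast
    rw [this, h0 v, Complex.re_sum]
    refine Finset.sum_le_sum fun n _ => ?_
    rw [Complex.re_ofReal_mul]
    refine mul_le_mul_of_nonneg_left ?_ (ha n)
    calc (⟪(T ^ n) x, (T ^ n) v⟫_ℂ).re ≤ ‖⟪(T ^ n) x, (T ^ n) v⟫_ℂ‖ := Complex.re_le_norm _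
      _ ≤ ‖(T ^ n) x‖ * ‖(T ^ n) v‖ := norm_inner_le_norm _ _
  have h2 : (∑ n ∈ I, a n * (‖(T ^ n) x‖ * ‖(T ^ n) v‖)) ^ 2 ≤ E * (C * ‖v‖ ^ 2) := by
    have hcs := Finset.sum_mul_sq_le_sq_mul_sq I (fun n => Real.sqrt (a n) * ‖(T ^ n) x‖)
      (fun n => Real.sqrt (a n) * ‖(T ^ n) v‖)
    have e1 : ∀ n, (Real.sqrt (a n) * ‖(T ^ n) x‖) * (Real.sqrt (a n) * ‖(T ^ n) v‖)
        = a n * (‖(T ^ n) x‖ * ‖(T ^ n) v‖) := by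
      intro n
      rw [show (Real.sqrt (a n) * ‖(T ^ n) x‖) * (Real.sqrt (a n) * ‖(T ^ n) v‖)
        = (Real.sqrt (a n) * Real.sqrt (a n)) * (‖(T ^ n) x‖ * ‖(T ^ n) v‖) by ring,
        Real.mul_self_sqrt (ha n)]
    have e2 : ∀ (y : H) (n : ℕ), (Real.sqrt (a n) * ‖(T ^ n) y‖) ^ 2 = a n * ‖(T ^ n) y‖ ^ 2 := by
      intro y n
      rw [mul_pow, Real.sq_sqrt (ha n)]
    simp only [e1, e2] at hcs
    exact hcs.trans (mul_le_mul_of_nonneg_left (hbound v I) hE0)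
  rcases eq_or_lt_of_le (norm_nonneg v) with h | h
  · rw [← h]
    rcases hE0.eq_or_lt with hEz | hEz
    · rw [← hEz]
      simp
    · have hC : 0 < C := by nlinarith [hbound x I, sq_nonneg ‖x‖]
      simpa using (mul_nonneg hC.le hE0)
  · have hv2 : 0 < ‖v‖ ^ 2 := by positivity
    have h3 : (‖v‖ ^ 2) ^ 2 ≤ E * (C * ‖v‖ ^ 2) := by
      refine le_trans ?_ h2
      exact pow_le_pow_left₀ (sq_nonneg _) h1 2
    have : ‖v‖ ^ 2 * ‖v‖ ^ 2 ≤ (C * E) * ‖v‖ ^ 2 := by nlinarith [h3]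
    exact le_of_mul_le_mul_right this hv2

/-- If the series `Σ|β_n| T*^n T^n` and `Σ|γ_n| T*^n T^n` converge in the strong operator
topology, then so does the corresponding series for the Cauchy product `δ = βγ`. -/
theorem stmt_2 {H : Type*} [NormedAddCommGroup H] [InnerProductSpace ℂ H] [CompleteSpace H]
    (T : H →L[ℂ] H) (β γ : ℕ → ℂ)
    (hβw : Summable fun n => ‖β n‖) (hγw : Summable fun n => ‖γ n‖)
    (hβ : ∃ S : H →L[ℂ] H, ∀ x : H,
      Tendsto (fun N => ∑ n ∈ Finset.range N,
        ((‖β n‖ : ℂ) • (adjoint (T ^ n)) ((T ^ n) x))) atTop (𝓝 (S x)))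
    (hγ : ∃ S : H →L[ℂ] H, ∀ x : H,
      Tendsto (fun N => ∑ n ∈ Finset.range N,
        ((‖γ n‖ : ℂ) • (adjoint (T ^ n)) ((T ^ n) x))) atTop (𝓝 (S x))) :
    ∃ S : H →L[ℂ] H, ∀ x : H,
      Tendsto (fun N => ∑ n ∈ Finset.range N,
        ((‖∑ j ∈ Finset.range (n + 1), β j * γ (n - j)‖ : ℂ) •
          (adjoint (T ^ n)) ((T ^ n) x))) atTop (𝓝 (S x)) := by
  obtain ⟨Sβ, hSβ⟩ := hβ
  obtain ⟨Sγ, hSγ⟩ := hγ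
  set a : ℕ → ℝ := fun n => ‖∑ j ∈ Finset.range (n + 1), β j * γ (n - j)‖ with ha_def
  have ha : ∀ n, 0 ≤ a n := fun n => norm_nonneg _
  set C : ℝ := ‖Sβ‖ * ‖Sγ‖ with hC_def
  have hqβ := qf_bound' T (fun n => ‖β n‖) (fun n => norm_nonneg _) Sβ hSβ
  have hqγ := qf_bound' T (fun n => ‖γ n‖) (fun n => norm_nonneg _) Sγ hSγ
  -- range partial-sum bound for the Cauchy product coefficients
  have hbound : ∀ (y : H) (N : ℕ), ∑ n ∈ Finset.range N, a n * ‖(T ^ n) y‖ ^ 2 ≤ C * ‖y‖ ^ 2 := by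
    intro y N
    have step1 : ∑ n ∈ Finset.range N, a n * ‖(T ^ n) y‖ ^ 2
        ≤ ∑ n ∈ Finset.range N, ∑ j ∈ Finset.range (n + 1),
            ‖γ (n - j)‖ * (‖β j‖ * ‖(T ^ j) ((T ^ (n - j)) y)‖ ^ 2) := by
      refine Finset.sum_le_sum fun n _ => ?_
      have hcoef : a n ≤ ∑ j ∈ Finset.range (n + 1), ‖β j‖ * ‖γ (n - j)‖ := by
        refine le_trans (norm_sum_le _ _) ?_
        exact Finset.sum_le_sum fun j _ => le_of_eq (norm_mul _ _)
      calc a n * ‖(T ^ n) y‖ ^ 2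
          ≤ (∑ j ∈ Finset.range (n + 1), ‖β j‖ * ‖γ (n - j)‖) * ‖(T ^ n) y‖ ^ 2 :=
            mul_le_mul_of_nonneg_right hcoef (sq_nonneg _)
        _ = ∑ j ∈ Finset.range (n + 1), ‖γ (n - j)‖ * (‖β j‖ * ‖(T ^ n) y‖ ^ 2) := by
            rw [Finset.sum_mul]
            exact Finset.sum_congr rfl fun j _ => by ring
        _ = ∑ j ∈ Finset.range (n + 1), ‖γ (n - j)‖ * (‖β j‖ * ‖(T ^ j) ((T ^ (n - j)) y)‖ ^ 2) := by
            refine Finset.sum_congr rfl fun j hj => ?_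
            have hjn : j ≤ n := Nat.lt_succ_iff.1 (Finset.mem_range.1 hj)
            have : (T ^ n) y = (T ^ j) ((T ^ (n - j)) y) := by
              rw [← ContinuousLinearMap.mul_apply, ← pow_add, Nat.add_sub_cancel' hjn]
            rw [this]
    have step2 : ∑ n ∈ Finset.range N, ∑ j ∈ Finset.range (n + 1),
          ‖γ (n - j)‖ * (‖β j‖ * ‖(T ^ j) ((T ^ (n - j)) y)‖ ^ 2)
        ≤ ∑ j ∈ Finset.range N, ∑ k ∈ Finset.range N,
            ‖γ k‖ * (‖β j‖ * ‖(T ^ j) ((T ^ k) y)‖ ^ 2) := by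
      exact sum_tri_le' (fun j k => ‖γ k‖ * (‖β j‖ * ‖(T ^ j) ((T ^ k) y)‖ ^ 2))
        (fun j k => mul_nonneg (norm_nonneg _) (mul_nonneg (norm_nonneg _) (sq_nonneg _))) N
    have step3 : ∑ j ∈ Finset.range N, ∑ k ∈ Finset.range N,
          ‖γ k‖ * (‖β j‖ * ‖(T ^ j) ((T ^ k) y)‖ ^ 2) ≤ C * ‖y‖ ^ 2 := by
      rw [Finset.sum_comm]
      calc ∑ k ∈ Finset.range N, ∑ j ∈ Finset.range N,
            ‖γ k‖ * (‖β j‖ * ‖(T ^ j) ((T ^ k) y)‖ ^ 2)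
          = ∑ k ∈ Finset.range N, ‖γ k‖ * ∑ j ∈ Finset.range N,
              ‖β j‖ * ‖(T ^ j) ((T ^ k) y)‖ ^ 2 := by
            exact Finset.sum_congr rfl fun k _ => (Finset.mul_sum _ _ _).symm
        _ ≤ ∑ k ∈ Finset.range N, ‖γ k‖ * (‖Sβ‖ * ‖(T ^ k) y‖ ^ 2) := by
            refine Finset.sum_le_sum fun k _ => ?_
            exact mul_le_mul_of_nonneg_left (hqβ ((T ^ k) y) N) (norm_nonneg _)
        _ = ‖Sβ‖ * ∑ k ∈ Finset.range N, ‖γ k‖ * ‖(T ^ k) y‖ ^ 2 := by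
            rw [Finset.mul_sum]
            exact Finset.sum_congr rfl fun k _ => by ring
        _ ≤ ‖Sβ‖ * (‖Sγ‖ * ‖y‖ ^ 2) :=
            mul_le_mul_of_nonneg_left (hqγ y N) (norm_nonneg _)
        _ = C * ‖y‖ ^ 2 := by rw [hC_def]; ring
    exact (step1.trans step2).trans step3
  have hC0 : 0 ≤ C := mul_nonneg (norm_nonneg _) (norm_nonneg _)
  have hboundI : ∀ (y : H) (I : Finset ℕ), ∑ n ∈ I, a n * ‖(T ^ n) y‖ ^ 2 ≤ C * ‖y‖ ^ 2 :=
    fun y I => finset_sum_le_of_range_le' (fun n => mul_nonneg (ha n) (sq_nonneg _))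
      (hbound y) I
  have hkey := key_cs' T a ha C hboundI
  -- summability of the vector series for each x
  have hsum : ∀ x : H, Summable (fun n => (a n : ℂ) • (adjoint (T ^ n)) ((T ^ n) x)) := by
    intro x
    have ha' : Summable (fun n => a n * ‖(T ^ n) x‖ ^ 2) :=
      summable_of_sum_range_le (fun n => mul_nonneg (ha n) (sq_nonneg _)) (hbound x)
    rw [summable_iff_vanishing]
    intro e he
    obtain ⟨ε, hε, hball⟩ := Metric.mem_nhds_iff.1 he
    have h2 : Metric.ball (0 : ℝ) (ε ^ 2 / (C + 1)) ∈ 𝓝 (0 : ℝ) :=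
      Metric.ball_mem_nhds 0 (by positivity)
    obtain ⟨s, hs⟩ := summable_iff_vanishing.1 ha' _ h2
    refine ⟨s, fun t ht => ?_⟩
    apply hball
    rw [Metric.mem_ball, dist_zero_right]
    have h3 := hs t ht
    rw [Metric.mem_ball, dist_zero_right, Real.norm_eq_abs] at h3
    have h4 : ∑ n ∈ t, a n * ‖(T ^ n) x‖ ^ 2 < ε ^ 2 / (C + 1) := (le_abs_self _).trans_lt h3
    have h5 := hkey x t
    have h6 : ‖∑ n ∈ t, (a n : ℂ) • (adjoint (T ^ n)) ((T ^ n) x)‖ ^ 2 < ε ^ 2 := by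
      refine h5.trans_lt ?_
      calc C * ∑ n ∈ t, a n * ‖(T ^ n) x‖ ^ 2
          ≤ (C + 1) * ∑ n ∈ t, a n * ‖(T ^ n) x‖ ^ 2 := by
            refine mul_le_mul_of_nonneg_right (by linarith) ?_
            exact Finset.sum_nonneg fun n _ => mul_nonneg (ha n) (sq_nonneg _)
        _ < (C + 1) * (ε ^ 2 / (C + 1)) := by
            refine (mul_lt_mul_iff_right₀ (by linarith)).2 h4
        _ = ε ^ 2 := by field_simp
    exact lt_of_pow_lt_pow_left₀ 2 hε.le h6
  -- uniform bound on finite partial sums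
  have hnormI : ∀ (x : H) (I : Finset ℕ),
      ‖∑ n ∈ I, (a n : ℂ) • (adjoint (T ^ n)) ((T ^ n) x)‖ ≤ C * ‖x‖ := by
    intro x I
    have h1 : ‖∑ n ∈ I, (a n : ℂ) • (adjoint (T ^ n)) ((T ^ n) x)‖ ^ 2 ≤ (C * ‖x‖) ^ 2 := by
      refine (hkey x I).trans ?_
      calc C * ∑ n ∈ I, a n * ‖(T ^ n) x‖ ^ 2 ≤ C * (C * ‖x‖ ^ 2) :=
            mul_le_mul_of_nonneg_left (hboundI x I) hC0
        _ = (C * ‖x‖) ^ 2 := by ring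
    have := Real.sqrt_le_sqrt h1
    rwa [Real.sqrt_sq (norm_nonneg _), Real.sqrt_sq (by positivity)] at this
  -- construct the limit operator
  let L : H →ₗ[ℂ] H :=
    { toFun := fun x => ∑' n, (a n : ℂ) • (adjoint (T ^ n)) ((T ^ n) x)
      map_add' := by
        intro x y
        have : (fun n => (a n : ℂ) • (adjoint (T ^ n)) ((T ^ n) (x + y)))
            = fun n => (a n : ℂ) • (adjoint (T ^ n)) ((T ^ n) x)
              + (a n : ℂ) • (adjoint (T ^ n)) ((T ^ n) y) := by
          funext n
          simp [map_add, smul_add]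
        rw [this]
        exact Summable.tsum_add (hsum x) (hsum y)
      map_smul' := by
        intro c x
        dsimp only [RingHom.id_apply]
        have : (fun n => (a n : ℂ) • (adjoint (T ^ n)) ((T ^ n) (c • x)))
            = fun n => c • ((a n : ℂ) • (adjoint (T ^ n)) ((T ^ n) x)) := by
          funext n
          rw [map_smul, map_smul, smul_comm]
        rw [this]
        exact ((hsum x).hasSum.const_smul c).tsum_eq }
  have hLbound : ∀ x : H, ‖L x‖ ≤ C * ‖x‖ := by
    intro x
    have h1 := (hsum x).hasSum
    have h2 : Tendsto (fun I : Finset ℕ =>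
        ‖∑ n ∈ I, (a n : ℂ) • (adjoint (T ^ n)) ((T ^ n) x)‖) atTop (𝓝 ‖L x‖) :=
      (continuous_norm.tendsto _).comp h1
    exact le_of_tendsto h2 (Filter.Eventually.of_forall fun I => hnormI x I)
  refine ⟨LinearMap.mkContinuous L C hLbound, fun x => ?_⟩
  exact (hsum x).hasSum.tendsto_sum_nat
end

section
/- Let T ∈ L(H), let β in the Wiener algebra satisfy that Σ|β_n| T*^n T^n converges in the strong operator topology, and suppose γ_n = β_n τ_n where τ_n → 0. Then Σ|γ_n| T*^n T^n converges in the operator-norm topology of L(H). -/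
open Filter Topology ContinuousLinearMap

open scoped ComplexConjugate

local notation "⟪" x ", " y "⟫" => @inner ℂ _ _ x y

private lemma inner_sum_aux {H : Type*} [NormedAddCommGroup H] [InnerProductSpace ℂ H]
    [CompleteSpace H] (T : H →L[ℂ] H) (c : ℕ → ℝ) (F : Finset ℕ) (x : H) :
    ⟪∑ n ∈ F, ((c n : ℂ) • (adjoint (T ^ n)) ((T ^ n) x)), x⟫
      = ((∑ n ∈ F, c n * ‖(T ^ n) x‖ ^ 2 : ℝ) : ℂ) := by
  rw [sum_inner]
  push_cast
  refine Finset.sum_congr rfl fun n _ => ?_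
  rw [inner_smul_left, adjoint_inner_left, ← FunLike.coe_pow_eq_iterate, inner_self_eq_norm_sq_to_K]
  simp [Complex.conj_ofReal]

/-- If `Σ|β_n| T*^n T^n` converges in SOT and `γ_n = β_n τ_n` with `τ_n → 0`, then
`Σ|γ_n| T*^n T^n` converges in the operator-norm topology. -/
theorem stmt_3 {H : Type*} [NormedAddCommGroup H] [InnerProductSpace ℂ H] [CompleteSpace H]
    (T : H →L[ℂ] H) (β γ τ : ℕ → ℂ)
    (hβw : Summable fun n => ‖β n‖)
    (hβ : ∃ S : H →L[ℂ] H, ∀ x : H,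
      Tendsto (fun N => ∑ n ∈ Finset.range N,
        ((‖β n‖ : ℂ) • (adjoint (T ^ n)) ((T ^ n) x))) atTop (𝓝 (S x)))
    (hτ : Tendsto τ atTop (𝓝 0))
    (hγ : ∀ n, γ n = β n * τ n) :
    ∃ S : H →L[ℂ] H,
      Tendsto (fun N => ∑ n ∈ Finset.range N,
        ((‖γ n‖ : ℂ) • ((adjoint (T ^ n)).comp (T ^ n)))) atTop (𝓝 S) := by
  obtain ⟨S, hS⟩ := hβ
  -- Step A : uniform bound on finite subsums of ‖β n‖ ‖Tⁿ x‖²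
  have bound : ∀ (x : H) (F : Finset ℕ),
      ∑ n ∈ F, ‖β n‖ * ‖(T ^ n) x‖ ^ 2 ≤ ‖S‖ * ‖x‖ ^ 2 := by
    intro x F
    have h1 : Tendsto (fun N => (∑ n ∈ Finset.range N, ‖β n‖ * ‖(T ^ n) x‖ ^ 2 : ℝ))
        atTop (𝓝 (⟪S x, x⟫).re) := by
      have h2 : Tendsto (fun N => ⟪∑ n ∈ Finset.range N,
          ((‖β n‖ : ℂ) • (adjoint (T ^ n)) ((T ^ n) x)), x⟫) atTop (𝓝 ⟪S x, x⟫) :=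
        (hS x).inner tendsto_const_nhds
      rw [show (fun N => ⟪∑ n ∈ Finset.range N,
          ((‖β n‖ : ℂ) • (adjoint (T ^ n)) ((T ^ n) x)), x⟫)
          = fun N => ((∑ n ∈ Finset.range N, ‖β n‖ * ‖(T ^ n) x‖ ^ 2 : ℝ) : ℂ) from
        funext fun N => inner_sum_aux T (fun n => ‖β n‖) _ x] at h2
      have h3 := (Complex.continuous_re.tendsto _).comp h2
      simpa only [Function.comp_def, Complex.ofReal_re] using h3
    have hmono : Monotone (fun N => (∑ n ∈ Finset.range N, ‖β n‖ * ‖(T ^ n) x‖ ^ 2 : ℝ)) := by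
      apply monotone_nat_of_le_succ
      intro N
      rw [Finset.sum_range_succ]
      have : 0 ≤ ‖β N‖ * ‖(T ^ N) x‖ ^ 2 := by positivity
      linarith
    have hre : (⟪S x, x⟫).re ≤ ‖S‖ * ‖x‖ ^ 2 := by
      calc (⟪S x, x⟫).re ≤ ‖⟪S x, x⟫‖ := Complex.re_le_norm _
        _ ≤ ‖S x‖ * ‖x‖ := norm_inner_le_norm _ _
        _ ≤ (‖S‖ * ‖x‖) * ‖x‖ := by
            have := S.le_opNorm x
            have h0 : (0:ℝ) ≤ ‖x‖ := norm_nonneg _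
            nlinarith
        _ = ‖S‖ * ‖x‖ ^ 2 := by ring
    calc ∑ n ∈ F, ‖β n‖ * ‖(T ^ n) x‖ ^ 2
        ≤ ∑ n ∈ Finset.range ((F.sup id) + 1), ‖β n‖ * ‖(T ^ n) x‖ ^ 2 := by
          apply Finset.sum_le_sum_of_subset_of_nonneg
          · intro n hn
            simp only [Finset.mem_range]
            exact Nat.lt_succ_of_le (Finset.le_sup (f := id) hn)
          · intro n _ _; positivity
      _ ≤ (⟪S x, x⟫).re := hmono.ge_of_tendsto h1 _
      _ ≤ ‖S‖ * ‖x‖ ^ 2 := hre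
  -- Step B : summability in operator norm
  have hsum : Summable (fun n => (‖γ n‖ : ℂ) • ((adjoint (T ^ n)).comp (T ^ n))) := by
    rw [summable_iff_vanishing]
    intro e he
    obtain ⟨ε, hε, hball⟩ := Metric.mem_nhds_iff.mp he
    set δ : ℝ := ε / (2 * (‖S‖ + 1)) with hδdef
    have hδ : 0 < δ := by positivity
    obtain ⟨N, hN⟩ := (Metric.tendsto_atTop.mp hτ δ hδ)
    refine ⟨Finset.range N, fun t ht => ?_⟩
    apply hball
    rw [Metric.mem_ball, dist_zero_right]
    -- every n in t satisfies ‖τ n‖ ≤ δ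
    have hτn : ∀ n ∈ t, ‖τ n‖ ≤ δ := by
      intro n hn
      have hnN : N ≤ n := by
        by_contra hlt
        exact (Finset.disjoint_left.mp ht hn) (Finset.mem_range.mpr (Nat.lt_of_not_le hlt))
      have := hN n hnN
      rw [dist_zero_right] at this
      exact this.le
    set B : H →L[ℂ] H := ∑ n ∈ t, (‖γ n‖ : ℂ) • ((adjoint (T ^ n)).comp (T ^ n)) with hB
    have hBapp : ∀ x : H, ⟪B x, x⟫ = ((∑ n ∈ t, ‖γ n‖ * ‖(T ^ n) x‖ ^ 2 : ℝ) : ℂ) := by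
      intro x
      rw [hB]
      rw [ContinuousLinearMap.sum_apply]
      simp only [ContinuousLinearMap.smul_apply, ContinuousLinearMap.coe_comp',
        Function.comp_apply]
      exact inner_sum_aux T (fun n => ‖γ n‖) t x
    have hBpos : B.IsPositive := by
      rw [ContinuousLinearMap.isPositive_iff_complex]
      intro x
      rw [hBapp x]
      have hr : (0:ℝ) ≤ ∑ n ∈ t, ‖γ n‖ * ‖(T ^ n) x‖ ^ 2 :=
        Finset.sum_nonneg fun n _ => by positivity
      exact ⟨by norm_cast, by exact_mod_cast hr⟩
    set C : ℝ := δ * ‖S‖ with hC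
    have hCnn : 0 ≤ C := by positivity
    have hsumle : ∀ x : H, (∑ n ∈ t, ‖γ n‖ * ‖(T ^ n) x‖ ^ 2 : ℝ) ≤ C * ‖x‖ ^ 2 := by
      intro x
      calc (∑ n ∈ t, ‖γ n‖ * ‖(T ^ n) x‖ ^ 2 : ℝ)
          ≤ ∑ n ∈ t, δ * (‖β n‖ * ‖(T ^ n) x‖ ^ 2) := by
            apply Finset.sum_le_sum
            intro n hn
            have : ‖γ n‖ = ‖β n‖ * ‖τ n‖ := by rw [hγ n, norm_mul]
            rw [this, mul_comm (‖β n‖) (‖τ n‖), mul_assoc]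
            have h2 : (0:ℝ) ≤ ‖β n‖ * ‖(T ^ n) x‖ ^ 2 := by positivity
            exact mul_le_mul_of_nonneg_right (hτn n hn) h2
        _ = δ * ∑ n ∈ t, ‖β n‖ * ‖(T ^ n) x‖ ^ 2 := by rw [Finset.mul_sum]
        _ ≤ δ * (‖S‖ * ‖x‖ ^ 2) := mul_le_mul_of_nonneg_left (bound x t) hδ.le
        _ = C * ‖x‖ ^ 2 := by rw [hC]; ring
    have hle : B ≤ (C : ℂ) • (1 : H →L[ℂ] H) := by
      rw [ContinuousLinearMap.le_def, ContinuousLinearMap.isPositive_iff_complex]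
      intro x
      have happ : ⟪((C : ℂ) • (1 : H →L[ℂ] H) - B) x, x⟫
          = ((C * ‖x‖ ^ 2 - ∑ n ∈ t, ‖γ n‖ * ‖(T ^ n) x‖ ^ 2 : ℝ) : ℂ) := by
        rw [ContinuousLinearMap.sub_apply, inner_sub_left, hBapp x]
        rw [ContinuousLinearMap.smul_apply, ContinuousLinearMap.one_apply,
          inner_smul_left, inner_self_eq_norm_sq_to_K, Complex.conj_ofReal]
        push_cast
        rfl
      rw [happ]
      have hr : (0:ℝ) ≤ C * ‖x‖ ^ 2 - ∑ n ∈ t, ‖γ n‖ * ‖(T ^ n) x‖ ^ 2 := by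
        rw [sub_nonneg]; exact hsumle x
      exact ⟨by norm_cast, by exact_mod_cast hr⟩
    have hBnonneg : (0 : H →L[ℂ] H) ≤ B := (ContinuousLinearMap.nonneg_iff_isPositive B).mpr hBpos
    have hnorm : ‖B‖ ≤ C := by
      calc ‖B‖ ≤ ‖(C : ℂ) • (1 : H →L[ℂ] H)‖ :=
            CStarAlgebra.norm_le_norm_of_nonneg_of_le hBnonneg hle
        _ = ‖(C : ℂ)‖ * ‖(1 : H →L[ℂ] H)‖ := norm_smul _ _
        _ ≤ C * 1 := by
            apply mul_le_mul
            · simp [Complex.norm_real, abs_of_nonneg hCnn]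
            · rw [ContinuousLinearMap.one_def]; exact ContinuousLinearMap.norm_id_le
            · exact norm_nonneg _
            · exact hCnn
        _ = C := mul_one C
    calc ‖B‖ ≤ C := hnorm
      _ = ε / (2 * (‖S‖ + 1)) * ‖S‖ := rfl
      _ < ε := by
          rw [div_mul_eq_mul_div, div_lt_iff₀ (by positivity)]
          nlinarith [hε, norm_nonneg S]
  exact ⟨_, hsum.hasSum.tendsto_sum_nat⟩
end

section
/- Let T ∈ L(H), B ∈ L(H) a non-negative operator, and let f, g be functions with real Taylor coefficients such that Σ|f_n| T*^n T^n and Σ|g_n| T*^n T^n converge in the strong operator topology. If h = fg, then Σ_k h_k T*^k B T^k = Σ_n g_n T*^n (Σ_m f_m T*^m B T^m) T^n, where all series converge in SOT. -/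
open Filter Topology ContinuousLinearMap
open scoped InnerProductSpace

section AuxStmt5

variable {H : Type*} [NormedAddCommGroup H] [InnerProductSpace ℂ H] [CompleteSpace H]

lemma aux_summable_pow_stmt5 (T : H →L[ℂ] H) (f : ℕ → ℝ) (S : H →L[ℂ] H)
    (hS : ∀ x : H, Tendsto (fun N => ∑ n ∈ Finset.range N,
      (((|f n| : ℝ) : ℂ) • (adjoint (T ^ n)) ((T ^ n) x))) atTop (𝓝 (S x))) (x : H) :
    Summable (fun n => |f n| * ‖(T ^ n) x‖ ^ 2) ∧
      ∑' n, |f n| * ‖(T ^ n) x‖ ^ 2 ≤ ‖S‖ * ‖x‖ ^ 2 := by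
  have key : ∀ N : ℕ, ∑ n ∈ Finset.range N, |f n| * ‖(T ^ n) x‖ ^ 2
      = Complex.re ⟪∑ n ∈ Finset.range N,
          (((|f n| : ℝ) : ℂ) • (adjoint (T ^ n)) ((T ^ n) x)), x⟫_ℂ := by
    intro N
    rw [sum_inner, Complex.re_sum]
    refine Finset.sum_congr rfl fun n _ => ?_
    rw [inner_smul_left, ContinuousLinearMap.adjoint_inner_left,
      inner_self_eq_norm_sq_to_K]
    simp [Complex.conj_ofReal, ← Complex.ofReal_pow]
  have hcont : Continuous fun v : H => Complex.re ⟪v, x⟫_ℂ :=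
    Complex.continuous_re.comp (continuous_id.inner continuous_const)
  have hlim : Tendsto (fun N => ∑ n ∈ Finset.range N, |f n| * ‖(T ^ n) x‖ ^ 2)
      atTop (𝓝 (Complex.re ⟪S x, x⟫_ℂ)) := by
    simp only [key]
    exact (hcont.tendsto _).comp (hS x)
  have hmono : Monotone (fun N => ∑ n ∈ Finset.range N, |f n| * ‖(T ^ n) x‖ ^ 2) := by
    intro a b hab
    exact Finset.sum_le_sum_of_subset_of_nonneg (Finset.range_subset_range.2 hab)
      (fun i _ _ => by positivity)
  have hboundc : Complex.re ⟪S x, x⟫_ℂ ≤ ‖S‖ * ‖x‖ ^ 2 := by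
    calc Complex.re ⟪S x, x⟫_ℂ ≤ ‖⟪S x, x⟫_ℂ‖ := Complex.re_le_norm _
      _ ≤ ‖S x‖ * ‖x‖ := norm_inner_le_norm _ _
      _ ≤ ‖S‖ * ‖x‖ * ‖x‖ := by
          gcongr; exact le_opNorm S x
      _ = ‖S‖ * ‖x‖ ^ 2 := by ring
  have hb : ∀ N, ∑ n ∈ Finset.range N, |f n| * ‖(T ^ n) x‖ ^ 2 ≤ ‖S‖ * ‖x‖ ^ 2 :=
    fun N => le_trans (hmono.ge_of_tendsto hlim N) hboundc
  exact ⟨summable_of_sum_range_le (fun n => by positivity) hb,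
    Summable.tsum_le_of_sum_range_le (summable_of_sum_range_le (fun n => by positivity) hb) hb⟩

lemma aux_master_stmt5 (T B C : H →L[ℂ] H) (hC : IsSelfAdjoint C)
    (hCB : ∀ u : H, C (C u) = B u)
    {ι : Type*} (c : ι → ℝ) (p : ι → ℕ) (M : ℝ) (hM : 0 ≤ M)
    (hMv : ∀ (v : H) (t : Finset ι),
      ∑ i ∈ t, |c i| * ‖C ((T ^ p i) v)‖ ^ 2 ≤ M * ‖v‖ ^ 2)
    (x : H) :
    Summable (fun i => ((c i : ℝ) : ℂ) • (adjoint (T ^ p i)) (B ((T ^ p i) x))) ∧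
    ‖∑' i, ((c i : ℝ) : ℂ) • (adjoint (T ^ p i)) (B ((T ^ p i) x))‖ ≤ M * ‖x‖ := by
  have hBin : ∀ u v : H, ⟪B u, v⟫_ℂ = ⟪C u, C v⟫_ℂ := by
    intro u v
    have h := ContinuousLinearMap.adjoint_inner_left C v (C u)
    rw [isSelfAdjoint_iff'.mp hC] at h
    rw [← hCB u]
    exact h
  have finb : ∀ (t : Finset ι) (y : H),
      ‖⟪∑ i ∈ t, ((c i : ℝ) : ℂ) • (adjoint (T ^ p i)) (B ((T ^ p i) x)), y⟫_ℂ‖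
        ≤ Real.sqrt (∑ i ∈ t, |c i| * ‖C ((T ^ p i) x)‖ ^ 2) *
          Real.sqrt (∑ i ∈ t, |c i| * ‖C ((T ^ p i) y)‖ ^ 2) := by
    intro t y
    rw [sum_inner]
    have hterm : ∀ i ∈ t,
        ‖⟪((c i : ℝ) : ℂ) • (adjoint (T ^ p i)) (B ((T ^ p i) x)), y⟫_ℂ‖
          ≤ (Real.sqrt (|c i|) * ‖C ((T ^ p i) x)‖) *
            (Real.sqrt (|c i|) * ‖C ((T ^ p i) y)‖) := by
      intro i _
      rw [inner_smul_left, ContinuousLinearMap.adjoint_inner_left, hBin]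
      rw [norm_mul]
      have h1 : ‖(starRingEnd ℂ) ((c i : ℝ) : ℂ)‖ = |c i| := by
        simp [Complex.conj_ofReal, Complex.norm_real]
      rw [h1]
      calc |c i| * ‖⟪C ((T ^ p i) x), C ((T ^ p i) y)⟫_ℂ‖
          ≤ |c i| * (‖C ((T ^ p i) x)‖ * ‖C ((T ^ p i) y)‖) := by
            gcongr; exact norm_inner_le_norm _ _
        _ = (Real.sqrt (|c i|) * ‖C ((T ^ p i) x)‖) *
            (Real.sqrt (|c i|) * ‖C ((T ^ p i) y)‖) := by
            linear_combination (-(‖C ((T ^ p i) x)‖ * ‖C ((T ^ p i) y)‖)) *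
              Real.mul_self_sqrt (abs_nonneg (c i))
    calc ‖∑ i ∈ t, ⟪((c i : ℝ) : ℂ) • (adjoint (T ^ p i)) (B ((T ^ p i) x)), y⟫_ℂ‖
        ≤ ∑ i ∈ t, ‖⟪((c i : ℝ) : ℂ) • (adjoint (T ^ p i)) (B ((T ^ p i) x)), y⟫_ℂ‖ :=
          norm_sum_le _ _
      _ ≤ ∑ i ∈ t, (Real.sqrt (|c i|) * ‖C ((T ^ p i) x)‖) *
            (Real.sqrt (|c i|) * ‖C ((T ^ p i) y)‖) := Finset.sum_le_sum hterm
      _ ≤ Real.sqrt (∑ i ∈ t, |c i| * ‖C ((T ^ p i) x)‖ ^ 2) *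
          Real.sqrt (∑ i ∈ t, |c i| * ‖C ((T ^ p i) y)‖ ^ 2) := by
          have hcs := Finset.sum_mul_sq_le_sq_mul_sq t
            (fun i => Real.sqrt (|c i|) * ‖C ((T ^ p i) x)‖)
            (fun i => Real.sqrt (|c i|) * ‖C ((T ^ p i) y)‖)
          have hsq : ∀ (z : H) (i : ι),
              (Real.sqrt (|c i|) * ‖C ((T ^ p i) z)‖) ^ 2 = |c i| * ‖C ((T ^ p i) z)‖ ^ 2 := by
            intro z i
            rw [mul_pow, Real.sq_sqrt (abs_nonneg (c i))]
          simp only [hsq] at hcs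
          have h0 : (0 : ℝ) ≤ ∑ i ∈ t, (Real.sqrt (|c i|) * ‖C ((T ^ p i) x)‖) *
              (Real.sqrt (|c i|) * ‖C ((T ^ p i) y)‖) :=
            Finset.sum_nonneg fun i _ => by positivity
          rw [← Real.sqrt_mul (Finset.sum_nonneg fun i _ => by positivity)]
          rw [show ∑ i ∈ t, (Real.sqrt (|c i|) * ‖C ((T ^ p i) x)‖) *
              (Real.sqrt (|c i|) * ‖C ((T ^ p i) y)‖)
            = Real.sqrt ((∑ i ∈ t, (Real.sqrt (|c i|) * ‖C ((T ^ p i) x)‖) *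
              (Real.sqrt (|c i|) * ‖C ((T ^ p i) y)‖)) ^ 2) from
              (Real.sqrt_sq h0).symm]
          exact Real.sqrt_le_sqrt hcs
  have finnorm : ∀ t : Finset ι,
      ‖∑ i ∈ t, ((c i : ℝ) : ℂ) • (adjoint (T ^ p i)) (B ((T ^ p i) x))‖
        ≤ Real.sqrt (∑ i ∈ t, |c i| * ‖C ((T ^ p i) x)‖ ^ 2) * Real.sqrt M := by
    intro t
    set v := ∑ i ∈ t, ((c i : ℝ) : ℂ) • (adjoint (T ^ p i)) (B ((T ^ p i) x)) with hv
    rcases eq_or_ne v 0 with h0 | h0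
    · rw [h0, norm_zero]
      positivity
    · have hnv : 0 < ‖v‖ := norm_pos_iff.mpr h0
      have h1 : ‖v‖ ^ 2 ≤ Real.sqrt (∑ i ∈ t, |c i| * ‖C ((T ^ p i) x)‖ ^ 2) *
          (Real.sqrt M * ‖v‖) := by
        calc ‖v‖ ^ 2 = Complex.re ⟪v, v⟫_ℂ := by
              rw [inner_self_eq_norm_sq_to_K]; simp [← Complex.ofReal_pow]
          _ ≤ ‖⟪v, v⟫_ℂ‖ := Complex.re_le_norm _
          _ ≤ Real.sqrt (∑ i ∈ t, |c i| * ‖C ((T ^ p i) x)‖ ^ 2) *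
              Real.sqrt (∑ i ∈ t, |c i| * ‖C ((T ^ p i) v)‖ ^ 2) := finb t v
          _ ≤ Real.sqrt (∑ i ∈ t, |c i| * ‖C ((T ^ p i) x)‖ ^ 2) *
              (Real.sqrt M * ‖v‖) := by
              gcongr
              calc Real.sqrt (∑ i ∈ t, |c i| * ‖C ((T ^ p i) v)‖ ^ 2)
                  ≤ Real.sqrt (M * ‖v‖ ^ 2) := Real.sqrt_le_sqrt (hMv v t)
                _ = Real.sqrt M * ‖v‖ := by
                    rw [Real.sqrt_mul hM, Real.sqrt_sq (norm_nonneg v)]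
      have := h1
      rw [sq] at this
      exact le_of_mul_le_mul_right (by linarith [this] :
        ‖v‖ * ‖v‖ ≤ (Real.sqrt (∑ i ∈ t, |c i| * ‖C ((T ^ p i) x)‖ ^ 2) * Real.sqrt M) * ‖v‖) hnv
  have hsx : Summable (fun i => |c i| * ‖C ((T ^ p i) x)‖ ^ 2) :=
    summable_of_sum_le (fun i => by positivity) (fun t => hMv x t)
  have hsum : Summable (fun i => ((c i : ℝ) : ℂ) • (adjoint (T ^ p i)) (B ((T ^ p i) x))) := by
    rw [summable_iff_vanishing_norm]
    intro ε hε
    have hε' : 0 < (ε / (Real.sqrt M + 1)) ^ 2 := by positivity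
    obtain ⟨s, hs⟩ := summable_iff_vanishing_norm.mp hsx _ hε'
    refine ⟨s, fun t ht => ?_⟩
    have h2 : ∑ i ∈ t, |c i| * ‖C ((T ^ p i) x)‖ ^ 2 < (ε / (Real.sqrt M + 1)) ^ 2 := by
      have := hs t ht
      rwa [Real.norm_eq_abs, abs_of_nonneg (Finset.sum_nonneg fun i _ => by positivity)] at this
    calc ‖∑ i ∈ t, ((c i : ℝ) : ℂ) • (adjoint (T ^ p i)) (B ((T ^ p i) x))‖
        ≤ Real.sqrt (∑ i ∈ t, |c i| * ‖C ((T ^ p i) x)‖ ^ 2) * Real.sqrt M := finnorm t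
      _ ≤ Real.sqrt (∑ i ∈ t, |c i| * ‖C ((T ^ p i) x)‖ ^ 2) * (Real.sqrt M + 1) := by
          gcongr; linarith
      _ < (ε / (Real.sqrt M + 1)) * (Real.sqrt M + 1) := by
          have hlt : Real.sqrt (∑ i ∈ t, |c i| * ‖C ((T ^ p i) x)‖ ^ 2)
              < ε / (Real.sqrt M + 1) := by
            have := Real.sqrt_lt_sqrt (Finset.sum_nonneg fun i _ => by positivity) h2
            rwa [Real.sqrt_sq (by positivity)] at this
          have hpos : (0:ℝ) < Real.sqrt M + 1 := by positivity
          exact mul_lt_mul_of_pos_right hlt hpos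
      _ = ε := div_mul_cancel₀ ε (by positivity)
  refine ⟨hsum, ?_⟩
  have hb : ∀ t : Finset ι,
      ‖∑ i ∈ t, ((c i : ℝ) : ℂ) • (adjoint (T ^ p i)) (B ((T ^ p i) x))‖ ≤ M * ‖x‖ := by
    intro t
    calc ‖∑ i ∈ t, ((c i : ℝ) : ℂ) • (adjoint (T ^ p i)) (B ((T ^ p i) x))‖
        ≤ Real.sqrt (∑ i ∈ t, |c i| * ‖C ((T ^ p i) x)‖ ^ 2) * Real.sqrt M := finnorm t
      _ ≤ Real.sqrt (M * ‖x‖ ^ 2) * Real.sqrt M := by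
          gcongr
          exact hMv x t
      _ = M * ‖x‖ := by
          rw [Real.sqrt_mul hM, Real.sqrt_sq (norm_nonneg x)]
          rw [show Real.sqrt M * ‖x‖ * Real.sqrt M = (Real.sqrt M * Real.sqrt M) * ‖x‖ by ring,
            Real.mul_self_sqrt hM]
  exact le_of_tendsto' hsum.hasSum.norm hb

end AuxStmt5

set_option maxHeartbeats 2000000 in
/-- For `f, g` with real coefficients whose associated series converge in SOT, a
non-negative operator `B`, and `h = fg`, one has
`h(T*,T)(B) = g(T*,T)(f(T*,T)(B))`, with all series converging in SOT. -/
theorem stmt_5 {H : Type*} [NormedAddCommGroup H] [InnerProductSpace ℂ H] [CompleteSpace H]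
    (T : H →L[ℂ] H) (f g : ℕ → ℝ)
    (hfw : Summable fun n => |f n|) (hgw : Summable fun n => |g n|)
    (hf : ∃ S : H →L[ℂ] H, ∀ x : H,
      Tendsto (fun N => ∑ n ∈ Finset.range N,
        (((|f n| : ℝ) : ℂ) • (adjoint (T ^ n)) ((T ^ n) x))) atTop (𝓝 (S x)))
    (hg : ∃ S : H →L[ℂ] H, ∀ x : H,
      Tendsto (fun N => ∑ n ∈ Finset.range N,
        (((|g n| : ℝ) : ℂ) • (adjoint (T ^ n)) ((T ^ n) x))) atTop (𝓝 (S x)))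
    (B : H →L[ℂ] H) (hB : B.IsPositive) :
    ∃ F G : H →L[ℂ] H,
      (∀ x : H, Tendsto (fun N => ∑ m ∈ Finset.range N,
        (((f m : ℝ) : ℂ) • (adjoint (T ^ m)) (B ((T ^ m) x)))) atTop (𝓝 (F x))) ∧
      (∀ x : H, Tendsto (fun N => ∑ n ∈ Finset.range N,
        (((g n : ℝ) : ℂ) • (adjoint (T ^ n)) (F ((T ^ n) x)))) atTop (𝓝 (G x))) ∧
      (∀ x : H, Tendsto (fun N => ∑ k ∈ Finset.range N,
        (((∑ m ∈ Finset.range (k + 1), f m * g (k - m) : ℝ) : ℂ) •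
          (adjoint (T ^ k)) (B ((T ^ k) x)))) atTop (𝓝 (G x))) := by
  classical
  obtain ⟨Sf, hSf⟩ := hf
  obtain ⟨Sg, hSg⟩ := hg
  have hAf := aux_summable_pow_stmt5 T f Sf hSf
  have hAg := aux_summable_pow_stmt5 T g Sg hSg
  obtain ⟨C, hC, -, hCB2⟩ := CFC.exists_sqrt_of_isSelfAdjoint_of_quasispectrumRestricts
    hB.isSelfAdjoint hB.spectrumRestricts
  have hCB : ∀ u : H, C (C u) = B u := fun u => by
    rw [← hCB2]; simp [sq, ContinuousLinearMap.mul_apply]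
  have hpow : ∀ (m n : ℕ) (v : H), (T ^ (m + n)) v = (T ^ n) ((T ^ m) v) := by
    intro m n v
    rw [add_comm, pow_add, ContinuousLinearMap.mul_apply]
  have hCn : ∀ u : H, ‖C u‖ ^ 2 ≤ ‖B‖ * ‖u‖ ^ 2 := by
    intro u
    have h := ContinuousLinearMap.adjoint_inner_left C u (C u)
    rw [isSelfAdjoint_iff'.mp hC] at h
    have h2 : ‖C u‖ ^ 2 = Complex.re ⟪B u, u⟫_ℂ := by
      rw [← hCB u, h, inner_self_eq_norm_sq_to_K]
      simp [← Complex.ofReal_pow]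
    rw [h2]
    calc Complex.re ⟪B u, u⟫_ℂ ≤ ‖⟪B u, u⟫_ℂ‖ := Complex.re_le_norm _
      _ ≤ ‖B u‖ * ‖u‖ := norm_inner_le_norm _ _
      _ ≤ ‖B‖ * ‖u‖ * ‖u‖ := by gcongr; exact le_opNorm B u
      _ = ‖B‖ * ‖u‖ ^ 2 := by ring
  -- bound for the single series (f)
  have hMvf : ∀ (c : ℕ → ℝ) (Sc : H →L[ℂ] H),
      (∀ x : H, Summable (fun n => |c n| * ‖(T ^ n) x‖ ^ 2) ∧
        ∑' n, |c n| * ‖(T ^ n) x‖ ^ 2 ≤ ‖Sc‖ * ‖x‖ ^ 2) →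
      ∀ (v : H) (t : Finset ℕ),
      ∑ n ∈ t, |c n| * ‖C ((T ^ n) v)‖ ^ 2 ≤ (‖B‖ * ‖Sc‖) * ‖v‖ ^ 2 := by
    intro c Sc hAc v t
    calc ∑ n ∈ t, |c n| * ‖C ((T ^ n) v)‖ ^ 2
        ≤ ∑ n ∈ t, |c n| * (‖B‖ * ‖(T ^ n) v‖ ^ 2) := by
          refine Finset.sum_le_sum fun n _ => ?_
          exact mul_le_mul_of_nonneg_left (hCn _) (abs_nonneg _)
      _ = ‖B‖ * ∑ n ∈ t, |c n| * ‖(T ^ n) v‖ ^ 2 := by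
          rw [Finset.mul_sum]; exact Finset.sum_congr rfl fun n _ => by ring
      _ ≤ ‖B‖ * ∑' n, |c n| * ‖(T ^ n) v‖ ^ 2 :=
          mul_le_mul_of_nonneg_left (Summable.sum_le_tsum t (fun i _ => by positivity) (hAc v).1)
            (norm_nonneg B)
      _ ≤ ‖B‖ * (‖Sc‖ * ‖v‖ ^ 2) :=
          mul_le_mul_of_nonneg_left ((hAc v).2) (norm_nonneg B)
      _ = (‖B‖ * ‖Sc‖) * ‖v‖ ^ 2 := by ring
  have mf := fun x : H => aux_master_stmt5 T B C hC hCB f (fun n => n)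
    (‖B‖ * ‖Sf‖) (by positivity) (hMvf f Sf hAf) x
  -- the operator F
  have hFex : ∃ Fmap : H →L[ℂ] H,
      ∀ x : H, Fmap x = ∑' m, ((f m : ℝ) : ℂ) • (adjoint (T ^ m)) (B ((T ^ m) x)) := by
    refine ⟨LinearMap.mkContinuous
    { toFun := fun x => ∑' m, ((f m : ℝ) : ℂ) • (adjoint (T ^ m)) (B ((T ^ m) x)),
      map_add' := fun x y => by
        have hx := (mf x).1
        have hy := (mf y).1
        rw [← Summable.tsum_add hx hy]
        exact tsum_congr fun m => by simp [map_add, smul_add]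
      map_smul' := fun a x => by
        have hx := (mf x).1
        rw [RingHom.id_apply, ← (hx.hasSum.const_smul a).tsum_eq]
        exact tsum_congr fun m => by
          simp only [map_smul]
          rw [smul_comm] }
    (‖B‖ * ‖Sf‖) (fun x => (mf x).2), fun x => rfl⟩
  obtain ⟨Fmap, hF⟩ := hFex
  -- the double-indexed family
  have hMvp : ∀ (v : H) (t : Finset (ℕ × ℕ)),
      ∑ q ∈ t, |(fun q : ℕ × ℕ => f q.1 * g q.2) q| *
        ‖C ((T ^ ((fun q : ℕ × ℕ => q.1 + q.2) q)) v)‖ ^ 2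
        ≤ (‖B‖ * ‖Sf‖ * ‖Sg‖) * ‖v‖ ^ 2 := by
    intro v t
    have hsub : t ⊆ (t.image Prod.fst) ×ˢ (t.image Prod.snd) := by
      intro q hq
      rw [Finset.mem_product]
      exact ⟨Finset.mem_image_of_mem _ hq, Finset.mem_image_of_mem _ hq⟩
    calc ∑ q ∈ t, |f q.1 * g q.2| * ‖C ((T ^ (q.1 + q.2)) v)‖ ^ 2
        ≤ ∑ q ∈ (t.image Prod.fst) ×ˢ (t.image Prod.snd),
            |f q.1 * g q.2| * ‖C ((T ^ (q.1 + q.2)) v)‖ ^ 2 :=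
          Finset.sum_le_sum_of_subset_of_nonneg hsub (fun q _ _ => by positivity)
      _ = ∑ m ∈ t.image Prod.fst, ∑ n ∈ t.image Prod.snd,
            |f m * g n| * ‖C ((T ^ (m + n)) v)‖ ^ 2 := by rw [Finset.sum_product]
      _ ≤ ∑ m ∈ t.image Prod.fst, (‖B‖ * ‖Sg‖) * (|f m| * ‖(T ^ m) v‖ ^ 2) := by
          refine Finset.sum_le_sum fun m _ => ?_
          calc ∑ n ∈ t.image Prod.snd, |f m * g n| * ‖C ((T ^ (m + n)) v)‖ ^ 2
              = |f m| * ∑ n ∈ t.image Prod.snd, |g n| * ‖C ((T ^ n) ((T ^ m) v))‖ ^ 2 := by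
                rw [Finset.mul_sum]
                refine Finset.sum_congr rfl fun n _ => ?_
                rw [abs_mul, hpow m n v]; ring
            _ ≤ |f m| * ((‖B‖ * ‖Sg‖) * ‖(T ^ m) v‖ ^ 2) := by
                refine mul_le_mul_of_nonneg_left ?_ (abs_nonneg _)
                exact hMvf g Sg hAg ((T ^ m) v) (t.image Prod.snd)
            _ = (‖B‖ * ‖Sg‖) * (|f m| * ‖(T ^ m) v‖ ^ 2) := by ring
      _ = (‖B‖ * ‖Sg‖) * ∑ m ∈ t.image Prod.fst, |f m| * ‖(T ^ m) v‖ ^ 2 := by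
          rw [Finset.mul_sum]
      _ ≤ (‖B‖ * ‖Sg‖) * (‖Sf‖ * ‖v‖ ^ 2) := by
          refine mul_le_mul_of_nonneg_left ?_ (by positivity)
          calc ∑ m ∈ t.image Prod.fst, |f m| * ‖(T ^ m) v‖ ^ 2
              ≤ ∑' m, |f m| * ‖(T ^ m) v‖ ^ 2 :=
                Summable.sum_le_tsum _ (fun i _ => by positivity) (hAf v).1
            _ ≤ ‖Sf‖ * ‖v‖ ^ 2 := (hAf v).2
      _ = (‖B‖ * ‖Sf‖ * ‖Sg‖) * ‖v‖ ^ 2 := by ring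
  have mp := fun x : H => aux_master_stmt5 T B C hC hCB
    (fun q : ℕ × ℕ => f q.1 * g q.2) (fun q : ℕ × ℕ => q.1 + q.2)
    (‖B‖ * ‖Sf‖ * ‖Sg‖) (by positivity) hMvp x
  -- the operator G
  have hGex : ∃ Gmap : H →L[ℂ] H, ∀ x : H, Gmap x = ∑' q : ℕ × ℕ,
      ((f q.1 * g q.2 : ℝ) : ℂ) • (adjoint (T ^ (q.1 + q.2))) (B ((T ^ (q.1 + q.2)) x)) := by
    refine ⟨LinearMap.mkContinuous
    { toFun := fun x => ∑' q : ℕ × ℕ,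
        ((f q.1 * g q.2 : ℝ) : ℂ) • (adjoint (T ^ (q.1 + q.2))) (B ((T ^ (q.1 + q.2)) x)),
      map_add' := fun x y => by
        have hx := (mp x).1
        have hy := (mp y).1
        rw [← Summable.tsum_add hx hy]
        exact tsum_congr fun q => by simp [map_add, smul_add]
      map_smul' := fun a x => by
        have hx := (mp x).1
        rw [RingHom.id_apply, ← (hx.hasSum.const_smul a).tsum_eq]
        exact tsum_congr fun q => by
          simp only [map_smul]
          rw [smul_comm] }
    (‖B‖ * ‖Sf‖ * ‖Sg‖) (fun x => (mp x).2), fun x => rfl⟩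
  obtain ⟨Gmap, hG⟩ := hGex
  refine ⟨Fmap, Gmap, ?_, ?_, ?_⟩
  · intro x
    have h1 := (mf x).1.hasSum.tendsto_sum_nat
    rw [← hF x] at h1
    exact h1
  · -- second claim
    intro x
    have hu : HasSum (fun q : ℕ × ℕ =>
        ((f q.1 * g q.2 : ℝ) : ℂ) • (adjoint (T ^ (q.1 + q.2))) (B ((T ^ (q.1 + q.2)) x)))
        (Gmap x) := by rw [hG x]; exact (mp x).1.hasSum
    have hu' : HasSum ((fun q : ℕ × ℕ =>
        ((f q.1 * g q.2 : ℝ) : ℂ) • (adjoint (T ^ (q.1 + q.2))) (B ((T ^ (q.1 + q.2)) x)))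
          ∘ ⇑(Equiv.prodComm ℕ ℕ)) (Gmap x) :=
      (Equiv.prodComm ℕ ℕ).hasSum_iff.mpr hu
    have hterm : ∀ m n : ℕ,
        ((g n : ℝ) : ℂ) • (adjoint (T ^ n))
            (((f m : ℝ) : ℂ) • (adjoint (T ^ m)) (B ((T ^ m) ((T ^ n) x))))
        = ((f m * g n : ℝ) : ℂ) • (adjoint (T ^ (m + n))) (B ((T ^ (m + n)) x)) := by
      intro m n
      have e1 : (T ^ (m + n)) x = (T ^ m) ((T ^ n) x) := by
        rw [pow_add, ContinuousLinearMap.mul_apply]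
      have e2 : adjoint (T ^ (m + n)) = adjoint (T ^ n) ∘L adjoint (T ^ m) := by
        rw [pow_add, ContinuousLinearMap.mul_def, ContinuousLinearMap.adjoint_comp]
      rw [e1, e2, map_smul]
      rw [ContinuousLinearMap.comp_apply, smul_smul]
      congr 1
      push_cast
      ring
    have hfib : ∀ n : ℕ, HasSum (fun m : ℕ =>
        ((f m * g n : ℝ) : ℂ) • (adjoint (T ^ (m + n))) (B ((T ^ (m + n)) x)))
        (((g n : ℝ) : ℂ) • (adjoint (T ^ n)) (Fmap ((T ^ n) x))) := by
      intro n
      have hinj : Function.Injective (fun m : ℕ => (m, n)) :=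
        fun a b hab => (Prod.ext_iff.mp hab).1
      have hsumfib : Summable (fun m : ℕ =>
          ((f m * g n : ℝ) : ℂ) • (adjoint (T ^ (m + n))) (B ((T ^ (m + n)) x))) :=
        (mp x).1.comp_injective hinj
      have hval : ((g n : ℝ) : ℂ) • (adjoint (T ^ n)) (Fmap ((T ^ n) x))
          = ∑' m, ((f m * g n : ℝ) : ℂ) • (adjoint (T ^ (m + n))) (B ((T ^ (m + n)) x)) := by
        rw [hF, ContinuousLinearMap.map_tsum (adjoint (T ^ n)) (mf ((T ^ n) x)).1]
        have hsum2 : Summable (fun m => (adjoint (T ^ n))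
            (((f m : ℝ) : ℂ) • (adjoint (T ^ m)) (B ((T ^ m) ((T ^ n) x))))) :=
          ((mf ((T ^ n) x)).1.map (adjoint (T ^ n) : H →L[ℂ] H) (adjoint (T ^ n)).continuous)
        rw [← (hsum2.hasSum.const_smul (((g n : ℝ) : ℂ))).tsum_eq]
        exact tsum_congr fun m => hterm m n
      rw [hval]
      exact hsumfib.hasSum
    exact (hu'.prod_fiberwise hfib).tendsto_sum_nat
  · -- third claim
    intro x
    have hu : HasSum (fun q : ℕ × ℕ =>
        ((f q.1 * g q.2 : ℝ) : ℂ) • (adjoint (T ^ (q.1 + q.2))) (B ((T ^ (q.1 + q.2)) x)))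
        (Gmap x) := by rw [hG x]; exact (mp x).1.hasSum
    have hsig : HasSum ((fun q : ℕ × ℕ =>
        ((f q.1 * g q.2 : ℝ) : ℂ) • (adjoint (T ^ (q.1 + q.2))) (B ((T ^ (q.1 + q.2)) x)))
          ∘ ⇑(Finset.HasAntidiagonal.sigmaAntidiagonalEquivProd)) (Gmap x) :=
      (Finset.HasAntidiagonal.sigmaAntidiagonalEquivProd).hasSum_iff.mpr hu
    have hfib : ∀ k : ℕ, HasSum (fun c : (Finset.HasAntidiagonal.antidiagonal k : Finset (ℕ × ℕ)) =>
        ((f (c : ℕ × ℕ).1 * g (c : ℕ × ℕ).2 : ℝ) : ℂ) •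
          (adjoint (T ^ ((c : ℕ × ℕ).1 + (c : ℕ × ℕ).2)))
            (B ((T ^ ((c : ℕ × ℕ).1 + (c : ℕ × ℕ).2)) x)))
        (∑ p ∈ Finset.HasAntidiagonal.antidiagonal k,
          ((f p.1 * g p.2 : ℝ) : ℂ) • (adjoint (T ^ (p.1 + p.2))) (B ((T ^ (p.1 + p.2)) x))) :=
      fun k => (Finset.HasAntidiagonal.antidiagonal k).hasSum _
    have hgrp : HasSum (fun k : ℕ => ∑ p ∈ Finset.HasAntidiagonal.antidiagonal k,
        ((f p.1 * g p.2 : ℝ) : ℂ) • (adjoint (T ^ (p.1 + p.2))) (B ((T ^ (p.1 + p.2)) x)))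
        (Gmap x) := HasSum.sigma hsig hfib
    have hterm : ∀ k : ℕ, ∑ p ∈ Finset.HasAntidiagonal.antidiagonal k,
        ((f p.1 * g p.2 : ℝ) : ℂ) • (adjoint (T ^ (p.1 + p.2))) (B ((T ^ (p.1 + p.2)) x))
        = ((∑ m ∈ Finset.range (k + 1), f m * g (k - m) : ℝ) : ℂ) •
          (adjoint (T ^ k)) (B ((T ^ k) x)) := by
      intro k
      have h1 : ∀ p ∈ Finset.HasAntidiagonal.antidiagonal k,
          ((f p.1 * g p.2 : ℝ) : ℂ) • (adjoint (T ^ (p.1 + p.2))) (B ((T ^ (p.1 + p.2)) x))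
          = ((f p.1 * g p.2 : ℝ) : ℂ) • (adjoint (T ^ k)) (B ((T ^ k) x)) := by
        intro p hp
        rw [Finset.HasAntidiagonal.mem_antidiagonal] at hp
        rw [hp]
      rw [Finset.sum_congr rfl h1, ← Finset.sum_smul]
      congr 1
      rw [← Complex.ofReal_sum]
      congr 1
      exact Finset.Nat.sum_antidiagonal_eq_sum_range_succ_mk _ k
    rw [funext hterm] at hgrp
    exact hgrp.tendsto_sum_nat
end

section
/- If q is a real polynomial with q(t) > 0 for every t ∈ [0,1], then there exists a rational function u analytic in a neighborhood of the closed unit disc such that all Taylor coefficients of u are non-negative with u(0) > 0, and all Taylor coefficients of u·q are non-negative with (uq)(0) > 0. -/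
open Finset

private noncomputable def wfun (k n j : ℕ) : ℝ := ∏ i ∈ range j, ((n:ℝ) - i) / ((n:ℝ) + k - i)


/-- Basic choose identity. -/
private lemma aux_choose (k m : ℕ) : (m+1+k) * (m+k).choose k = (m+1) * (m+1+k).choose k := by
  have h1 : (m+k+1) * (m+k).choose k = (m+k+1).choose (k+1) * (k+1) :=
    Nat.add_one_mul_choose_eq (m+k) k
  have h2 : (m+k+1).choose (k+1) * (k+1) = (m+k+1).choose k * ((m+k+1) - k) :=
    Nat.choose_succ_right_eq (m+k+1) k
  have h3 : (m+k+1) - k = m+1 := by omega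
  have h4 : m+1+k = m+k+1 := by omega
  rw [h4, h1, h2, h3]
  ring

/-- Nat product identity. -/
private lemma aux_id (k n : ℕ) : ∀ j ≤ n,
    (n-j+k).choose k * ∏ i ∈ range j, (n+k-i) = (n+k).choose k * ∏ i ∈ range j, (n-i) := by
  intro j
  induction j with
  | zero => simp
  | succ j ih =>
    intro hj
    have hj' : j ≤ n := by omega
    rw [prod_range_succ, prod_range_succ]
    have hm : n - (j+1) + 1 = n - j := by omega
    have h1 : n + k - j = (n - (j+1)) + 1 + k := by omega
    have h2 : n - (j+1) + k = (n - (j+1)) + k := rfl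
    calc (n-(j+1)+k).choose k * ((∏ i ∈ range j, (n+k-i)) * (n+k-j))
        = ((n-(j+1)+1+k) * ((n-(j+1))+k).choose k) * ∏ i ∈ range j, (n+k-i) := by
          rw [h1]; ring
      _ = ((n-(j+1)+1) * ((n-(j+1))+1+k).choose k) * ∏ i ∈ range j, (n+k-i) := by
          rw [aux_choose]
      _ = (n-j) * ((n-j+k).choose k * ∏ i ∈ range j, (n+k-i)) := by
          rw [hm]; ring
      _ = (n-j) * ((n+k).choose k * ∏ i ∈ range j, (n-i)) := by rw [ih hj']
      _ = (n+k).choose k * ((∏ i ∈ range j, (n-i)) * (n-j)) := by ring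

private lemma w_eq (k n j : ℕ) (hj : j ≤ n) :
    ((n-j+k).choose k : ℝ) = ((n+k).choose k : ℝ) * wfun k n j := by
  have key := aux_id k n j hj
  have hden0 : ∀ i ∈ range j, (0:ℝ) < (n:ℝ) + k - i := by
    intro i hi
    simp only [mem_range] at hi
    have hi' : (i:ℝ) < (n:ℝ) := by exact_mod_cast (by omega : i < n)
    have : (0:ℝ) ≤ (k:ℝ) := Nat.cast_nonneg k
    linarith
  have hD : (0:ℝ) < ∏ i ∈ range j, ((n:ℝ) + k - i) := prod_pos hden0
  have hcastD : ((∏ i ∈ range j, (n+k-i) : ℕ) : ℝ) = ∏ i ∈ range j, ((n:ℝ) + k - i) := by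
    push_cast
    refine prod_congr rfl fun i hi => ?_
    simp only [mem_range] at hi
    have h : i ≤ n + k := by omega
    push_cast [Nat.cast_sub h]
    ring
  have hcastN : ((∏ i ∈ range j, (n-i) : ℕ) : ℝ) = ∏ i ∈ range j, ((n:ℝ) - i) := by
    push_cast
    refine prod_congr rfl fun i hi => ?_
    simp only [mem_range] at hi
    have h : i ≤ n := by omega
    push_cast [Nat.cast_sub h]
    ring
  have keyR : ((n-j+k).choose k : ℝ) * ∏ i ∈ range j, ((n:ℝ) + k - i)
      = ((n+k).choose k : ℝ) * ∏ i ∈ range j, ((n:ℝ) - i) := by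
    rw [← hcastD, ← hcastN]
    exact_mod_cast congrArg (Nat.cast : ℕ → ℝ) key
  have hw : wfun k n j = (∏ i ∈ range j, ((n:ℝ) - i)) / ∏ i ∈ range j, ((n:ℝ) + k - i) :=
    prod_div_distrib _ _
  rw [hw, ← mul_div_assoc, eq_div_iff hD.ne', keyR]

private lemma w_zero (k n j : ℕ) (hn : n < j) : wfun k n j = 0 := by
  apply prod_eq_zero (mem_range.2 hn)
  simp

private lemma w_nonneg (k n j : ℕ) (hj : j ≤ n) : 0 ≤ wfun k n j := by
  apply prod_nonneg
  intro i hi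
  simp only [mem_range] at hi
  apply div_nonneg
  · have : (i:ℝ) ≤ n := by exact_mod_cast (by omega : i ≤ n)
    linarith
  · have : (i:ℝ) ≤ n := by exact_mod_cast (by omega : i ≤ n)
    have : (0:ℝ) ≤ k := Nat.cast_nonneg k
    linarith

private lemma prod_diff_le (f g : ℕ → ℝ) (ε : ℝ) (hε : 0 ≤ ε) : ∀ (m : ℕ),
    (∀ i < m, f i ∈ Set.Icc (0:ℝ) 1) → (∀ i < m, g i ∈ Set.Icc (0:ℝ) 1) →
    (∀ i < m, |f i - g i| ≤ ε) →
    |∏ i ∈ range m, f i - ∏ i ∈ range m, g i| ≤ m * ε := by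
  intro m
  induction m with
  | zero => intro _ _ _; simp
  | succ m ih =>
    intro hf hg h
    have hf' : ∀ i < m, f i ∈ Set.Icc (0:ℝ) 1 := fun i hi => hf i (by omega)
    have hg' : ∀ i < m, g i ∈ Set.Icc (0:ℝ) 1 := fun i hi => hg i (by omega)
    have h' : ∀ i < m, |f i - g i| ≤ ε := fun i hi => h i (by omega)
    have IH := ih hf' hg' h'
    have hA0 : 0 ≤ ∏ i ∈ range m, f i := prod_nonneg fun i hi => (hf' i (mem_range.1 hi)).1
    have hB0 : 0 ≤ ∏ i ∈ range m, g i := prod_nonneg fun i hi => (hg' i (mem_range.1 hi)).1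
    have hB1 : ∏ i ∈ range m, g i ≤ 1 :=
      prod_le_one (fun i hi => (hg' i (mem_range.1 hi)).1) (fun i hi => (hg' i (mem_range.1 hi)).2)
    have hfm := hf m (by omega)
    have hgm := h m (by omega)
    rw [prod_range_succ, prod_range_succ]
    have expand : (∏ i ∈ range m, f i) * f m - (∏ i ∈ range m, g i) * g m
        = f m * ((∏ i ∈ range m, f i) - ∏ i ∈ range m, g i)
          + (∏ i ∈ range m, g i) * (f m - g m) := by ring
    rw [expand]
    calc |f m * ((∏ i ∈ range m, f i) - ∏ i ∈ range m, g i)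
          + (∏ i ∈ range m, g i) * (f m - g m)|
        ≤ |f m * ((∏ i ∈ range m, f i) - ∏ i ∈ range m, g i)|
          + |(∏ i ∈ range m, g i) * (f m - g m)| := abs_add_le _ _
      _ ≤ 1 * (m * ε) + 1 * ε := by
          rw [abs_mul, abs_mul]
          gcongr
          · rw [abs_of_nonneg hfm.1]; exact hfm.2
          · rw [abs_of_nonneg hB0]; exact hB1
      _ = (m + 1 : ℕ) * ε := by push_cast; ring

private lemma w_close (k n d m : ℕ) (hm : m ≤ n) (hmd : m ≤ d) (hdk : d < k) :
    |wfun k n m - ((n:ℝ)/((n:ℝ)+k))^m| ≤ m * ((d:ℝ)/((k:ℝ)-d)) := by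
  have hkd : (0:ℝ) < (k:ℝ) - d := by
    have : (d:ℝ) < k := by exact_mod_cast hdk
    linarith
  have hε : (0:ℝ) ≤ (d:ℝ)/((k:ℝ)-d) := div_nonneg (Nat.cast_nonneg d) hkd.le
  have hnk : (0:ℝ) < (n:ℝ) + k := by
    have : (0:ℝ) < (k:ℝ) := by exact_mod_cast (by omega : 0 < k)
    have := Nat.cast_nonneg (α := ℝ) n
    linarith
  have hx : (n:ℝ)/((n:ℝ)+k) ∈ Set.Icc (0:ℝ) 1 := by
    constructor
    · exact div_nonneg (Nat.cast_nonneg n) hnk.le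
    · rw [div_le_one hnk]
      have : (0:ℝ) ≤ (k:ℝ) := Nat.cast_nonneg k
      linarith
  have key := prod_diff_le (fun i => ((n:ℝ) - i) / ((n:ℝ) + k - i))
      (fun _ => (n:ℝ)/((n:ℝ)+k)) ((d:ℝ)/((k:ℝ)-d)) hε m
      ?_ (fun i _ => hx) ?_
  · simpa [wfun, prod_const, card_range, div_pow] using key
  · -- factors in [0,1]
    intro i hi
    have hin : (i:ℝ) < n := by exact_mod_cast (by omega : i < n)
    have hk0 : (0:ℝ) < (k:ℝ) := by exact_mod_cast (by omega : 0 < k)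
    have hden : (0:ℝ) < (n:ℝ) + k - i := by linarith
    constructor
    · exact div_nonneg (by linarith) hden.le
    · rw [div_le_one hden]; linarith
  · -- per-factor estimate
    intro i hi
    have hin : (i:ℝ) < n := by exact_mod_cast (by omega : i < n)
    have hid : (i:ℝ) ≤ d := by exact_mod_cast (by omega : i ≤ d)
    have hk0 : (0:ℝ) < (k:ℝ) := by exact_mod_cast (by omega : 0 < k)
    have hi0 : (0:ℝ) ≤ i := Nat.cast_nonneg i
    have hden : (0:ℝ) < (n:ℝ) + k - i := by linarith
    have heq : ((n:ℝ) - i) / ((n:ℝ) + k - i) - (n:ℝ)/((n:ℝ)+k)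
        = -((i:ℝ) * k) / (((n:ℝ) + k - i) * ((n:ℝ)+k)) := by
      field_simp
      ring
    rw [heq, abs_div, abs_neg, abs_of_nonneg (by positivity),
        abs_of_nonneg (by positivity)]
    rw [div_le_div_iff₀ (by positivity) hkd]
    have hkd' : (k:ℝ) - d ≤ (n:ℝ) + k - i := by
      have := Nat.cast_nonneg (α := ℝ) n
      linarith
    have hnk' : (k:ℝ) ≤ (n:ℝ) + k := by
      have := Nat.cast_nonneg (α := ℝ) n
      linarith
    have hd0 : (0:ℝ) ≤ (d:ℝ) := Nat.cast_nonneg d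
    calc (i:ℝ) * k * ((k:ℝ) - d) ≤ (d:ℝ) * ((k:ℝ) - d) * k := by nlinarith [mul_le_mul_of_nonneg_right (mul_le_mul_of_nonneg_right hid hkd.le) hk0.le]
      _ ≤ (d:ℝ) * (((n:ℝ) + k - i) * ((n:ℝ)+k)) := by
          have h1 : ((k:ℝ) - d) * k ≤ ((n:ℝ) + k - i) * ((n:ℝ)+k) :=
            mul_le_mul hkd' hnk' hk0.le (by linarith)
          calc (d:ℝ) * ((k:ℝ)-d) * k = (d:ℝ) * (((k:ℝ)-d) * k) := by ring
            _ ≤ _ := mul_le_mul_of_nonneg_left h1 hd0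

private lemma main_est (p : ℕ → ℝ) (d k : ℕ) (δ : ℝ)
    (hpos : ∀ x ∈ Set.Icc (0:ℝ) 1, δ ≤ ∑ m ∈ range (d+1), p m * x^m)
    (hdk : d < k)
    (hK : (∑ m ∈ range (d+1), |p m|) * (((d:ℝ)+1) * ((d:ℝ)/((k:ℝ)-d))) ≤ δ) :
    ∀ n, 0 ≤ ∑ m ∈ range (d+1), p m * wfun k n m := by
  intro n
  have hkd : (0:ℝ) < (k:ℝ) - d := by
    have : (d:ℝ) < k := by exact_mod_cast hdk
    linarith
  set ε : ℝ := (d:ℝ)/((k:ℝ)-d) with hεdef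
  have hε : 0 ≤ ε := div_nonneg (Nat.cast_nonneg d) hkd.le
  have hk0 : (0:ℝ) < (k:ℝ) := by exact_mod_cast (by omega : 0 < k)
  have hnk : (0:ℝ) < (n:ℝ) + k := by
    have := Nat.cast_nonneg (α := ℝ) n
    linarith
  set x : ℝ := (n:ℝ)/((n:ℝ)+k) with hxdef
  have hx0 : 0 ≤ x := div_nonneg (Nat.cast_nonneg n) hnk.le
  have hx1 : x ≤ 1 := by
    rw [hxdef, div_le_one hnk]
    have := Nat.cast_nonneg (α := ℝ) k
    linarith
  -- per-term bound
  have hterm : ∀ m ∈ range (d+1), |wfun k n m - x^m| ≤ ((d:ℝ)+1) * ε := by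
    intro m hm
    have hmd : m ≤ d := by simpa [Nat.lt_succ_iff] using mem_range.1 hm
    rcases le_or_gt m n with hmn | hmn
    · calc |wfun k n m - x^m| ≤ m * ε := w_close k n d m hmn hmd hdk
        _ ≤ ((d:ℝ)+1) * ε := by
            have : (m:ℝ) ≤ (d:ℝ)+1 := by exact_mod_cast (by omega : m ≤ d+1)
            exact mul_le_mul_of_nonneg_right this hε
    · rw [w_zero k n m hmn, zero_sub, abs_neg, abs_of_nonneg (pow_nonneg hx0 m)]
      have hm1 : 1 ≤ m := by omega
      have h1 : x^m ≤ x := by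
        calc x^m ≤ x^1 := pow_le_pow_of_le_one hx0 hx1 hm1
          _ = x := pow_one x
      have h2 : x ≤ ε := by
        rw [hxdef, hεdef, div_le_div_iff₀ hnk hkd]
        have hnd : (n:ℝ) ≤ (d:ℝ) := by exact_mod_cast (by omega : n ≤ d)
        have hn0 := Nat.cast_nonneg (α := ℝ) n
        have hd0 := Nat.cast_nonneg (α := ℝ) d
        nlinarith
      have h3 : ε ≤ ((d:ℝ)+1) * ε := by nlinarith
      linarith
  have hdiff : |∑ m ∈ range (d+1), p m * wfun k n m - ∑ m ∈ range (d+1), p m * x^m|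
      ≤ (∑ m ∈ range (d+1), |p m|) * (((d:ℝ)+1) * ε) := by
    rw [← sum_sub_distrib]
    calc |∑ m ∈ range (d+1), (p m * wfun k n m - p m * x^m)|
        ≤ ∑ m ∈ range (d+1), |p m * wfun k n m - p m * x^m| := abs_sum_le_sum_abs _ _
      _ ≤ ∑ m ∈ range (d+1), |p m| * (((d:ℝ)+1) * ε) := by
          apply sum_le_sum
          intro m hm
          rw [← mul_sub, abs_mul]
          exact mul_le_mul_of_nonneg_left (hterm m hm) (abs_nonneg _)
      _ = (∑ m ∈ range (d+1), |p m|) * (((d:ℝ)+1) * ε) := by rw [← sum_mul]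
  have hev := hpos x ⟨hx0, hx1⟩
  have := abs_le.1 hdiff
  linarith [this.1]

/-- If `q` is a real polynomial positive on `[0,1]`, there is a rational function `u`
analytic on a disc of radius `R > 1`, with non-negative Taylor coefficients and positive
constant term, such that `u·q` also has non-negative Taylor coefficients and positive
constant term. -/
theorem stmt_6 (q : Polynomial ℝ) (hq : ∀ t ∈ Set.Icc (0 : ℝ) 1, 0 < q.eval t) :
    ∃ (R : ℝ) (c : ℕ → ℝ) (p₁ p₂ : Polynomial ℂ),
      1 < R ∧
      (∀ z : ℂ, ‖z‖ < R → Polynomial.eval z p₂ ≠ 0 ∧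
        HasSum (fun n => (c n : ℂ) * z ^ n)
          (Polynomial.eval z p₁ / Polynomial.eval z p₂)) ∧
      (∀ n, 0 ≤ c n) ∧ 0 < c 0 ∧
      (∀ n, 0 ≤ ∑ j ∈ Finset.range (n + 1), c j * q.coeff (n - j)) ∧
      0 < c 0 * q.coeff 0 := by
  -- Step 1: find s > 1 with q positive on [0, s]
  obtain ⟨ε, hε, hball⟩ := Metric.isOpen_iff.1
    (isOpen_lt continuous_const (Polynomial.continuous q)) 1 (hq 1 ⟨zero_le_one, le_refl 1⟩)
  set s : ℝ := 1 + ε/2 with hsdef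
  have hs1 : 1 < s := by simp [hsdef]; linarith
  have hs0 : 0 < s := by linarith
  have hqs : ∀ t ∈ Set.Icc (0:ℝ) s, 0 < q.eval t := by
    intro t ⟨ht0, hts⟩
    rcases le_or_gt t 1 with h | h
    · exact hq t ⟨ht0, h⟩
    · have : t ∈ Metric.ball (1:ℝ) ε := by
        rw [Metric.mem_ball, Real.dist_eq, abs_of_nonneg (by linarith)]
        simp only [hsdef] at hts
        linarith
      exact hball this
  -- Step 2: coefficients of q(s·x) and minimum δ
  set d : ℕ := q.natDegree with hddef
  set p : ℕ → ℝ := fun m => q.coeff m * s^m with hpdef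
  have hsum_eval : ∀ x : ℝ, ∑ m ∈ range (d+1), p m * x^m = q.eval (s*x) := by
    intro x
    rw [Polynomial.eval_eq_sum_range]
    refine sum_congr rfl fun m _ => ?_
    simp only [hpdef, mul_pow]
    ring
  obtain ⟨t₀, ht₀, hmin⟩ := isCompact_Icc.exists_isMinOn (Set.nonempty_Icc.2 (by linarith))
    (Polynomial.continuous q).continuousOn (s := Set.Icc (0:ℝ) s)
  set δ : ℝ := q.eval t₀ with hδdef
  have hδ0 : 0 < δ := hqs t₀ ht₀
  have hpos : ∀ x ∈ Set.Icc (0:ℝ) 1, δ ≤ ∑ m ∈ range (d+1), p m * x^m := by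
    intro x ⟨hx0, hx1⟩
    rw [hsum_eval]
    exact hmin ⟨by positivity, by nlinarith⟩
  -- Step 3: choose k
  set K : ℝ := ∑ m ∈ range (d+1), |p m| with hKdef
  have hK0 : 0 ≤ K := sum_nonneg fun m _ => abs_nonneg _
  obtain ⟨N, hN⟩ := exists_nat_gt ((K * ((d:ℝ)+1) * d) / δ)
  set k : ℕ := d + N + 1 with hkdef
  have hdk : d < k := by omega
  have hkd : ((k:ℝ) - d) = (N:ℝ) + 1 := by
    simp only [hkdef]
    push_cast
    ring
  have hKcond : K * (((d:ℝ)+1) * ((d:ℝ)/((k:ℝ)-d))) ≤ δ := by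
    rw [hkd]
    have hN1 : (0:ℝ) < (N:ℝ) + 1 := by positivity
    rw [div_lt_iff₀ hδ0] at hN
    rw [show K * (((d:ℝ)+1) * ((d:ℝ)/((N:ℝ)+1))) = (K*((d:ℝ)+1)*(d:ℝ))/((N:ℝ)+1) from by ring,
      div_le_iff₀ hN1]
    nlinarith
  have hest := main_est p d k δ hpos hdk hKcond
  -- Step 4: define c
  set r : ℝ := s⁻¹ with hrdef
  have hr0 : 0 < r := by positivity
  have hrs : r * s = 1 := inv_mul_cancel₀ hs0.ne'
  have hr1 : r < 1 := by
    rw [hrdef, inv_lt_one_iff₀]; right; exact hs1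
  set c : ℕ → ℝ := fun n => ((n+k).choose k : ℝ) * r^n with hcdef
  have hcnonneg : ∀ n, 0 ≤ c n := by
    intro n; simp only [hcdef]; positivity
  have hc0 : c 0 = 1 := by simp [hcdef]
  -- convolution nonnegativity
  have hconv : ∀ n, 0 ≤ ∑ j ∈ Finset.range (n + 1), c j * q.coeff (n - j) := by
    intro n
    have hrefl : ∑ j ∈ range (n+1), c j * q.coeff (n - j)
        = ∑ m ∈ range (n+1), c (n - m) * q.coeff (n - (n - m)) := by
      rw [← Finset.sum_range_reflect]
      refine sum_congr rfl fun m hm => ?_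
      congr 1 <;> congr 1 <;> omega
    rw [hrefl]
    have hterm : ∀ m ∈ range (n+1), c (n - m) * q.coeff (n - (n - m))
        = ((n+k).choose k : ℝ) * r^n * (p m * wfun k n m) := by
      intro m hm
      have hmn : m ≤ n := by simpa [Nat.lt_succ_iff] using mem_range.1 hm
      have h1 : n - (n - m) = m := by omega
      have h2 : ((n-m+k).choose k : ℝ) = ((n+k).choose k : ℝ) * wfun k n m := w_eq k n m hmn
      have h3 : r^(n-m) = r^n * s^m := by
        have : r^n = r^(n-m) * r^m := by
          rw [← pow_add]
          congr 1
          omega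
        rw [this, mul_assoc, ← mul_pow]
        rw [hrs]
        simp
      simp only [hcdef, h1, h2, h3, hpdef]
      ring
    rw [sum_congr rfl hterm, ← mul_sum]
    have hsum_eq : ∑ m ∈ range (n+1), p m * wfun k n m
        = ∑ m ∈ range (d+1), p m * wfun k n m := by
      set N' : ℕ := max n d + 1 with hN'def
      have e1 : ∑ m ∈ range (n+1), p m * wfun k n m
          = ∑ m ∈ range N', p m * wfun k n m := by
        apply sum_subset (range_subset_range.2 (by omega))
        intro m _ hm
        have : n < m := by
          simp only [mem_range] at *
          omega
        rw [w_zero k n m this, mul_zero]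
      have e2 : ∑ m ∈ range (d+1), p m * wfun k n m
          = ∑ m ∈ range N', p m * wfun k n m := by
        apply sum_subset (range_subset_range.2 (by omega))
        intro m _ hm
        have : d < m := by
          simp only [mem_range] at *
          omega
        have : q.coeff m = 0 := Polynomial.coeff_eq_zero_of_natDegree_lt this
        simp [hpdef, this]
      rw [e1, e2]
    rw [hsum_eq]
    have := hest n
    positivity
  -- Step 5: analytic part
  refine ⟨(1+s)/2, c, 1, (1 - Polynomial.C (r:ℂ) * Polynomial.X)^(k+1), by linarith, ?_,
    hcnonneg, by rw [hc0]; norm_num, hconv, ?_⟩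
  · intro z hz
    have hnorm : ‖(r:ℂ) * z‖ < 1 := by
      rw [norm_mul, Complex.norm_real, Real.norm_eq_abs, abs_of_pos hr0]
      calc r * ‖z‖ < r * ((1+s)/2) := by
            apply mul_lt_mul_of_pos_left hz hr0
        _ < 1 := by
            rw [hrdef]
            rw [inv_mul_lt_iff₀ hs0]
            linarith
    have hne : (1 : ℂ) - (r:ℂ) * z ≠ 0 := by
      intro h
      rw [sub_eq_zero] at h
      rw [← h] at hnorm
      simp at hnorm
    have heval₂ : Polynomial.eval z ((1 - Polynomial.C (r:ℂ) * Polynomial.X)^(k+1))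
        = (1 - (r:ℂ) * z)^(k+1) := by simp
    constructor
    · rw [heval₂]
      exact pow_ne_zero _ hne
    · have hs := hasSum_choose_mul_geometric_of_norm_lt_one k hnorm
      rw [heval₂]
      simp only [Polynomial.eval_one]
      convert hs using 2 with n
      case e'_3 => rfl
      simp only [hcdef]
      push_cast
      rw [mul_pow]
      ring
  · rw [hc0, one_mul, Polynomial.coeff_zero_eq_eval_zero]
    exact hq 0 ⟨le_refl 0, zero_le_one⟩
end

section
/- If f is in the Wiener algebra with real Taylor coefficients and f(t) > 0 for every t ∈ [0,1], then there exists g in the Wiener algebra with real coefficients such that g ≻ 0 and fg ≻ 0, i.e., all Taylor coefficients of g and of fg are non-negative and their constant terms are positive. -/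
open Finset

set_option maxHeartbeats 1000000


/-- Triangle sum reindex. -/
lemma stmt7_tri (H : ℕ → ℕ → ℝ) (M : ℕ) :
    ∑ n ∈ range M, ∑ j ∈ range (n+1), H j (n - j)
      = ∑ j ∈ range M, ∑ i ∈ range (M - j), H j i := by
  induction M with
  | zero => simp
  | succ M ih =>
    rw [Finset.sum_range_succ, ih, Finset.sum_range_succ (fun j => ∑ i ∈ range (M+1-j), H j i)]
    have h1 : ∀ j ∈ range M, ∑ i ∈ range (M+1-j), H j i
        = ∑ i ∈ range (M-j), H j i + H j (M-j) := by
      intro j hj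
      have hjM : j ≤ M := le_of_lt (mem_range.mp hj)
      have : M + 1 - j = (M - j) + 1 := by omega
      rw [this, Finset.sum_range_succ]
    rw [Finset.sum_congr rfl h1, Finset.sum_add_distrib]
    have : M + 1 - M = 1 := by omega
    rw [this]
    simp [Finset.sum_range_succ]
    ring

/-- Swap of a double sum over the triangle `j + m ≤ n`. -/
lemma stmt7_swap (F : ℕ → ℕ → ℝ) (n : ℕ) :
    ∑ j ∈ range (n+1), ∑ m ∈ range (n+1-j), F j m
      = ∑ m ∈ range (n+1), ∑ j ∈ range (n+1-m), F j m := by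
  have h1 := stmt7_tri (fun j i => F j i) (n+1)
  have h2 := stmt7_tri (fun j i => F i j) (n+1)
  have h3 : ∀ k, ∑ j ∈ range (k+1), F j (k - j) = ∑ j ∈ range (k+1), F (k - j) j := by
    intro k
    have := Finset.sum_range_reflect (fun j => F (k - j) j) (k+1)
    rw [← this]
    apply Finset.sum_congr rfl
    intro j hj
    have : j ≤ k := by have := mem_range.mp hj; omega
    congr 1 <;> omega
  calc ∑ j ∈ range (n+1), ∑ m ∈ range (n+1-j), F j m
      = ∑ k ∈ range (n+1), ∑ j ∈ range (k+1), F j (k-j) := h1.symm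
    _ = ∑ k ∈ range (n+1), ∑ j ∈ range (k+1), F (k-j) j := by
        exact Finset.sum_congr rfl (fun k _ => h3 k)
    _ = ∑ m ∈ range (n+1), ∑ j ∈ range (n+1-m), F j m := h2


/-- Pascal-type identity: `C(k+1+e,e)*(k+1) = C(k+e,e)*(k+1+e)`. -/
lemma stmt7_L1 (e k : ℕ) :
    Nat.choose (k+1+e) e * (k+1) = Nat.choose (k+e) e * (k+1+e) := by
  have h1 := Nat.add_one_mul_choose_eq (k+e) k
  -- (k+e+1) * C(k+e, k) = C(k+e+1, k+1) * (k+1)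
  have h2 : Nat.choose (k+e) k = Nat.choose (k+e) e := by
    have := Nat.choose_symm (n := k+e) (k := e) (by omega)
    simpa [show k+e-e = k by omega] using this
  have h3 : Nat.choose (k+e+1) (k+1) = Nat.choose (k+1+e) e := by
    have := Nat.choose_symm (n := k+1+e) (k := k+1) (by omega)
    simpa [show k+1+e-(k+1) = e by omega, show k+e+1 = k+1+e by omega] using this.symm
  rw [h2, h3] at h1
  rw [← h1]; ring

/-- Lower ratio bound (nat, multiplied form): `C(k+e,e)*(n+e)^j ≤ C(n+e,e)*n^j` for `n = j+k`. -/
lemma stmt7_A (e : ℕ) : ∀ j k : ℕ,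
    Nat.choose (k+e) e * (j+k+e)^j ≤ Nat.choose (j+k+e) e * (j+k)^j := by
  intro j
  induction j with
  | zero => intro k; simp
  | succ j ih =>
    intro k
    set n := j+1+k with hn
    have ihk := ih (k+1)
    have hnk : j + (k+1) = n := by omega
    rw [hnk] at ihk
    have key : Nat.choose (k+e) e * (n+e)^(j+1) * (k+1+e)
        ≤ Nat.choose (n+e) e * n^(j+1) * (k+1+e) := by
      have e1 : Nat.choose (k+e) e * (n+e)^(j+1) * (k+1+e)
          = (Nat.choose (k+1+e) e * (k+1)) * ((n+e)^j * (n+e)) := by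
        rw [stmt7_L1 e k]; ring
      rw [e1]
      calc Nat.choose (k+1+e) e * (k+1) * ((n+e)^j * (n+e))
          = (Nat.choose (k+1+e) e * (n+e)^j) * ((k+1) * (n+e)) := by ring
        _ ≤ (Nat.choose (n+e) e * n^j) * ((k+1) * (n+e)) :=
            Nat.mul_le_mul_right _ ihk
        _ ≤ (Nat.choose (n+e) e * n^j) * (n * (k+1+e)) := by
            apply Nat.mul_le_mul_left
            nlinarith [hn]
        _ = Nat.choose (n+e) e * n^(j+1) * (k+1+e) := by ring
    exact Nat.le_of_mul_le_mul_right key (by omega)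

/-- Upper ratio bound (nat, multiplied form). -/
lemma stmt7_B (e : ℕ) : ∀ j k : ℕ,
    Nat.choose (j+k+e) e * (j+k)^j * (j+k+e)
      ≤ Nat.choose (k+e) e * (j+k+e)^(j+1) + j^2 * Nat.choose (j+k+e) e * (j+k+e)^j := by
  intro j
  induction j with
  | zero => intro k; simp
  | succ j ih =>
    intro k
    set n := j+1+k with hn
    have ihk := ih (k+1)
    have hnk : j + (k+1) = n := by omega
    rw [hnk] at ihk
    -- key inner inequality (3'): C(k+1+e,e)*n ≤ C(k+e,e)*(n+e) + j*C(n+e,e)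
    have hmono : Nat.choose (k+1+e) e ≤ Nat.choose (n+e) e :=
      Nat.choose_le_choose e (by omega)
    have key3 : Nat.choose (k+1+e) e * n ≤ Nat.choose (k+e) e * (n+e) + j * Nat.choose (n+e) e := by
      have h4 : Nat.choose (k+1+e) e * n * (k+1+e)
          ≤ (Nat.choose (k+e) e * (n+e) + j * Nat.choose (n+e) e) * (k+1+e) := by
        have expand : Nat.choose (k+1+e) e * n * (k+1+e)
            = Nat.choose (k+1+e) e * (k+1) * n + Nat.choose (k+1+e) e * (k+1) * e
              + e * j * Nat.choose (k+1+e) e := by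
          rw [hn]; ring
        rw [expand, stmt7_L1 e k]
        have t1 : Nat.choose (k+e) e * (k+1+e) * n + Nat.choose (k+e) e * (k+1+e) * e
            = Nat.choose (k+e) e * (n+e) * (k+1+e) := by ring
        have t2 : e * j * Nat.choose (k+1+e) e ≤ j * Nat.choose (n+e) e * (k+1+e) := by
          calc e * j * Nat.choose (k+1+e) e ≤ (k+1+e) * j * Nat.choose (n+e) e := by
                apply Nat.mul_le_mul _ hmono
                exact Nat.mul_le_mul (by omega) le_rfl
            _ = j * Nat.choose (n+e) e * (k+1+e) := by ring
        calc Nat.choose (k+e) e * (k+1+e) * n + Nat.choose (k+e) e * (k+1+e) * e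
              + e * j * Nat.choose (k+1+e) e
            ≤ Nat.choose (k+e) e * (n+e) * (k+1+e) + j * Nat.choose (n+e) e * (k+1+e) := by
              rw [t1]; omega
          _ = (Nat.choose (k+e) e * (n+e) + j * Nat.choose (n+e) e) * (k+1+e) := by ring
      exact Nat.le_of_mul_le_mul_right h4 (by omega)
    -- main chain
    calc Nat.choose (n+e) e * n^(j+1) * (n+e)
        = (Nat.choose (n+e) e * n^j * (n+e)) * n := by ring
      _ ≤ (Nat.choose (k+1+e) e * (n+e)^(j+1) + j^2 * Nat.choose (n+e) e * (n+e)^j) * n :=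
          Nat.mul_le_mul_right _ ihk
      _ = (Nat.choose (k+1+e) e * n) * (n+e)^(j+1) + j^2 * Nat.choose (n+e) e * (n+e)^j * n := by
          ring
      _ ≤ (Nat.choose (k+e) e * (n+e) + j * Nat.choose (n+e) e) * (n+e)^(j+1)
            + j^2 * Nat.choose (n+e) e * (n+e)^j * (n+e) := by
          apply Nat.add_le_add
          · exact Nat.mul_le_mul_right _ key3
          · exact Nat.mul_le_mul_left _ (by omega)
      _ = Nat.choose (k+e) e * (n+e)^(j+2) + (j^2 + j) * Nat.choose (n+e) e * (n+e)^(j+1) := by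
          ring
      _ ≤ Nat.choose (k+e) e * (n+e)^(j+1+1) + (j+1)^2 * Nat.choose (n+e) e * (n+e)^(j+1) := by
          apply Nat.add_le_add_left
          apply Nat.mul_le_mul_right
          apply Nat.mul_le_mul_right
          nlinarith

/-- Convolution powers. -/
def stmt7_T (τ : ℕ → ℝ) : ℕ → ℕ → ℝ
  | 0, n => if n = 0 then 1 else 0
  | (k+1), n => ∑ j ∈ Finset.range (n+1), τ j * stmt7_T τ k (n - j)

lemma stmt7_T_nonneg (τ : ℕ → ℝ) (hτ : ∀ j, 0 ≤ τ j) : ∀ k n, 0 ≤ stmt7_T τ k n := by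
  intro k
  induction k with
  | zero => intro n; simp [stmt7_T]; positivity
  | succ k ih =>
    intro n
    simp only [stmt7_T]
    exact Finset.sum_nonneg fun j _ => mul_nonneg (hτ j) (ih _)

lemma stmt7_T_vanish (τ : ℕ → ℝ) (hτ0 : τ 0 = 0) : ∀ k n, n < k → stmt7_T τ k n = 0 := by
  intro k
  induction k with
  | zero => intro n h; omega
  | succ k ih =>
    intro n h
    simp only [stmt7_T]
    apply Finset.sum_eq_zero
    intro j hj
    rcases Nat.eq_zero_or_pos j with rfl | hjpos
    · simp [hτ0]
    · have : n - j < k := by have := mem_range.mp hj; omega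
      rw [ih _ this, mul_zero]

lemma stmt7_T_sum_le (τ : ℕ → ℝ) (hτ : ∀ j, 0 ≤ τ j) (b : ℝ)
    (hb : ∀ M, ∑ j ∈ range M, τ j ≤ b) :
    ∀ k M, ∑ n ∈ range M, stmt7_T τ k n ≤ b ^ k := by
  have hb0 : 0 ≤ b := le_trans (by simp) (hb 0)
  intro k
  induction k with
  | zero =>
    intro M
    rcases Nat.eq_zero_or_pos M with rfl | hM
    · simp
    · have : ∑ n ∈ range M, stmt7_T τ 0 n = 1 := by
        rw [Finset.sum_eq_single 0]
        · simp [stmt7_T]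
        · intro n _ hn; simp [stmt7_T, hn]
        · intro h; exact absurd (mem_range.mpr hM) h
      simp [this]
  | succ k ih =>
    intro M
    have swap : ∑ n ∈ range M, stmt7_T τ (k+1) n
        = ∑ j ∈ range M, τ j * ∑ i ∈ range (M - j), stmt7_T τ k i := by
      simp only [stmt7_T]
      rw [stmt7_tri (fun j i => τ j * stmt7_T τ k i) M]
      exact Finset.sum_congr rfl fun j _ => by rw [Finset.mul_sum]
    rw [swap]
    calc ∑ j ∈ range M, τ j * ∑ i ∈ range (M - j), stmt7_T τ k i
        ≤ ∑ j ∈ range M, τ j * b ^ k := by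
          apply Finset.sum_le_sum
          intro j _
          exact mul_le_mul_of_nonneg_left (ih _) (hτ j)
      _ = (∑ j ∈ range M, τ j) * b ^ k := by rw [← Finset.sum_mul]
      _ ≤ b * b ^ k := mul_le_mul_of_nonneg_right (hb M) (by positivity)
      _ = b ^ (k+1) := by ring

section
variable (τ : ℕ → ℝ) (c : ℝ)

/-- The resolvent series. -/
def stmt7_E (n : ℕ) : ℝ := ∑ k ∈ range (n+1), c^k * stmt7_T τ k n

lemma stmt7_E_nonneg (hτ : ∀ j, 0 ≤ τ j) (hc : 0 ≤ c) (n : ℕ) : 0 ≤ stmt7_E τ c n :=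
  Finset.sum_nonneg fun k _ => mul_nonneg (by positivity) (stmt7_T_nonneg τ hτ k n)

lemma stmt7_E_zero : stmt7_E τ c 0 = 1 := by simp [stmt7_E, stmt7_T]

lemma stmt7_E_rec (hτ0 : τ 0 = 0) (l : ℕ) :
    c * (∑ j ∈ range (l+1), τ j * stmt7_E τ c (l - j)) + (if l = 0 then 1 else 0)
      = stmt7_E τ c l := by
  have pad : ∀ j ∈ range (l+1), τ j * stmt7_E τ c (l - j)
      = ∑ k ∈ range (l+1), τ j * (c^k * stmt7_T τ k (l - j)) := by
    intro j hj
    rw [stmt7_E, Finset.mul_sum]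
    apply Finset.sum_subset
    · apply Finset.range_subset_range.mpr; omega
    · intro k _ hk
      have : l - j < k := by simp only [mem_range] at hk ⊢; omega
      rw [stmt7_T_vanish τ hτ0 k _ this, mul_zero, mul_zero]
  rw [Finset.sum_congr rfl pad, Finset.sum_comm]
  have step : ∀ k ∈ range (l+1), (∑ j ∈ range (l+1), τ j * (c^k * stmt7_T τ k (l - j)))
      = c^k * stmt7_T τ (k+1) l := by
    intro k _
    show _ = c^k * ∑ j ∈ Finset.range (l+1), τ j * stmt7_T τ k (l - j)
    rw [Finset.mul_sum]
    exact Finset.sum_congr rfl fun j _ => by ring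
  rw [Finset.sum_congr rfl step, Finset.mul_sum]
  have expand : ∑ k ∈ range (l+2), c^k * stmt7_T τ k l
      = ∑ k ∈ range (l+1), c^(k+1) * stmt7_T τ (k+1) l + c^0 * stmt7_T τ 0 l :=
    Finset.sum_range_succ' _ _
  have top : ∑ k ∈ range (l+2), c^k * stmt7_T τ k l = stmt7_E τ c l := by
    rw [Finset.sum_range_succ, stmt7_T_vanish τ hτ0 (l+1) l (by omega), mul_zero, add_zero]
    rfl
  have Tzero : stmt7_T τ 0 l = (if l = 0 then 1 else 0) := rfl
  have redo : ∑ k ∈ range (l+1), c * (c^k * stmt7_T τ (k+1) l)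
      = ∑ k ∈ range (l+1), c^(k+1) * stmt7_T τ (k+1) l :=
    Finset.sum_congr rfl fun k _ => by ring
  rw [redo]
  rw [top, Tzero] at expand
  simp only [pow_zero, one_mul] at expand
  linarith [expand]

lemma stmt7_E_sum_le (hτ : ∀ j, 0 ≤ τ j) (hτ0 : τ 0 = 0) (hc : 0 ≤ c) (b : ℝ)
    (hb : ∀ M, ∑ j ∈ range M, τ j ≤ b) (hcb : c * b ≤ 1/2) :
    ∀ M, ∑ n ∈ range M, stmt7_E τ c n ≤ 2 := by
  have hb0 : 0 ≤ b := le_trans (by simp) (hb 0)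
  have hcb0 : 0 ≤ c * b := mul_nonneg hc hb0
  have geo : ∀ M : ℕ, ∑ k ∈ range M, (c*b)^k ≤ 2 := by
    intro M
    induction M with
    | zero => norm_num
    | succ M ihM =>
      rw [geom_sum_succ]
      nlinarith [ihM]
  intro M
  have pad : ∀ n ∈ range M, stmt7_E τ c n = ∑ k ∈ range M, c^k * stmt7_T τ k n := by
    intro n hn
    rw [stmt7_E]
    apply Finset.sum_subset (Finset.range_subset_range.mpr (by have := mem_range.mp hn; omega))
    intro k _ hk
    have : n < k := by simp only [mem_range] at hk ⊢; omega
    rw [stmt7_T_vanish τ hτ0 k n this, mul_zero]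
  rw [Finset.sum_congr rfl pad, Finset.sum_comm]
  have bound : ∀ k ∈ range M, ∑ n ∈ range M, c^k * stmt7_T τ k n ≤ (c*b)^k := by
    intro k _
    rw [← Finset.mul_sum]
    calc c^k * ∑ n ∈ range M, stmt7_T τ k n ≤ c^k * b^k := by
          apply mul_le_mul_of_nonneg_left (stmt7_T_sum_le τ hτ b hb k M) (by positivity)
      _ = (c*b)^k := by rw [mul_pow]
  calc ∑ k ∈ range M, ∑ n ∈ range M, c^k * stmt7_T τ k n
      ≤ ∑ k ∈ range M, (c*b)^k := Finset.sum_le_sum bound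
    _ ≤ 2 := geo M

end


lemma stmt7_pow_bound : ∀ (j : ℕ) (δ : ℝ), 0 ≤ δ → δ ≤ 1 → (1+δ)^j ≤ 1 + δ * j * 2^j := by
  intro j
  induction j with
  | zero => intro δ h0 h1; norm_num
  | succ j ih =>
    intro δ h0 h1
    have hj := ih δ h0 h1
    have h2j : (1:ℝ) ≤ 2^j := by exact_mod_cast Nat.one_le_two_pow (n := j)
    have key : (1+δ)^(j+1) ≤ 1 + δ * ((j:ℝ)+1) * 2^(j+1) := calc (1+δ)^(j+1) = (1+δ)^j * (1+δ) := by ring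
      _ ≤ (1 + δ * j * 2^j) * (1+δ) := by
          apply mul_le_mul_of_nonneg_right hj (by linarith)
      _ = 1 + δ * (1 + j * 2^j + δ * j * 2^j) := by ring
      _ ≤ 1 + δ * (((j:ℝ)+1) * 2^(j+1)) := by
          have hin : 1 + (j:ℝ) * 2^j + δ * (j:ℝ) * 2^j ≤ ((j:ℝ)+1) * 2^(j+1) := by
            have e1 : ((j:ℝ)+1) * 2^(j+1) = 2*(j:ℝ)*2^j + 2*2^j := by ring
            have e2 : δ * (j:ℝ) * 2^j ≤ (j:ℝ) * 2^j := by
              have : (0:ℝ) ≤ (j:ℝ) * 2^j := by positivity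
              nlinarith
            nlinarith [Nat.cast_nonneg (α := ℝ) j, h2j]
          have := mul_le_mul_of_nonneg_left hin h0
          nlinarith [this]
      _ = 1 + δ * ((j:ℝ)+1) * 2^(j+1) := by ring
    push_cast
    exact key

lemma stmt7_conv_comm (a b : ℕ → ℝ) (n : ℕ) :
    ∑ j ∈ range (n+1), a j * b (n-j) = ∑ j ∈ range (n+1), a (n-j) * b j := by
  rw [← Finset.sum_range_reflect (fun j => a (n-j) * b j) (n+1)]
  apply Finset.sum_congr rfl
  intro j hj
  have hjn : j ≤ n := by have := mem_range.mp hj; omega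
  have h1 : n + 1 - 1 - j = n - j := by omega
  have h2 : n - (n - j) = j := by omega
  rw [h1, h2]

lemma stmt7_exchange (a u v : ℕ → ℝ) (n : ℕ) :
    ∑ j ∈ range (n+1), a j * (∑ m ∈ range ((n-j)+1), u m * v ((n-j)-m))
      = ∑ m ∈ range (n+1), u m * (∑ j ∈ range ((n-m)+1), a j * v ((n-m)-j)) := by
  have lhs : ∑ j ∈ range (n+1), a j * (∑ m ∈ range ((n-j)+1), u m * v ((n-j)-m))
      = ∑ j ∈ range (n+1), ∑ m ∈ range (n+1-j), a j * (u m * v ((n-j)-m)) := by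
    apply Finset.sum_congr rfl
    intro j hj
    have hjn : j ≤ n := by have := mem_range.mp hj; omega
    rw [Finset.mul_sum]
    have : (n-j)+1 = n+1-j := by omega
    rw [this]
  have rhs : ∑ m ∈ range (n+1), u m * (∑ j ∈ range ((n-m)+1), a j * v ((n-m)-j))
      = ∑ m ∈ range (n+1), ∑ j ∈ range (n+1-m), a j * (u m * v ((n-j)-m)) := by
    apply Finset.sum_congr rfl
    intro m hm
    have hmn : m ≤ n := by have := mem_range.mp hm; omega
    rw [Finset.mul_sum]
    have h1 : (n-m)+1 = n+1-m := by omega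
    rw [h1]
    apply Finset.sum_congr rfl
    intro j hj
    have hjm : j < n+1-m := mem_range.mp hj
    have h2 : (n-m)-j = (n-j)-m := by omega
    rw [h2]; ring
  rw [lhs, rhs, stmt7_swap (fun j m => a j * (u m * v ((n-j)-m))) n]

lemma stmt7_choose_le : ∀ (e n : ℕ), Nat.choose (n+e) e ≤ (n+1)^e := by
  intro e
  induction e with
  | zero => intro n; simp
  | succ e ihe =>
    intro n
    induction n with
    | zero => simp
    | succ n ihn =>
      have pascal : Nat.choose (n+1+(e+1)) (e+1)
          = Nat.choose (n+(e+1)) e + Nat.choose (n+(e+1)) (e+1) := by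
        have h1 : n+1+(e+1) = (n+(e+1))+1 := by omega
        rw [h1]
        exact Nat.choose_succ_succ (n+(e+1)) e
      have t1 : Nat.choose (n+(e+1)) e = Nat.choose ((n+1)+e) e := by congr 1; omega
      have b1 : Nat.choose (n+(e+1)) e ≤ (n+2)^e := by
        rw [t1]
        calc Nat.choose ((n+1)+e) e ≤ ((n+1)+1)^e := ihe (n+1)
          _ = (n+2)^e := by congr 1
      have b2 : Nat.choose (n+(e+1)) (e+1) ≤ (n+1)^(e+1) := ihn
      calc Nat.choose (n+1+(e+1)) (e+1) = _ := pascal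
        _ ≤ (n+2)^e + (n+1)^(e+1) := Nat.add_le_add b1 b2
        _ ≤ (n+2)^e + (n+1) * (n+2)^e := by
            have : (n+1)^(e+1) ≤ (n+1) * (n+2)^e := by
              rw [pow_succ']
              exact Nat.mul_le_mul_left _ (Nat.pow_le_pow_left (by omega) e)
            omega
        _ = (n+2)^(e+1) := by ring


lemma stmt7_polya (f : ℕ → ℝ) (N e : ℕ) (ε δ K : ℝ)
    (hε : 0 < ε) (hδ0 : 0 ≤ δ) (he : 1 ≤ e)
    (hK : ∑ j ∈ range (N+1), |f j| * (1+δ)^j ≤ K)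
    (hKe : K * (N:ℝ)^2 ≤ (ε/8) * e)
    (hS : ∀ n : ℕ, (3*ε/4) ≤ ∑ j ∈ range (min n N + 1), f j * ((n:ℝ)/((n:ℝ)+e) * (1+δ))^j) :
    ∀ n : ℕ, (ε/2) * ((Nat.choose (n+e) e : ℝ) * (1/(1+δ))^n)
      ≤ ∑ j ∈ range (n+1), (if j ≤ N then f j else 0)
          * ((Nat.choose ((n-j)+e) e : ℝ) * (1/(1+δ))^(n-j)) := by
  intro n
  set ρ : ℝ := 1/(1+δ) with hρ
  have hδ1 : (0:ℝ) < 1 + δ := by linarith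
  have hρ0 : 0 < ρ := by rw [hρ]; positivity
  have he1 : (1:ℝ) ≤ (e:ℝ) := by exact_mod_cast he
  have hne : (0:ℝ) < (n:ℝ) + e := by positivity
  have hK0 : 0 ≤ K := le_trans (Finset.sum_nonneg fun j _ => by positivity) hK
  set C : ℝ := (Nat.choose (n+e) e : ℝ) with hC
  have hC0 : 0 ≤ C := by positivity
  set M := min n N with hM
  set x : ℝ := (n:ℝ)/((n:ℝ)+e) with hx
  set y : ℝ := x * (1+δ) with hy
  have hx0 : 0 ≤ x := by positivity
  -- step 1 : unpad the sum
  have step1 : ∑ j ∈ range (n+1), (if j ≤ N then f j else 0)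
        * ((Nat.choose ((n-j)+e) e : ℝ) * ρ^(n-j))
      = ∑ j ∈ range (M+1), f j * ((Nat.choose ((n-j)+e) e : ℝ) * ρ^(n-j)) := by
    rw [← Finset.sum_subset (Finset.range_subset_range.mpr (by omega : M + 1 ≤ n + 1))]
    · apply Finset.sum_congr rfl
      intro j hj
      have hjM : j ≤ M := by have := mem_range.mp hj; omega
      rw [if_pos (by omega : j ≤ N)]
    · intro j hjn hjM
      have h2 : ¬ (j ≤ N) := by
        have := mem_range.mp hjn
        simp only [mem_range] at hjM; omega
      rw [if_neg h2, zero_mul]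
  rw [step1]
  -- step 2 : per-term bound
  have key : ∀ j ∈ range (M+1),
      (f j * y^j - |f j| * (1+δ)^j * ((N:ℝ)^2/((n:ℝ)+e))) * (C * ρ^n)
        ≤ f j * ((Nat.choose ((n-j)+e) e : ℝ) * ρ^(n-j)) := by
    intro j hj
    have hjn : j ≤ n := by have := mem_range.mp hj; omega
    have hjN : j ≤ N := by have := mem_range.mp hj; omega
    set k := n - j with hk
    have hjk : j + k = n := by omega
    set Ck : ℝ := (Nat.choose (k+e) e : ℝ) with hCk
    have hCk0 : 0 ≤ Ck := by positivity
    have hA := stmt7_A e j k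
    have hB := stmt7_B e j k
    rw [hjk] at hA hB
    have hAc : Ck * ((n:ℝ)+e)^j ≤ C * (n:ℝ)^j := by
      rw [hC, hCk]; exact_mod_cast hA
    have hBc : C * (n:ℝ)^j * ((n:ℝ)+e)
        ≤ Ck * ((n:ℝ)+e)^(j+1) + (j:ℝ)^2 * C * ((n:ℝ)+e)^j := by
      rw [hC, hCk]; exact_mod_cast hB
    have hpow : (0:ℝ) < ((n:ℝ)+e)^j := by positivity
    have hxj : C * x^j = C * (n:ℝ)^j / ((n:ℝ)+e)^j := by
      rw [hx, div_pow]; ring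
    have hlow : Ck ≤ C * x^j := by
      rw [hxj, le_div_iff₀ hpow]
      linarith [hAc]
    have hup : C * x^j ≤ Ck + (j:ℝ)^2/((n:ℝ)+e) * C := by
      rw [hxj, div_le_iff₀ hpow]
      have h2 : C * (n:ℝ)^j * ((n:ℝ)+e) ≤ (Ck + (j:ℝ)^2/((n:ℝ)+e) * C) * ((n:ℝ)+e)^j * ((n:ℝ)+e) := by
        have expand : (Ck + (j:ℝ)^2/((n:ℝ)+e) * C) * ((n:ℝ)+e)^j * ((n:ℝ)+e)
            = Ck * ((n:ℝ)+e)^(j+1) + (j:ℝ)^2 * C * ((n:ℝ)+e)^j := by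
          field_simp; ring
        rw [expand]; linarith [hBc]
      exact le_of_mul_le_mul_right h2 hne
    -- powers of ρ
    have hρk : ρ^(n-j) = ρ^n * (1+δ)^j := by
      have h1 : ρ^n = ρ^j * ρ^k := by rw [← pow_add, hjk]
      have h2 : ρ^j * (1+δ)^j = 1 := by
        rw [← mul_pow, hρ]
        field_simp
        simp
      calc ρ^(n-j) = ρ^k := by rw [hk]
        _ = (ρ^j * (1+δ)^j) * ρ^k := by rw [h2, one_mul]
        _ = ρ^n * (1+δ)^j := by rw [h1]; ring
    -- core inequality without ρ^n and (1+δ)^j factors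
    have hcore : f j * x^j * C - |f j| * ((N:ℝ)^2/((n:ℝ)+e)) * C ≤ f j * Ck := by
      have h1 : f j * (C * x^j - Ck) ≤ |f j| * (C * x^j - Ck) :=
        mul_le_mul_of_nonneg_right (le_abs_self _) (by linarith [hlow])
      have h1' : f j * x^j * C - f j * Ck ≤ |f j| * (C * x^j - Ck) := by
        have heq : f j * (C * x^j - Ck) = f j * x^j * C - f j * Ck := by ring
        linarith [h1, heq.ge, heq.le]
      have h2 : |f j| * (C * x^j - Ck) ≤ |f j| * ((j:ℝ)^2/((n:ℝ)+e) * C) :=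
        mul_le_mul_of_nonneg_left (by linarith [hup]) (abs_nonneg _)
      have hjr : (j:ℝ) ≤ (N:ℝ) := by exact_mod_cast hjN
      have hj2 : ((j:ℝ))^2 ≤ ((N:ℝ))^2 := by nlinarith [Nat.cast_nonneg (α := ℝ) j]
      have hjN2 : ((j:ℝ))^2/((n:ℝ)+e) * C ≤ ((N:ℝ))^2/((n:ℝ)+e) * C := by
        apply mul_le_mul_of_nonneg_right _ hC0
        exact (div_le_div_iff_of_pos_right hne).mpr hj2
      have h3 : |f j| * ((j:ℝ)^2/((n:ℝ)+e) * C) ≤ |f j| * (((N:ℝ))^2/((n:ℝ)+e) * C) :=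
        mul_le_mul_of_nonneg_left hjN2 (abs_nonneg _)
      have hbr : |f j| * (((N:ℝ))^2/((n:ℝ)+e) * C) = |f j| * ((N:ℝ)^2/((n:ℝ)+e)) * C := by
        ring
      linarith [h1', h2, h3, hbr.le, hbr.ge]
    -- assemble
    have hpos1 : (0:ℝ) ≤ (1+δ)^j * ρ^n := by positivity
    have hyj : y^j = x^j * (1+δ)^j := by rw [hy, mul_pow]
    calc (f j * y^j - |f j| * (1+δ)^j * ((N:ℝ)^2/((n:ℝ)+e))) * (C * ρ^n)
        = (f j * x^j * C - |f j| * ((N:ℝ)^2/((n:ℝ)+e)) * C) * ((1+δ)^j * ρ^n) := by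
          rw [hyj]; ring
      _ ≤ (f j * Ck) * ((1+δ)^j * ρ^n) := mul_le_mul_of_nonneg_right hcore hpos1
      _ = f j * ((Nat.choose ((n-j)+e) e : ℝ) * ρ^(n-j)) := by
          rw [hρk, ← hCk]; ring
  -- step 3 : sum up
  have sum_ge : ∑ j ∈ range (M+1),
      (f j * y^j - |f j| * (1+δ)^j * ((N:ℝ)^2/((n:ℝ)+e))) * (C * ρ^n)
      ≤ ∑ j ∈ range (M+1), f j * ((Nat.choose ((n-j)+e) e : ℝ) * ρ^(n-j)) :=
    Finset.sum_le_sum key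
  have hKM : ∑ j ∈ range (M+1), |f j| * (1+δ)^j ≤ K := by
    refine le_trans (Finset.sum_le_sum_of_subset_of_nonneg
      (Finset.range_subset_range.mpr (by omega : M + 1 ≤ N + 1)) ?_) hK
    intro j _ _; positivity
  have hSn := hS n
  rw [← hM] at hSn
  have hyx : ∀ j, ((n:ℝ)/((n:ℝ)+e) * (1+δ))^j = y^j := by intro j; rw [hy, hx]
  have hSn' : (3*ε/4) ≤ ∑ j ∈ range (M+1), f j * y^j := by
    refine le_trans hSn (le_of_eq (Finset.sum_congr rfl fun j _ => by rw [hyx j]))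
  have htail : ((N:ℝ)^2/((n:ℝ)+e)) * (∑ j ∈ range (M+1), |f j| * (1+δ)^j) ≤ ε/8 := by
    have h1 : ((N:ℝ)^2/((n:ℝ)+e)) * (∑ j ∈ range (M+1), |f j| * (1+δ)^j)
        ≤ ((N:ℝ)^2/((n:ℝ)+e)) * K := by
      apply mul_le_mul_of_nonneg_left hKM (by positivity)
    refine le_trans h1 ?_
    rw [div_mul_eq_mul_div, div_le_iff₀ hne]
    have hee : (ε/8) * e ≤ (ε/8) * ((n:ℝ)+e) := by
      apply mul_le_mul_of_nonneg_left _ (by linarith)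
      have : (0:ℝ) ≤ (n:ℝ) := Nat.cast_nonneg n
      linarith
    calc (N:ℝ)^2 * K = K * (N:ℝ)^2 := by ring
      _ ≤ (ε/8) * e := hKe
      _ ≤ (ε/8) * ((n:ℝ)+e) := hee
      _ = ε/8 * ((n:ℝ)+e) := rfl
  have expand2 : ∑ j ∈ range (M+1),
      (f j * y^j - |f j| * (1+δ)^j * ((N:ℝ)^2/((n:ℝ)+e))) * (C * ρ^n)
      = ((∑ j ∈ range (M+1), f j * y^j)
          - ((N:ℝ)^2/((n:ℝ)+e)) * (∑ j ∈ range (M+1), |f j| * (1+δ)^j)) * (C * ρ^n) := by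
    have hper : ∀ j ∈ range (M+1),
        (f j * y^j - |f j| * (1+δ)^j * ((N:ℝ)^2/((n:ℝ)+e))) * (C * ρ^n)
        = f j * y^j * (C * ρ^n)
          - ((N:ℝ)^2/((n:ℝ)+e)) * (|f j| * (1+δ)^j) * (C * ρ^n) := by
      intro j _; ring
    rw [Finset.sum_congr rfl hper, Finset.sum_sub_distrib, sub_mul, ← Finset.sum_mul]
    congr 1
    rw [← Finset.sum_mul, Finset.mul_sum]
  have hCρ : (0:ℝ) ≤ C * ρ^n := by positivity
  have final : (ε/2) * (C * ρ^n) ≤ ((∑ j ∈ range (M+1), f j * y^j)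
      - ((N:ℝ)^2/((n:ℝ)+e)) * (∑ j ∈ range (M+1), |f j| * (1+δ)^j)) * (C * ρ^n) := by
    apply mul_le_mul_of_nonneg_right _ hCρ
    have : (3*ε/4) - ε/8 ≥ ε/2 := by linarith
    linarith [hSn', htail]
  calc (ε/2) * (C * ρ^n) ≤ _ := final
    _ = ∑ j ∈ range (M+1),
        (f j * y^j - |f j| * (1+δ)^j * ((N:ℝ)^2/((n:ℝ)+e))) * (C * ρ^n) := expand2.symm
    _ ≤ _ := sum_ge


lemma stmt7_S (f : ℕ → ℝ) (N e : ℕ) (ε δ A : ℝ)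
    (hε : 0 < ε) (hδ0 : 0 ≤ δ)
    (hP : ∀ y : ℝ, 0 ≤ y → y ≤ 1+δ → 3*ε/4 ≤ ∑ j ∈ range (N+1), f j * y^j)
    (hf0 : ε ≤ f 0)
    (hA : ∑ j ∈ range (N+1), |f j| ≤ A)
    (heN : ((1:ℝ)+δ) * N ≤ e)
    (heA : A * (((1:ℝ)+δ) * N) ≤ (ε/8) * e)
    (he : 1 ≤ e) :
    ∀ n : ℕ, (3*ε/4) ≤ ∑ j ∈ range (min n N + 1), f j * ((n:ℝ)/((n:ℝ)+e) * (1+δ))^j := by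
  intro n
  have he1 : (1:ℝ) ≤ (e:ℝ) := by exact_mod_cast he
  have hne : (0:ℝ) < (n:ℝ) + e := by positivity
  set y : ℝ := (n:ℝ)/((n:ℝ)+e) * (1+δ) with hy
  have hy0 : 0 ≤ y := by positivity
  have hA0 : 0 ≤ A := le_trans (Finset.sum_nonneg fun j _ => abs_nonneg _) hA
  rcases le_or_gt N n with hNn | hnN
  · -- n ≥ N : full polynomial, y ∈ [0, 1+δ]
    have hmin : min n N = N := min_eq_right hNn
    rw [hmin]
    have hyle : y ≤ 1 + δ := by
      rw [hy]
      have hx1 : (n:ℝ)/((n:ℝ)+e) ≤ 1 := by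
        rw [div_le_one hne]; linarith
      nlinarith [hx1]
    exact hP y hy0 hyle
  · -- n < N : short sum, y small
    have hmin : min n N = n := min_eq_left (le_of_lt hnN)
    rw [hmin]
    have hnN' : (n:ℝ) ≤ (N:ℝ) := by exact_mod_cast le_of_lt hnN
    have hN0 : (0:ℝ) ≤ (N:ℝ) := Nat.cast_nonneg N
    -- y ≤ (1+δ)*N/(n+e) ≤ (1+δ)*N/e ≤ 1
    have hyb : y * ((n:ℝ)+e) = (n:ℝ) * (1+δ) := by
      rw [hy]; field_simp
    have hy1 : y ≤ 1 := by
      rw [← mul_le_mul_iff_of_pos_right hne, hyb, one_mul]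
      have h1 : (n:ℝ)*(1+δ) ≤ (N:ℝ)*(1+δ) := by nlinarith
      have h2 : (N:ℝ)*(1+δ) ≤ (e:ℝ) := by nlinarith [heN]
      have h3 : (e:ℝ) ≤ (n:ℝ)+e := by
        have : (0:ℝ) ≤ (n:ℝ) := Nat.cast_nonneg n
        linarith
      linarith
    have hyA : A * y ≤ ε/8 := by
      rw [← mul_le_mul_iff_of_pos_right hne]
      have expand : A * y * ((n:ℝ)+e) = A * (y * ((n:ℝ)+e)) := by ring
      rw [expand, hyb]
      have h1 : A * ((n:ℝ)*(1+δ)) ≤ A * ((N:ℝ)*(1+δ)) := by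
        apply mul_le_mul_of_nonneg_left _ hA0
        nlinarith
      have h2 : A * ((N:ℝ)*(1+δ)) ≤ (ε/8)*e := by nlinarith [heA]
      have h3 : (ε/8)*e ≤ ε/8*((n:ℝ)+e) := by nlinarith [Nat.cast_nonneg (α := ℝ) n, hε]
      linarith
    -- lower bound the short sum
    have split : ∑ j ∈ range (n+1), f j * y^j
        = (∑ j ∈ range n, f (j+1) * y^(j+1)) + f 0 * y^0 :=
      Finset.sum_range_succ' (fun j => f j * y^j) n
    have tailbound : -(A * y) ≤ ∑ j ∈ range n, f (j+1) * y^(j+1) := by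
      have per : ∀ j ∈ range n, -(|f (j+1)| * y) ≤ f (j+1) * y^(j+1) := by
        intro j _
        have h1 : y^(j+1) ≤ y := by
          calc y^(j+1) = y * y^j := by ring
            _ ≤ y * 1 := by
                apply mul_le_mul_of_nonneg_left _ hy0
                exact pow_le_one₀ hy0 hy1
            _ = y := by ring
        have h2 : f (j+1) * y^(j+1) ≥ -(|f (j+1)| * y^(j+1)) := by
          have := neg_abs_le (f (j+1))
          nlinarith [pow_nonneg hy0 (j+1)]
        have h3 : |f (j+1)| * y^(j+1) ≤ |f (j+1)| * y :=
          mul_le_mul_of_nonneg_left h1 (abs_nonneg _)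
        linarith
      have hsum := Finset.sum_le_sum per
      have hAsum : ∑ j ∈ range n, |f (j+1)| ≤ A := by
        have h1 : ∑ j ∈ range n, |f (j+1)| ≤ ∑ j ∈ range (N+1), |f j| := by
          have h2 : ∑ j ∈ range (n+1), |f j|
              = (∑ j ∈ range n, |f (j+1)|) + |f 0| :=
            Finset.sum_range_succ' (fun j => |f j|) n
          have h3 : ∑ j ∈ range (n+1), |f j| ≤ ∑ j ∈ range (N+1), |f j| := by
            apply Finset.sum_le_sum_of_subset_of_nonneg
              (Finset.range_subset_range.mpr (by omega))
            intro j _ _; exact abs_nonneg _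
          have h4 : (0:ℝ) ≤ |f 0| := abs_nonneg _
          linarith
        linarith [hA]
      calc -(A * y) ≤ -((∑ j ∈ range n, |f (j+1)|) * y) := by
            have := mul_le_mul_of_nonneg_right hAsum hy0
            linarith
        _ = ∑ j ∈ range n, -(|f (j+1)| * y) := by
            rw [Finset.sum_neg_distrib, ← Finset.sum_mul]
        _ ≤ _ := hsum
    have hy00 : y^0 = 1 := pow_zero y
    have hAy : A * y ≤ ε/8 := hyA
    calc (3*ε/4) ≤ f 0 - ε/8 := by linarith
      _ ≤ f 0 * y^0 + ∑ j ∈ range n, f (j+1) * y^(j+1) := by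
          rw [hy00, mul_one]
          linarith [tailbound, hAy]
      _ = ∑ j ∈ range (n+1), f j * y^j := by rw [split]; ring


/-- If `f` is in the Wiener algebra with real coefficients and `f(t) > 0` on `[0,1]`,
then there is `g` in the Wiener algebra with real coefficients such that `g ≻ 0` and
`fg ≻ 0`. -/
theorem stmt_7 (f : ℕ → ℝ) (hf : Summable fun n => |f n|)
    (hpos : ∀ t ∈ Set.Icc (0 : ℝ) 1, 0 < ∑' n : ℕ, f n * t ^ n) :
    ∃ g : ℕ → ℝ, (Summable fun n => |g n|) ∧
      (∀ n, 0 ≤ g n) ∧ 0 < g 0 ∧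
      (∀ n, 0 ≤ ∑ j ∈ Finset.range (n + 1), f j * g (n - j)) ∧
      0 < f 0 * g 0 := by
  classical
  set F : ℝ → ℝ := fun t => ∑' n : ℕ, f n * t ^ n with hFdef
  -- continuity of F on [0,1]
  have hbound : ∀ (n : ℕ), ∀ t ∈ Set.Icc (0:ℝ) 1, ‖f n * t ^ n‖ ≤ |f n| := by
    intro n t ht
    obtain ⟨ht0, ht1⟩ := ht
    rw [Real.norm_eq_abs, abs_mul]
    have h1 : |t ^ n| ≤ 1 := by
      rw [abs_pow]
      apply pow_le_one₀ (abs_nonneg t)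
      rw [abs_of_nonneg ht0]; exact ht1
    nlinarith [abs_nonneg (f n), abs_nonneg (t^n)]
  have hcont : ContinuousOn F (Set.Icc (0:ℝ) 1) := by
    have hTU := tendstoUniformlyOn_tsum hf hbound
    apply hTU.continuousOn
    apply Filter.Frequently.of_forall
    intro s
    exact (continuous_finset_sum s fun i _ =>
      (continuous_const.mul (continuous_pow i))).continuousOn
  obtain ⟨t₀, ht₀, hmin⟩ := isCompact_Icc.exists_isMinOn
    (Set.nonempty_Icc.mpr zero_le_one) hcont
  set ε : ℝ := F t₀ with hεdef
  have hε : 0 < ε := hpos t₀ ht₀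
  have hεF : ∀ t ∈ Set.Icc (0:ℝ) 1, ε ≤ F t := fun t ht => isMinOn_iff.mp hmin t ht
  have hF0 : F 0 = f 0 := by
    rw [hFdef]
    simp only
    rw [tsum_eq_single 0 (fun b hb => by simp [zero_pow hb])]
    norm_num
  have hf0 : ε ≤ f 0 := by
    have := hεF 0 ⟨le_refl 0, zero_le_one⟩
    rwa [hF0] at this
  -- tail index N
  have hsummtail : ∀ l : ℕ, Summable (fun j => |f (j + l)|) :=
    fun l => (summable_nat_add_iff l).mpr hf
  have htails : Filter.Tendsto (fun l => ∑' j : ℕ, |f (j + l)|) Filter.atTop (nhds 0) := by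
    have heq : ∀ l : ℕ, ∑' j : ℕ, |f (j + l)| = (∑' n, |f n|) - ∑ i ∈ Finset.range l, |f i| := by
      intro l
      have := Summable.sum_add_tsum_nat_add (f := fun n => |f n|) l hf
      linarith
    rw [funext heq]
    have h1 : Filter.Tendsto (fun l : ℕ => ∑ i ∈ Finset.range l, |f i|)
        Filter.atTop (nhds (∑' n, |f n|)) := hf.hasSum.tendsto_sum_nat
    have h2 := Filter.Tendsto.sub (tendsto_const_nhds
      (x := ∑' n, |f n|) (f := Filter.atTop (α := ℕ))) h1
    simpa using h2
  obtain ⟨N, hN⟩ : ∃ N : ℕ, ∑' j : ℕ, |f (j + (N+1))| ≤ ε/8 := by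
    have hev := htails.eventually (gt_mem_nhds (show (0:ℝ) < ε/8 by positivity))
    obtain ⟨m, hm⟩ := Filter.eventually_atTop.mp hev
    exact ⟨m, le_of_lt (hm (m+1) (by omega))⟩
  -- polynomial approximation
  set P : ℝ → ℝ := fun y => ∑ j ∈ Finset.range (N+1), f j * y ^ j with hPdef
  have hFP : ∀ y ∈ Set.Icc (0:ℝ) 1, |F y - P y| ≤ ε/8 := by
    intro y hy
    have hsumy : Summable (fun n => f n * y ^ n) := by
      apply Summable.of_abs
      apply Summable.of_nonneg_of_le (fun n => abs_nonneg _) _ hf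
      intro n
      exact hbound n y hy
    have hsplit := Summable.sum_add_tsum_nat_add (f := fun n => f n * y ^ n) (N+1) hsumy
    have hdiff : F y - P y = ∑' j : ℕ, f (j + (N+1)) * y ^ (j + (N+1)) := by
      rw [hFdef, hPdef]
      simp only
      linarith [hsplit]
    rw [hdiff]
    have hsumabs : Summable (fun j : ℕ => |f (j + (N+1)) * y ^ (j + (N+1))|) := by
      apply Summable.of_nonneg_of_le (fun j => abs_nonneg _) _ (hsummtail (N+1))
      intro j
      exact hbound (j + (N+1)) y hy
    have habs : |∑' j : ℕ, f (j + (N+1)) * y ^ (j + (N+1))|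
        ≤ ∑' j : ℕ, |f (j + (N+1)) * y ^ (j + (N+1))| := by
      have := norm_tsum_le_tsum_norm (f := fun j : ℕ => f (j + (N+1)) * y ^ (j + (N+1)))
        (hsumabs.congr fun j => (Real.norm_eq_abs _).symm)
      simpa only [Real.norm_eq_abs] using this
    have hcomp : ∑' j : ℕ, |f (j + (N+1)) * y ^ (j + (N+1))| ≤ ∑' j : ℕ, |f (j + (N+1))| := by
      apply Summable.tsum_le_tsum _ _ (hsummtail (N+1))
      · intro j
        exact hbound (j + (N+1)) y hy
      · apply Summable.of_nonneg_of_le (fun j => abs_nonneg _) _ (hsummtail (N+1))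
        intro j
        exact hbound (j + (N+1)) y hy
    linarith [hN]
  have hP1 : ∀ y ∈ Set.Icc (0:ℝ) 1, 7*ε/8 ≤ P y := by
    intro y hy
    have h1 := hεF y hy
    have h2 := hFP y hy
    have h3 := abs_le.mp h2
    linarith [h3.1, h3.2]
  -- δ and L
  set L : ℝ := ∑ j ∈ Finset.range (N+1), |f j| * (j:ℝ) * 2 ^ j with hLdef
  have hL0 : 0 ≤ L := Finset.sum_nonneg fun j _ => by positivity
  set δ : ℝ := min 1 (ε/(8*(L+1))) with hδdef
  have hδ0 : 0 < δ := lt_min one_pos (by positivity)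
  have hδ1 : δ ≤ 1 := min_le_left _ _
  have hδL : δ * L ≤ ε/8 := by
    have h2 : δ ≤ ε/(8*(L+1)) := min_le_right _ _
    have h3 : δ * L ≤ (ε/(8*(L+1))) * L := mul_le_mul_of_nonneg_right h2 hL0
    have h4 : (ε/(8*(L+1))) * L ≤ ε/8 := by
      rw [div_mul_eq_mul_div, div_le_div_iff₀ (by positivity) (by norm_num)]
      nlinarith
    linarith
  have hPpos : ∀ y : ℝ, 0 ≤ y → y ≤ 1+δ → 3*ε/4 ≤ P y := by
    intro y hy0 hyd
    rcases le_or_gt y 1 with hy1 | hy1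
    · have := hP1 y ⟨hy0, hy1⟩
      linarith
    · have hP1' : 7*ε/8 ≤ P 1 := hP1 1 ⟨zero_le_one, le_refl 1⟩
      have hdiff : -(δ * L) ≤ P y - P 1 := by
        have hper : ∀ j ∈ Finset.range (N+1),
            -(δ * (|f j| * (j:ℝ) * 2 ^ j)) ≤ f j * y ^ j - f j * 1 ^ j := by
          intro j _
          have hyj1 : (1:ℝ) ≤ y ^ j := one_le_pow₀ (le_of_lt hy1)
          have hyjd : y ^ j ≤ (1+δ) ^ j := by
            apply pow_le_pow_left₀ hy0 hyd
          have hpb := stmt7_pow_bound j δ (le_of_lt hδ0) hδ1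
          have h5 : y ^ j - 1 ≤ δ * (j:ℝ) * 2 ^ j := by linarith
          have h6 : f j * (y ^ j - 1) ≥ -(|f j| * (y ^ j - 1)) := by
            have := neg_abs_le (f j)
            nlinarith
          have h7 : |f j| * (y ^ j - 1) ≤ |f j| * (δ * (j:ℝ) * 2 ^ j) :=
            mul_le_mul_of_nonneg_left h5 (abs_nonneg _)
          have h8 : f j * y ^ j - f j * 1 ^ j = f j * (y ^ j - 1) := by ring
          rw [h8]
          nlinarith [h6, h7]
        have hsum := Finset.sum_le_sum hper
        have hL1 : ∑ j ∈ Finset.range (N+1), -(δ * (|f j| * (j:ℝ) * 2 ^ j)) = -(δ * L) := by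
          rw [hLdef, Finset.sum_neg_distrib, Finset.mul_sum]
        have hL2 : ∑ j ∈ Finset.range (N+1), (f j * y ^ j - f j * 1 ^ j) = P y - P 1 := by
          rw [hPdef, Finset.sum_sub_distrib]
        rw [hL1, hL2] at hsum
        exact hsum
      linarith
  -- constants A K e
  set A : ℝ := ∑ j ∈ Finset.range (N+1), |f j| with hAdef
  have hA0 : 0 ≤ A := Finset.sum_nonneg fun j _ => abs_nonneg _
  set K : ℝ := ∑ j ∈ Finset.range (N+1), |f j| * (1+δ) ^ j with hKdef
  have hK0 : 0 ≤ K := Finset.sum_nonneg fun j _ => by positivity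
  obtain ⟨e, hege⟩ := exists_nat_ge (max (max (1:ℝ) ((1+δ)*(N:ℝ)))
    (max ((K*(N:ℝ)^2)/(ε/8)) ((A*((1+δ)*(N:ℝ)))/(ε/8))))
  have he1R : (1:ℝ) ≤ (e:ℝ) :=
    le_trans (le_trans (le_max_left _ _) (le_max_left _ _)) hege
  have he : 1 ≤ e := by exact_mod_cast he1R
  have heN : (1+δ)*(N:ℝ) ≤ (e:ℝ) :=
    le_trans (le_trans (le_max_right _ _) (le_max_left _ _)) hege
  have hKe : K*(N:ℝ)^2 ≤ (ε/8)*(e:ℝ) := by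
    have h1 : (K*(N:ℝ)^2)/(ε/8) ≤ (e:ℝ) :=
      le_trans (le_trans (le_max_left _ _) (le_max_right _ _)) hege
    rw [div_le_iff₀ (by positivity)] at h1
    linarith
  have heA : A*((1+δ)*(N:ℝ)) ≤ (ε/8)*(e:ℝ) := by
    have h1 : (A*((1+δ)*(N:ℝ)))/(ε/8) ≤ (e:ℝ) :=
      le_trans (le_trans (le_max_right _ _) (le_max_right _ _)) hege
    rw [div_le_iff₀ (by positivity)] at h1
    linarith
  -- the Polya bound
  have hS := stmt7_S f N e ε δ A hε (le_of_lt hδ0) hPpos hf0 (le_refl A) heN heA he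
  have hpolya := stmt7_polya f N e ε δ K hε (le_of_lt hδ0) he (le_refl K) hKe hS
  -- the tail sequence τ
  set τ : ℕ → ℝ := fun j => if N < j then |f j| else 0 with hτdef
  have hτ : ∀ j, 0 ≤ τ j := by
    intro j
    rw [hτdef]
    by_cases h : N < j
    · simp [h]
    · simp [h]
  have hτ0 : τ 0 = 0 := by
    rw [hτdef]; simp
  have hτsummable : Summable τ := by
    apply Summable.of_nonneg_of_le hτ _ hf
    intro j
    rw [hτdef]
    by_cases h : N < j
    · simp [h]
    · simp [h, abs_nonneg]
  have hτsum : ∀ M, ∑ j ∈ Finset.range M, τ j ≤ ε/8 := by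
    have htsum : ∑' j, τ j ≤ ε/8 := by
      rw [← Summable.sum_add_tsum_nat_add (N+1) hτsummable]
      have hz : ∑ j ∈ Finset.range (N+1), τ j = 0 := by
        apply Finset.sum_eq_zero
        intro j hj
        have : ¬ N < j := by have := Finset.mem_range.mp hj; omega
        rw [hτdef]; simp [this]
      have hid : ∑' j : ℕ, τ (j + (N+1)) = ∑' j : ℕ, |f (j + (N+1))| := by
        apply tsum_congr
        intro j
        rw [hτdef]
        simp [show N < j + (N+1) by omega]
      rw [hz, hid, zero_add]
      exact hN
    intro M
    exact le_trans (Summable.sum_le_tsum (Finset.range M) (fun j _ => hτ j) hτsummable) htsum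
  -- main objects
  set ρ : ℝ := 1/(1+δ) with hρdef
  have hδpos : (0:ℝ) < 1 + δ := by linarith
  have hρ0 : 0 < ρ := by rw [hρdef]; positivity
  have hρ1 : ρ < 1 := by
    rw [hρdef, div_lt_one hδpos]; linarith
  set G : ℕ → ℝ := fun m => (Nat.choose (m+e) e : ℝ) * ρ ^ m with hGdef
  have hG0 : ∀ m, 0 ≤ G m := fun m => by rw [hGdef]; positivity
  set c : ℝ := 2/ε with hcdef
  have hc0 : 0 ≤ c := by rw [hcdef]; positivity
  set E : ℕ → ℝ := stmt7_E τ c with hEdef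
  have hE0 : ∀ m, 0 ≤ E m := fun m => stmt7_E_nonneg τ c hτ hc0 m
  have hE00 : E 0 = 1 := stmt7_E_zero τ c
  set g : ℕ → ℝ := fun n => ∑ m ∈ Finset.range (n+1), G m * E (n-m) with hgdef
  have hg0 : ∀ n, 0 ≤ g n :=
    fun n => Finset.sum_nonneg fun m _ => mul_nonneg (hG0 m) (hE0 _)
  have hg00 : g 0 = 1 := by
    rw [hgdef]
    simp only
    rw [Finset.sum_range_one]
    rw [hGdef]
    simp [hE00, Nat.choose_self]
  -- polya in terms of G
  have hpolyaG : ∀ l : ℕ, (ε/2) * G l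
      ≤ ∑ j ∈ Finset.range (l+1), (if j ≤ N then f j else 0) * G (l-j) := by
    intro l
    have := hpolya l
    rw [hGdef]
    simp only
    rw [hρdef]
    exact this
  -- E recurrence bound
  have hErec : ∀ l : ℕ, ∑ j ∈ Finset.range (l+1), τ j * E (l-j) ≤ (ε/2) * E l := by
    intro l
    have hrec : c * (∑ j ∈ Finset.range (l+1), τ j * E (l-j))
        + (if l = 0 then (1:ℝ) else 0) = E l := stmt7_E_rec τ c hτ0 l
    have hind : (0:ℝ) ≤ (if l = 0 then (1:ℝ) else 0) := by positivity
    have h1 : c * (∑ j ∈ Finset.range (l+1), τ j * E (l-j)) ≤ E l := by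
      linarith [hrec]
    have hc' : (ε/2) * c = 1 := by
      rw [hcdef]; field_simp
    nlinarith [h1, hε, Finset.sum_nonneg (fun j (_ : j ∈ Finset.range (l+1)) =>
      mul_nonneg (hτ j) (hE0 (l-j)))]
  -- conv expression for g with E outside
  have hgl : ∀ l : ℕ, g l = ∑ m ∈ Finset.range (l+1), E m * G (l-m) := by
    intro l
    rw [hgdef]
    simp only
    rw [stmt7_conv_comm G E l]
    apply Finset.sum_congr rfl
    intro m _
    ring
  -- main inequality (i)
  have hgeP : ∀ n : ℕ, (ε/2) * g n
      ≤ ∑ j ∈ Finset.range (n+1), (if j ≤ N then f j else 0) * g (n-j) := by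
    intro n
    have hexp : ∑ j ∈ Finset.range (n+1), (if j ≤ N then f j else 0) * g (n-j)
        = ∑ m ∈ Finset.range (n+1), E m
            * (∑ j ∈ Finset.range ((n-m)+1), (if j ≤ N then f j else 0) * G ((n-m)-j)) := by
      have h1 : ∀ j ∈ Finset.range (n+1), (if j ≤ N then f j else 0) * g (n-j)
          = (if j ≤ N then f j else 0)
             * (∑ m ∈ Finset.range ((n-j)+1), E m * G ((n-j)-m)) := by
        intro j _
        rw [hgl (n-j)]
      rw [Finset.sum_congr rfl h1]
      exact stmt7_exchange (fun j => if j ≤ N then f j else 0) E G n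
    rw [hexp]
    have hper : ∀ m ∈ Finset.range (n+1), E m * ((ε/2) * G (n-m))
        ≤ E m * (∑ j ∈ Finset.range ((n-m)+1), (if j ≤ N then f j else 0) * G ((n-m)-j)) := by
      intro m _
      exact mul_le_mul_of_nonneg_left (hpolyaG (n-m)) (hE0 m)
    have hsum := Finset.sum_le_sum hper
    have heq : ∑ m ∈ Finset.range (n+1), E m * ((ε/2) * G (n-m)) = (ε/2) * g n := by
      rw [hgl n, Finset.mul_sum]
      apply Finset.sum_congr rfl
      intro m _
      ring
    linarith [hsum, heq.le, heq.ge]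
  -- main inequality (ii)
  have hgeT : ∀ n : ℕ, ∑ j ∈ Finset.range (n+1), τ j * g (n-j) ≤ (ε/2) * g n := by
    intro n
    have hexp : ∑ j ∈ Finset.range (n+1), τ j * g (n-j)
        = ∑ m ∈ Finset.range (n+1), G m
            * (∑ j ∈ Finset.range ((n-m)+1), τ j * E ((n-m)-j)) := by
      have h1 : ∀ j ∈ Finset.range (n+1), τ j * g (n-j)
          = τ j * (∑ m ∈ Finset.range ((n-j)+1), G m * E ((n-j)-m)) := by
        intro j _
        rw [hgdef]
      rw [Finset.sum_congr rfl h1]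
      exact stmt7_exchange τ G E n
    rw [hexp]
    have hper : ∀ m ∈ Finset.range (n+1),
        G m * (∑ j ∈ Finset.range ((n-m)+1), τ j * E ((n-m)-j))
        ≤ G m * ((ε/2) * E (n-m)) := by
      intro m _
      exact mul_le_mul_of_nonneg_left (hErec (n-m)) (hG0 m)
    have hsum := Finset.sum_le_sum hper
    have heq : ∑ m ∈ Finset.range (n+1), G m * ((ε/2) * E (n-m)) = (ε/2) * g n := by
      rw [hgdef, Finset.mul_sum]
      apply Finset.sum_congr rfl
      intro m _
      ring
    linarith [hsum, heq.le, heq.ge]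
  -- combine
  have hmain : ∀ n, 0 ≤ ∑ j ∈ Finset.range (n+1), f j * g (n-j) := by
    intro n
    have hsplit : ∀ j ∈ Finset.range (n+1), f j * g (n-j)
        = (if j ≤ N then f j else 0) * g (n-j) + (if N < j then f j else 0) * g (n-j) := by
      intro j _
      by_cases h : j ≤ N
      · simp [h, show ¬ N < j by omega]
      · simp [h, show N < j by omega]
    rw [Finset.sum_congr rfl hsplit, Finset.sum_add_distrib]
    have hR : -(∑ j ∈ Finset.range (n+1), τ j * g (n-j))
        ≤ ∑ j ∈ Finset.range (n+1), (if N < j then f j else 0) * g (n-j) := by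
      rw [← Finset.sum_neg_distrib]
      apply Finset.sum_le_sum
      intro j _
      rw [hτdef]
      by_cases h : N < j
      · simp only [if_pos h]
        have h1 := neg_abs_le (f j)
        have h2 := hg0 (n-j)
        nlinarith
      · simp [h]
    linarith [hgeP n, hgeT n, hR]
  -- summability of G
  have hGsum : Summable G := by
    have habs : ‖ρ‖ < 1 := by rw [Real.norm_eq_abs, abs_of_pos hρ0]; exact hρ1
    have h2 := summable_pow_mul_geometric_of_norm_lt_one e habs
    have h3 : Summable (fun n : ℕ => ((n+1:ℕ):ℝ)^e * ρ^(n+1)) :=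
      (summable_nat_add_iff 1).mpr h2
    have h4 : Summable (fun n : ℕ => ρ⁻¹ * (((n+1:ℕ):ℝ)^e * ρ^(n+1))) := h3.mul_left _
    have h5 : Summable (fun n : ℕ => ((n:ℝ)+1)^e * ρ^n) := by
      apply h4.congr
      intro n
      have hρne : ρ ≠ 0 := ne_of_gt hρ0
      push_cast
      rw [pow_succ]
      field_simp
    apply Summable.of_nonneg_of_le hG0 _ h5
    intro n
    rw [hGdef]
    simp only
    apply mul_le_mul_of_nonneg_right _ (le_of_lt (pow_pos hρ0 n))
    have := stmt7_choose_le e n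
    calc (Nat.choose (n+e) e : ℝ) ≤ ((n+1)^e : ℕ) := by exact_mod_cast this
      _ = ((n:ℝ)+1)^e := by push_cast; ring
  -- summability of E
  have hcb : c * (ε/8) ≤ 1/2 := by
    rw [hcdef]
    rw [div_mul_eq_mul_div, div_le_div_iff₀ hε (by norm_num)]
    linarith
  have hEpartial := stmt7_E_sum_le τ c hτ hτ0 hc0 (ε/8) hτsum hcb
  have hEsum : Summable E := summable_of_sum_range_le hE0 hEpartial
  -- summability of g
  have hgsum : Summable g := by
    apply summable_of_sum_range_le hg0 (c := (∑' m, G m) * 2)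
    intro M
    have htri := stmt7_tri (fun m i => G m * E i) M
    have h1 : ∑ n ∈ Finset.range M, g n
        = ∑ m ∈ Finset.range M, ∑ i ∈ Finset.range (M - m), G m * E i := by
      rw [← htri]
    rw [h1]
    have h2 : ∀ m ∈ Finset.range M, ∑ i ∈ Finset.range (M - m), G m * E i ≤ G m * 2 := by
      intro m _
      rw [← Finset.mul_sum]
      exact mul_le_mul_of_nonneg_left (hEpartial (M - m)) (hG0 m)
    calc ∑ m ∈ Finset.range M, ∑ i ∈ Finset.range (M - m), G m * E i
        ≤ ∑ m ∈ Finset.range M, G m * 2 := Finset.sum_le_sum h2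
      _ = (∑ m ∈ Finset.range M, G m) * 2 := by rw [Finset.sum_mul]
      _ ≤ (∑' m, G m) * 2 := by
          apply mul_le_mul_of_nonneg_right _ (by norm_num)
          exact Summable.sum_le_tsum _ (fun m _ => hG0 m) hGsum
  have hgabs : Summable (fun n => |g n|) :=
    hgsum.congr fun n => (abs_of_nonneg (hg0 n)).symm
  exact ⟨g, hgabs, hg0, by rw [hg00]; norm_num,
    hmain, by rw [hg00, mul_one]; linarith⟩
end

section
/- For a ∈ ℂ not a nonpositive integer, the n-th Taylor coefficient k^a(n) of (1-t)^{-a} equals Γ(n+a)/(Γ(a)Γ(n+1)) = binom(n+a-1, a-1); moreover, if 0 < a ≤ 1 then (n+1)^{a-1}/Γ(a) ≤ k^a(n) ≤ n^{a-1}/Γ(a) for all n ≥ 1. -/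
open Complex Finset Filter Nat
open scoped NNReal ENNReal

private lemma slit_aux {t : ℂ} (ht : t.re < 1) : (1 - t) ∈ Complex.slitPlane := by
  rw [Complex.mem_slitPlane_iff]
  left
  simp only [Complex.sub_re, Complex.one_re]
  linarith

private lemma iteratedDeriv_cpow_aux (a : ℂ) :
    ∀ (n : ℕ) (t : ℂ), t.re < 1 →
      iteratedDeriv n (fun s : ℂ => (1 - s) ^ (-a)) t
        = (∏ j ∈ Finset.range n, (a + j)) * (1 - t) ^ (-(a + n)) := by
  intro n
  induction n with
  | zero => intro t ht; simp
  | succ n ih =>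
    intro t ht
    rw [iteratedDeriv_succ]
    have hU : IsOpen {s : ℂ | s.re < 1} := isOpen_lt Complex.continuous_re continuous_const
    have heq : iteratedDeriv n (fun s : ℂ => (1 - s) ^ (-a))
        =ᶠ[nhds t] fun s => (∏ j ∈ Finset.range n, (a + j)) * (1 - s) ^ (-(a + n)) :=
      Filter.eventuallyEq_of_mem (hU.mem_nhds ht) (fun s hs => ih s hs)
    rw [heq.deriv_eq]
    have h1 : HasDerivAt (fun s : ℂ => 1 - s) (-1) t := by
      simpa using (hasDerivAt_id t).const_sub 1
    have h2 := (h1.cpow_const (c := -(a + n)) (slit_aux ht)).const_mul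
      (∏ j ∈ Finset.range n, (a + j))
    rw [h2.deriv, Finset.prod_range_succ]
    have hcast : -(a + (n : ℂ)) - 1 = -(a + ((n + 1 : ℕ) : ℂ)) := by push_cast; ring
    rw [← hcast]
    ring

private lemma hasSum_cpow_aux (a : ℂ) (t : ℂ) (ht : ‖t‖ < 1) :
    HasSum (fun n : ℕ => (∏ j ∈ Finset.range n, (a + j)) / (n ! : ℂ) * t ^ n)
      ((1 - t) ^ (-a)) := by
  have hre : ∀ s : ℂ, s ∈ Metric.ball (0 : ℂ) 1 → s.re < 1 := by
    intro s hs
    rw [Metric.mem_ball, _root_.dist_zero_right] at hs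
    calc s.re ≤ |s.re| := le_abs_self _
    _ ≤ ‖s‖ := Complex.abs_re_le_norm s
    _ < 1 := hs
  have hdiff : DifferentiableOn ℂ (fun s : ℂ => (1 - s) ^ (-a)) (Metric.ball 0 1) := by
    intro s hs
    have h1 : HasDerivAt (fun s : ℂ => 1 - s) (-1) s := by
      simpa using (hasDerivAt_id s).const_sub 1
    exact (h1.cpow_const (c := -a) (slit_aux (hre s hs))).differentiableAt.differentiableWithinAt
  have H := Complex.hasSum_taylorSeries_on_ball hdiff
    (z := t) (by rw [Metric.mem_ball, _root_.dist_zero_right]; exact ht)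
  have h0 : ∀ n : ℕ, iteratedDeriv n (fun s : ℂ => (1 - s) ^ (-a)) 0
      = ∏ j ∈ Finset.range n, (a + j) := by
    intro n
    rw [iteratedDeriv_cpow_aux a n 0 (by norm_num)]
    simp [Complex.one_cpow]
  simp only [sub_zero, smul_eq_mul, h0] at H
  convert H using 2 with n
  · rfl
  · ring

private lemma hasFPowerSeriesAt_aux {𝕜 : Type*} [RCLike 𝕜] (f : 𝕜 → 𝕜) (c : ℕ → 𝕜)
    (h : ∀ t : 𝕜, ‖t‖ < 1 → HasSum (fun n => c n * t ^ n) (f t)) :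
    HasFPowerSeriesAt f (FormalMultilinearSeries.ofScalars 𝕜 c) 0 := by
  set t₀ : 𝕜 := ((1/2 : ℝ) : 𝕜) with ht₀
  have hn : ‖t₀‖ = 1/2 := by rw [ht₀, RCLike.norm_ofReal]; norm_num
  refine ⟨((1/2 : ℝ≥0) : ℝ≥0∞), ?_, by norm_num, ?_⟩
  · apply FormalMultilinearSeries.le_radius_of_isBigO
    have hb : (fun n : ℕ => c n * t₀ ^ n) =O[atTop] (fun _ => (1 : ℝ)) :=
      ((h t₀ (by rw [hn]; norm_num)).summable.tendsto_atTop_zero).isBigO_one ℝ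
    have key : (fun n : ℕ => ‖(FormalMultilinearSeries.ofScalars 𝕜 c) n‖
        * ((1/2 : ℝ≥0) : ℝ) ^ n) = fun n => ‖c n * t₀ ^ n‖ := by
      funext n
      rw [FormalMultilinearSeries.ofScalars_norm, norm_mul, norm_pow, hn]
      norm_num
    rw [key]
    exact hb.norm_left
  · intro y hy
    rw [mem_emetric_ball_zero_iff, enorm_eq_nnnorm, ENNReal.coe_lt_coe] at hy
    have hy' : ‖y‖ < 1 := by
      have := NNReal.coe_lt_coe.mpr hy
      rw [coe_nnnorm] at this
      calc ‖y‖ < ((1/2 : ℝ≥0) : ℝ) := this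
      _ ≤ 1 := by norm_num
    have heq : (fun n => (FormalMultilinearSeries.ofScalars 𝕜 c) n fun _ => y)
        = fun n => c n * y ^ n := by
      funext n
      rw [FormalMultilinearSeries.ofScalars_apply_eq, smul_eq_mul]
    rw [zero_add, heq]
    exact h y hy'

private lemma coeff_eq_aux {𝕜 : Type*} [RCLike 𝕜] (f : 𝕜 → 𝕜) (c d : ℕ → 𝕜)
    (hc : ∀ t : 𝕜, ‖t‖ < 1 → HasSum (fun n => c n * t ^ n) (f t))
    (hd : ∀ t : 𝕜, ‖t‖ < 1 → HasSum (fun n => d n * t ^ n) (f t)) : c = d := by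
  have h := (hasFPowerSeriesAt_aux f c hc).eq_formalMultilinearSeries
    (hasFPowerSeriesAt_aux f d hd)
  exact (FormalMultilinearSeries.ofScalars_series_eq_iff 𝕜 c d).mp h

private lemma Gamma_prod_aux (a : ℂ) (ha : ∀ k : ℕ, a ≠ -(k : ℂ)) (n : ℕ) :
    Complex.Gamma (a + n) = Complex.Gamma a * ∏ j ∈ Finset.range n, (a + j) := by
  induction n with
  | zero => simp
  | succ n ih =>
    have hne : a + (n : ℂ) ≠ 0 := fun h => ha n (eq_neg_of_add_eq_zero_left h)
    have hcast : a + ((n + 1 : ℕ) : ℂ) = (a + n) + 1 := by push_cast; ring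
    rw [hcast, Complex.Gamma_add_one _ hne, ih, Finset.prod_range_succ]
    ring

private lemma Real_Gamma_prod_aux (a : ℝ) (ha : 0 < a) (n : ℕ) :
    Real.Gamma (a + n) = Real.Gamma a * ∏ j ∈ Finset.range n, (a + j) := by
  induction n with
  | zero => simp
  | succ n ih =>
    have hne : a + (n : ℝ) ≠ 0 := by positivity
    have hcast : a + ((n + 1 : ℕ) : ℝ) = (a + n) + 1 := by push_cast; ring
    rw [hcast, Real.Gamma_add_one hne, ih, Finset.prod_range_succ]
    ring

private lemma logGamma_ineq_aux {x y : ℝ} (hx : 0 < x) (hy : 0 < y) {θ : ℝ}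
    (h0 : 0 ≤ θ) (h1 : θ ≤ 1) :
    Real.Gamma ((1 - θ) * x + θ * y) ≤ Real.Gamma x ^ (1 - θ) * Real.Gamma y ^ θ := by
  have hΓx := Real.Gamma_pos_of_pos hx
  have hΓy := Real.Gamma_pos_of_pos hy
  have hz : 0 < (1 - θ) * x + θ * y := by
    rcases eq_or_lt_of_le h0 with rfl | hθ
    · simpa using hx
    · exact add_pos_of_nonneg_of_pos (mul_nonneg (by linarith) hx.le) (mul_pos hθ hy)
  have h := Real.convexOn_log_Gamma.2 (Set.mem_Ioi.mpr hx) (Set.mem_Ioi.mpr hy)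
    (show (0:ℝ) ≤ 1 - θ by linarith) (show (0:ℝ) ≤ θ from h0) (by ring)
  simp only [smul_eq_mul, Function.comp] at h
  calc Real.Gamma ((1 - θ) * x + θ * y)
      = Real.exp (Real.log (Real.Gamma ((1 - θ) * x + θ * y))) :=
        (Real.exp_log (Real.Gamma_pos_of_pos hz)).symm
    _ ≤ Real.exp ((1 - θ) * Real.log (Real.Gamma x) + θ * Real.log (Real.Gamma y)) :=
        Real.exp_le_exp.mpr h
    _ = Real.Gamma x ^ (1 - θ) * Real.Gamma y ^ θ := by
        rw [Real.exp_add, ← Real.log_rpow hΓx, ← Real.log_rpow hΓy,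
          Real.exp_log (Real.rpow_pos_of_pos hΓx _), Real.exp_log (Real.rpow_pos_of_pos hΓy _)]

private lemma gautschi_upper_aux {a x : ℝ} (ha0 : 0 < a) (ha1 : a ≤ 1) (hx : 1 ≤ x) :
    Real.Gamma (x + a) ≤ Real.Gamma (x + 1) * x ^ (a - 1) := by
  have hx0 : 0 < x := by linarith
  have h := logGamma_ineq_aux hx0 (by linarith : (0:ℝ) < x + 1) ha0.le ha1
  have hxa : (1 - a) * x + a * (x + 1) = x + a := by ring
  rw [hxa] at h
  have hΓx1 := Real.Gamma_pos_of_pos (show (0:ℝ) < x + 1 by linarith)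
  have hΓxx : Real.Gamma x = Real.Gamma (x + 1) / x := by
    rw [Real.Gamma_add_one hx0.ne']
    field_simp
  calc Real.Gamma (x + a) ≤ Real.Gamma x ^ (1 - a) * Real.Gamma (x + 1) ^ a := h
    _ = Real.Gamma (x + 1) * x ^ (a - 1) := by
        rw [hΓxx, Real.div_rpow hΓx1.le hx0.le, div_mul_eq_mul_div,
          ← Real.rpow_add hΓx1, show (1 - a) + a = (1:ℝ) by ring, Real.rpow_one,
          show a - 1 = -(1 - a) by ring, Real.rpow_neg hx0.le, div_eq_mul_inv]

private lemma gautschi_lower_aux {a x : ℝ} (ha0 : 0 < a) (ha1 : a ≤ 1) (hx : 1 ≤ x) :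
    Real.Gamma (x + 1) * (x + 1) ^ (a - 1) ≤ Real.Gamma (x + a) := by
  have hx0 : 0 < x := by linarith
  have hxa0 : 0 < x + a := by linarith
  have h := logGamma_ineq_aux hxa0 (by linarith : (0:ℝ) < x + a + 1)
    (show (0:ℝ) ≤ 1 - a by linarith) (by linarith)
  have hxa : (1 - (1 - a)) * (x + a) + (1 - a) * (x + a + 1) = x + 1 := by ring
  rw [hxa] at h
  have hΓxa := Real.Gamma_pos_of_pos hxa0
  have hΓa1 : Real.Gamma (x + a + 1) = (x + a) * Real.Gamma (x + a) :=
    Real.Gamma_add_one hxa0.ne'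
  have key : Real.Gamma (x + 1) ≤ Real.Gamma (x + a) * (x + a) ^ (1 - a) := by
    calc Real.Gamma (x + 1)
        ≤ Real.Gamma (x + a) ^ (1 - (1 - a)) * Real.Gamma (x + a + 1) ^ (1 - a) := h
      _ = Real.Gamma (x + a) * (x + a) ^ (1 - a) := by
          rw [hΓa1, Real.mul_rpow hxa0.le hΓxa.le, show 1 - (1 - a) = a by ring,
            ← mul_assoc, mul_comm (Real.Gamma (x+a) ^ a) ((x+a) ^ (1-a)), mul_assoc,
            ← Real.rpow_add hΓxa, show a + (1 - a) = (1:ℝ) by ring, Real.rpow_one, mul_comm]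
  have hmono : (x + 1) ^ (a - 1) ≤ (x + a) ^ (a - 1) :=
    Real.rpow_le_rpow_of_nonpos hxa0 (by linarith) (by linarith)
  have hpow : 0 < (x + a) ^ (1 - a) := Real.rpow_pos_of_pos hxa0 _
  have h2 : Real.Gamma (x + 1) * (x + a) ^ (a - 1) ≤ Real.Gamma (x + a) := by
    rw [show a - 1 = -(1 - a) by ring, Real.rpow_neg hxa0.le, ← div_eq_mul_inv,
      div_le_iff₀ hpow]
    exact key
  have hΓx1 := Real.Gamma_pos_of_pos (show (0:ℝ) < x + 1 by linarith)
  calc Real.Gamma (x + 1) * (x + 1) ^ (a - 1)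
      ≤ Real.Gamma (x + 1) * (x + a) ^ (a - 1) := by
        exact mul_le_mul_of_nonneg_left hmono hΓx1.le
    _ ≤ Real.Gamma (x + a) := h2

/-- For `a` not a nonpositive integer, the Taylor coefficients of `(1-t)^{-a}`
are `Γ(n+a)/(Γ(a)Γ(n+1))`; moreover if `0 < a ≤ 1` the real coefficients satisfy
`(n+1)^{a-1}/Γ(a) ≤ k^a(n) ≤ n^{a-1}/Γ(a)` for `n ≥ 1`. -/
theorem stmt_9 :
    (∀ a : ℂ, (∀ k : ℕ, a ≠ -(k : ℂ)) →
      ∀ c : ℕ → ℂ,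
        (∀ t : ℂ, ‖t‖ < 1 → HasSum (fun n => c n * t ^ n) ((1 - t) ^ (-a))) →
        ∀ n : ℕ,
          c n = Complex.Gamma ((n : ℂ) + a) /
            (Complex.Gamma a * Complex.Gamma ((n : ℂ) + 1))) ∧
    (∀ a : ℝ, 0 < a → a ≤ 1 →
      ∀ c : ℕ → ℝ,
        (∀ t : ℝ, |t| < 1 → HasSum (fun n => c n * t ^ n) ((1 - t) ^ (-a))) →
        ∀ n : ℕ, 1 ≤ n →
          ((n : ℝ) + 1) ^ (a - 1) / Real.Gamma a ≤ c n ∧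
            c n ≤ (n : ℝ) ^ (a - 1) / Real.Gamma a) := by
  constructor
  · intro a ha c hc n
    have hcd : c = fun n => (∏ j ∈ Finset.range n, (a + j)) / (n ! : ℂ) :=
      coeff_eq_aux (fun t => (1 - t) ^ (-a)) c _ hc (fun t ht => hasSum_cpow_aux a t ht)
    rw [hcd, Complex.Gamma_nat_eq_factorial, show (n : ℂ) + a = a + n by ring,
      Gamma_prod_aux a ha n,
      mul_div_mul_left _ _ (Complex.Gamma_ne_zero ha)]
  · intro a ha0 ha1 c hc n hn
    have hΓa := Real.Gamma_pos_of_pos ha0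
    -- the real coefficient formula
    have hd : ∀ t : ℝ, ‖t‖ < 1 →
        HasSum (fun n : ℕ => (∏ j ∈ Finset.range n, (a + j)) / (n ! : ℝ) * t ^ n)
          ((1 - t) ^ (-a)) := by
      intro t ht
      rw [Real.norm_eq_abs] at ht
      have h1t : (0:ℝ) ≤ 1 - t := by
        rcases abs_lt.mp ht with ⟨h1, h2⟩; linarith
      have H := hasSum_cpow_aux (a : ℂ) (t : ℂ) (by rwa [Complex.norm_real, Real.norm_eq_abs])
      have H2 : HasSum (fun n : ℕ =>
          (((∏ j ∈ Finset.range n, (a + j)) / (n ! : ℝ) * t ^ n : ℝ) : ℂ))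
          ((((1 - t) ^ (-a) : ℝ)) : ℂ) := by
        convert H using 2 with n
        · push_cast
          ring
        · rw [show ((1:ℂ) - (t:ℂ)) = ((1 - t : ℝ) : ℂ) by push_cast; ring,
            show (-(a:ℂ)) = ((-a : ℝ) : ℂ) by push_cast; ring,
            ← Complex.ofReal_cpow h1t]
      exact Complex.hasSum_ofReal.mp H2
    have hcd : c = fun n => (∏ j ∈ Finset.range n, (a + j)) / (n ! : ℝ) :=
      coeff_eq_aux (fun t => (1 - t) ^ (-a)) c _
        (fun t ht => hc t (by rwa [Real.norm_eq_abs] at ht)) hd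
    have hcn : c n = Real.Gamma ((n : ℝ) + a) / (Real.Gamma a * Real.Gamma ((n : ℝ) + 1)) := by
      rw [hcd, Real.Gamma_nat_eq_factorial, show (n : ℝ) + a = a + n by ring,
        Real_Gamma_prod_aux a ha0 n, mul_div_mul_left _ _ hΓa.ne']
    have hx : (1:ℝ) ≤ (n : ℝ) := by exact_mod_cast hn
    have hΓn1 := Real.Gamma_pos_of_pos (show (0:ℝ) < (n:ℝ) + 1 by linarith)
    have hupper := gautschi_upper_aux ha0 ha1 hx
    have hlower := gautschi_lower_aux ha0 ha1 hx
    constructor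
    · rw [hcn, div_le_div_iff₀ hΓa (by positivity)]
      nlinarith [Real.rpow_pos_of_pos (show (0:ℝ) < (n:ℝ) + 1 by linarith) (a - 1)]
    · rw [hcn, div_le_div_iff₀ (by positivity) hΓa]
      nlinarith [Real.rpow_pos_of_pos (show (0:ℝ) < (n:ℝ)by linarith) (a - 1)]
end

section
/- For 0 < a < 1, the function Σ_{n≥1} n^{a-1} t^n belongs to the Hardy space H^1 of the unit disc. -/
open Real


-- step lemma
lemma step10 {a : ℝ} (ha : 0 < a) (ha1 : a < 1) (n : ℕ) :
    a * ((n : ℝ) + 1) ^ (a - 1) ≤ ((n : ℝ) + 1) ^ a - (n : ℝ) ^ a := by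
  rcases Nat.eq_zero_or_pos n with h0 | hn
  · subst h0
    simp [Real.zero_rpow ha.ne', Real.one_rpow]
    linarith [Real.one_rpow (a-1)]
  · have hn1 : (1 : ℝ) ≤ n := by exact_mod_cast hn
    have hint : ∫ x in (n : ℝ)..((n : ℝ) + 1), x ^ (a - 1)
        = (((n : ℝ) + 1) ^ a - (n : ℝ) ^ a) / a := by
      rw [integral_rpow (Or.inl (by linarith))]
      have : a - 1 + 1 = a := by ring
      rw [this]
    have hmono : ((n : ℝ) + 1) ^ (a - 1) ≤ ∫ x in (n : ℝ)..((n : ℝ) + 1), x ^ (a - 1) := by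
      have hconst : ∫ _x in (n : ℝ)..((n : ℝ) + 1), ((n : ℝ) + 1) ^ (a - 1)
          = ((n : ℝ) + 1) ^ (a - 1) := by simp
      rw [← hconst]
      apply intervalIntegral.integral_mono_on (by linarith)
        intervalIntegrable_const
        (intervalIntegral.intervalIntegrable_rpow' (by linarith))
      intro x hx
      exact Real.rpow_le_rpow_of_nonpos (by linarith [hx.1]) hx.2 (by linarith)
    calc a * ((n : ℝ) + 1) ^ (a - 1) ≤ a * ((((n : ℝ) + 1) ^ a - (n : ℝ) ^ a) / a) := by
          rw [← hint]; exact mul_le_mul_of_nonneg_left hmono ha.le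
      _ = ((n : ℝ) + 1) ^ a - (n : ℝ) ^ a := by field_simp

lemma head_sum10 {a : ℝ} (ha : 0 < a) (ha1 : a < 1) (N : ℕ) :
    ∑ i ∈ Finset.range (N + 1), ((i : ℝ)) ^ (a - 1) ≤ ((N : ℝ)) ^ a / a := by
  induction N with
  | zero => simp [Real.zero_rpow (by linarith : a - 1 ≠ 0), Real.zero_rpow ha.ne']
  | succ N ih =>
    rw [Finset.sum_range_succ]
    have hs := step10 ha ha1 N
    push_cast
    push_cast at ih
    have : ((N : ℝ) + 1) ^ (a - 1) ≤ (((N : ℝ) + 1) ^ a - (N : ℝ) ^ a) / a := by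
      rw [le_div_iff₀ ha, mul_comm]; exact hs
    rw [sub_div] at this
    linarith



lemma c_le_one10 {a : ℝ} (ha1 : a < 1) (n : ℕ) : ((n : ℝ)) ^ (a - 1) ≤ 1 := by
  rcases Nat.eq_zero_or_pos n with h0 | hn
  · subst h0; simp [Real.zero_rpow (by linarith : a - 1 ≠ 0)]
  · exact Real.rpow_le_one_of_one_le_of_nonpos (by exact_mod_cast hn) (by linarith)

lemma c_nonneg10 {a : ℝ} (n : ℕ) : (0:ℝ) ≤ ((n : ℝ)) ^ (a - 1) :=
  Real.rpow_nonneg (Nat.cast_nonneg n) _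

lemma c_mono10 {a : ℝ} (ha1 : a < 1) {m n : ℕ} (hm : 1 ≤ m) (hmn : m ≤ n) :
    ((n : ℝ)) ^ (a - 1) ≤ ((m : ℝ)) ^ (a - 1) := by
  apply Real.rpow_le_rpow_of_nonpos
  · exact_mod_cast hm
  · exact_mod_cast hmn
  · linarith

lemma sumaux10 {z : ℂ} (hz : ‖z‖ < 1) (u : ℕ → ℝ) (hu : ∀ k, |u k| ≤ 1) (M : ℕ) :
    Summable fun k => (u k : ℂ) * z ^ (k + M) := by
  apply Summable.of_norm_bounded (summable_geometric_of_lt_one (norm_nonneg z) hz)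
  intro k
  rw [norm_mul, Complex.norm_real, norm_pow, pow_add, Real.norm_eq_abs]
  have h1 : ‖z‖ ^ M ≤ 1 := pow_le_one₀ (norm_nonneg z) hz.le
  have h2 : (0:ℝ) ≤ ‖z‖ ^ k := pow_nonneg (norm_nonneg z) k
  calc |u k| * (‖z‖ ^ k * ‖z‖ ^ M) ≤ 1 * (‖z‖ ^ k * 1) := by
        apply mul_le_mul (hu k) (by nlinarith [pow_nonneg (norm_nonneg z) M]) (by positivity) one_pos.le
    _ = ‖z‖ ^ k := by ring

lemma key10 {a : ℝ} (ha : 0 < a) (ha1 : a < 1) (z : ℂ) (hz : ‖z‖ < 1) :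
    ‖∑' n : ℕ, (((n : ℝ) ^ (a - 1) : ℝ) : ℂ) * z ^ n‖ ≤ (2 / a + 2) * ‖1 - z‖ ^ (-a) := by
  set c : ℕ → ℝ := fun n => (n : ℝ) ^ (a - 1) with hc
  set δ : ℝ := ‖1 - z‖ with hδdef
  show ‖∑' n : ℕ, ((c n : ℝ) : ℂ) * z ^ n‖ ≤ (2 / a + 2) * δ ^ (-a)
  have hδ : 0 < δ := by
    have := norm_sub_norm_le (1 : ℂ) z
    simp only [norm_one] at this
    linarith
  have hδ2 : δ ≤ 2 := by
    have := norm_sub_le (1 : ℂ) z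
    simp only [norm_one] at this
    linarith
  set N : ℕ := ⌈1 / δ⌉₊ with hNdef
  have hN1 : 1 / δ ≤ (N : ℝ) := Nat.le_ceil _
  have hNpos : 1 ≤ N := by
    rw [hNdef]; exact Nat.one_le_ceil_iff.mpr (by positivity)
  have hN2 : (N : ℝ) ≤ 2 / δ := by
    rcases le_or_gt δ 1 with h | h
    · have h0 : (N : ℝ) < 1 / δ + 1 := Nat.ceil_lt_add_one (by positivity : (0:ℝ) ≤ 1 / δ)
      have h1 : (1:ℝ) ≤ 1 / δ := by rw [le_div_iff₀ hδ]; linarith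
      have h2 : 1 / δ + 1 ≤ 2 / δ := by
        rw [div_add' _ _ _ hδ.ne', div_le_div_iff₀ hδ hδ]; nlinarith
      linarith
    · have hN1' : N = 1 := by
        rw [hNdef]
        have h3 : (1:ℝ)/δ ≤ 1 := by rw [div_le_one hδ]; linarith
        have h2 : ⌈(1:ℝ)/δ⌉₊ ≤ 1 := Nat.ceil_le.mpr (by simpa using h3)
        omega
      rw [hN1', le_div_iff₀ hδ]; push_cast; linarith
  have hgen : ∀ (u : ℕ → ℝ), (∀ k, |u k| ≤ 1) → ∀ M, Summable fun k => (u k : ℂ) * z ^ (k + M) :=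
    fun u hu M => sumaux10 hz u hu M
  have hcabs : ∀ n, |c n| ≤ 1 := fun n => by
    rw [abs_of_nonneg (c_nonneg10 n)]; exact c_le_one10 ha1 n
  have hf : Summable fun n : ℕ => ((c n : ℝ) : ℂ) * z ^ n := by
    simpa using hgen c hcabs 0
  have hsplit := (Summable.sum_add_tsum_nat_add (f := fun n : ℕ => ((c n : ℝ) : ℂ) * z ^ n) (N + 1) hf).symm
  have hzpow : ∀ m : ℕ, ‖z ^ m‖ ≤ 1 := fun m => by
    rw [norm_pow]; exact pow_le_one₀ (norm_nonneg z) hz.le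
  have hhead : ‖∑ i ∈ Finset.range (N + 1), ((c i : ℝ) : ℂ) * z ^ i‖ ≤ (N : ℝ) ^ a / a := by
    calc ‖∑ i ∈ Finset.range (N + 1), ((c i : ℝ) : ℂ) * z ^ i‖
        ≤ ∑ i ∈ Finset.range (N + 1), ‖((c i : ℝ) : ℂ) * z ^ i‖ := norm_sum_le _ _
      _ ≤ ∑ i ∈ Finset.range (N + 1), c i := by
          apply Finset.sum_le_sum
          intro i _
          rw [norm_mul, Complex.norm_real, Real.norm_eq_abs, abs_of_nonneg (c_nonneg10 i)]
          nlinarith [hzpow i, c_nonneg10 (a := a) i, norm_nonneg (z ^ i)]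
      _ ≤ (N : ℝ) ^ a / a := head_sum10 ha ha1 N
  -- tail
  have hidx : ∀ k : ℕ, k + (N + 2) = k + 1 + (N + 1) := fun k => by omega
  set T : ℂ := ∑' k, ((c (k + (N + 1)) : ℝ) : ℂ) * z ^ (k + (N + 1)) with hTdef
  have hTs : Summable fun k => ((c (k + (N + 1)) : ℝ) : ℂ) * z ^ (k + (N + 1)) :=
    hgen (fun k => c (k + (N + 1))) (fun k => hcabs _) (N + 1)
  have hBs : Summable fun k => ((c (k + (N + 1)) : ℝ) : ℂ) * z ^ (k + 1 + (N + 1)) :=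
    (hgen (fun k => c (k + (N + 1))) (fun k => hcabs _) (N + 2)).congr (fun k => by rw [hidx k])
  have hS1 : Summable fun k => ((c (k + 1 + (N + 1)) : ℝ) : ℂ) * z ^ (k + 1 + (N + 1)) :=
    (hgen (fun k => c (k + 1 + (N + 1))) (fun k => hcabs _) (N + 2)).congr (fun k => by rw [hidx k])
  have hdiff : ∀ k, |c (k + 1 + (N + 1)) - c (k + (N + 1))| ≤ 1 := by
    intro k
    have hmono : c (k + 1 + (N + 1)) ≤ c (k + (N + 1)) := c_mono10 ha1 (by omega) (by omega)
    have h2 := c_nonneg10 (a := a) (k + 1 + (N + 1))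
    have h3 := c_le_one10 ha1 (k + (N + 1))
    rw [abs_sub_comm, abs_of_nonneg (by linarith)]
    linarith
  have hDs : Summable fun k => ((c (k + 1 + (N + 1)) - c (k + (N + 1)) : ℝ) : ℂ) * z ^ (k + 1 + (N + 1)) :=
    (hgen (fun k => c (k + 1 + (N + 1)) - c (k + (N + 1))) hdiff (N + 2)).congr (fun k => by rw [hidx k])
  have heq : (1 - z) * T = ((c (N + 1) : ℝ) : ℂ) * z ^ (N + 1)
      + ∑' k, ((c (k + 1 + (N + 1)) - c (k + (N + 1)) : ℝ) : ℂ) * z ^ (k + 1 + (N + 1)) := by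
    have e0 : (1 - z) * T = T - ∑' k, ((c (k + (N + 1)) : ℝ) : ℂ) * z ^ (k + 1 + (N + 1)) := by
      rw [sub_mul, one_mul, hTdef, ← tsum_mul_left]
      congr 1
      exact tsum_congr fun k => by ring
    have e2 : T = ((c (N + 1) : ℝ) : ℂ) * z ^ (N + 1)
        + ∑' k, ((c (k + 1 + (N + 1)) : ℝ) : ℂ) * z ^ (k + 1 + (N + 1)) := by
      rw [hTdef, Summable.tsum_eq_zero_add hTs]
      simp
    rw [e0, e2, add_sub_assoc, ← Summable.tsum_sub hS1 hBs]
    congr 1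
    exact tsum_congr fun k => by push_cast; ring
  have hnn : ∀ k, 0 ≤ c (k + (N + 1)) - c (k + 1 + (N + 1)) := by
    intro k
    have := c_mono10 (a := a) ha1 (m := k + (N + 1)) (n := k + 1 + (N + 1)) (by omega) (by omega)
    linarith
  have hps : ∀ n, ∑ i ∈ Finset.range n, (c (i + (N + 1)) - c (i + 1 + (N + 1))) ≤ c (N + 1) := by
    intro n
    have h := Finset.sum_range_sub' (f := fun i => c (i + (N + 1))) n
    calc ∑ i ∈ Finset.range n, (c (i + (N + 1)) - c (i + 1 + (N + 1)))
        = c (0 + (N + 1)) - c (n + (N + 1)) := h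
      _ ≤ c (N + 1) := by
          rw [zero_add]
          have := c_nonneg10 (a := a) (n + (N + 1))
          linarith
  have htelS : Summable fun k => c (k + (N + 1)) - c (k + 1 + (N + 1)) :=
    summable_of_sum_range_le hnn hps
  have htel : ∑' k, (c (k + (N + 1)) - c (k + 1 + (N + 1))) ≤ c (N + 1) :=
    Summable.tsum_le_of_sum_range_le htelS hps
  have htail : ‖T‖ ≤ 2 * c (N + 1) / δ := by
    have hnormsum : ‖∑' k, ((c (k + 1 + (N + 1)) - c (k + (N + 1)) : ℝ) : ℂ) * z ^ (k + 1 + (N + 1))‖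
        ≤ c (N + 1) := by
      have hsn : Summable fun k =>
          ‖((c (k + 1 + (N + 1)) - c (k + (N + 1)) : ℝ) : ℂ) * z ^ (k + 1 + (N + 1))‖ := hDs.norm
      refine (norm_tsum_le_tsum_norm hsn).trans ?_
      refine (Summable.tsum_le_tsum ?_ hsn htelS).trans htel
      intro k
      rw [norm_mul, Complex.norm_real, Real.norm_eq_abs, abs_sub_comm,
        abs_of_nonneg (hnn k)]
      nlinarith [hzpow (k + 1 + (N + 1)), norm_nonneg (z ^ (k + 1 + (N + 1))), hnn k]
    have hTnorm : δ * ‖T‖ ≤ 2 * c (N + 1) := by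
      have hδT : ‖(1 - z) * T‖ = δ * ‖T‖ := by rw [norm_mul]
      rw [← hδT, heq]
      calc ‖((c (N + 1) : ℝ) : ℂ) * z ^ (N + 1) + _‖
          ≤ ‖((c (N + 1) : ℝ) : ℂ) * z ^ (N + 1)‖ + _ := norm_add_le _ _
        _ ≤ c (N + 1) + c (N + 1) := by
            apply add_le_add _ hnormsum
            rw [norm_mul, Complex.norm_real, Real.norm_eq_abs, abs_of_nonneg (c_nonneg10 _)]
            nlinarith [hzpow (N + 1), c_nonneg10 (a := a) (N + 1), norm_nonneg (z ^ (N + 1))]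
        _ = 2 * c (N + 1) := by ring
    rw [le_div_iff₀ hδ]
    nlinarith
  -- put together
  have hheadfinal : (N : ℝ) ^ a / a ≤ (2 / a) * δ ^ (-a) := by
    have h1 : (N : ℝ) ^ a ≤ (2 / δ) ^ a :=
      Real.rpow_le_rpow (Nat.cast_nonneg N) hN2 ha.le
    have h2 : (2 / δ) ^ a = 2 ^ a * δ ^ (-a) := by
      rw [Real.div_rpow (by norm_num) hδ.le, Real.rpow_neg hδ.le, div_eq_mul_inv]
    have h3 : (2:ℝ) ^ a ≤ 2 := by
      calc (2:ℝ) ^ a ≤ 2 ^ (1:ℝ) := Real.rpow_le_rpow_of_exponent_le (by norm_num) (by linarith)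
        _ = 2 := Real.rpow_one 2
    have h4 : (0:ℝ) ≤ δ ^ (-a) := Real.rpow_nonneg hδ.le _
    rw [div_le_iff₀ ha]
    rw [h2] at h1
    calc (N:ℝ) ^ a ≤ 2 ^ a * δ ^ (-a) := h1
      _ ≤ 2 * δ ^ (-a) := by nlinarith
      _ = 2 / a * δ ^ (-a) * a := by field_simp
  have htailfinal : 2 * c (N + 1) / δ ≤ 2 * δ ^ (-a) := by
    have h1 : c (N + 1) ≤ δ ^ (1 - a) := by
      have hb : 1 / δ ≤ ((N : ℝ) + 1) := by linarith
      have h0 := Real.rpow_le_rpow_of_nonpos (by positivity : (0:ℝ) < 1 / δ) hb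
        (by linarith : a - 1 ≤ 0)
      have hcast : c (N + 1) = ((N : ℝ) + 1) ^ (a - 1) := by
        rw [hc]; push_cast; ring_nf
      rw [hcast]
      refine h0.trans_eq ?_
      rw [one_div, ← Real.rpow_neg_one δ, ← Real.rpow_mul hδ.le]
      congr 1
      ring
    have h5 : δ ^ (1 - a) = δ ^ (-a) * δ := by
      calc δ ^ (1 - a) = δ ^ (-a + 1) := by ring_nf
        _ = δ ^ (-a) * δ ^ (1:ℝ) := Real.rpow_add hδ _ _
        _ = δ ^ (-a) * δ := by rw [Real.rpow_one]
    calc 2 * c (N + 1) / δ ≤ 2 * δ ^ (1 - a) / δ := by gcongr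
      _ = 2 * δ ^ (-a) := by rw [h5]; field_simp
  calc ‖∑' n : ℕ, ((c n : ℝ) : ℂ) * z ^ n‖
      = ‖∑ i ∈ Finset.range (N + 1), ((c i : ℝ) : ℂ) * z ^ i + T‖ := by rw [hsplit]
    _ ≤ ‖∑ i ∈ Finset.range (N + 1), ((c i : ℝ) : ℂ) * z ^ i‖ + ‖T‖ := norm_add_le _ _
    _ ≤ (N : ℝ) ^ a / a + 2 * c (N + 1) / δ := add_le_add hhead htail
    _ ≤ (2 / a) * δ ^ (-a) + 2 * δ ^ (-a) := add_le_add hheadfinal htailfinal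
    _ = (2 / a + 2) * δ ^ (-a) := by ring



lemma normz10 {r θ : ℝ} (hr : 0 ≤ r) : ‖(r : ℂ) * Complex.exp (θ * Complex.I)‖ = r := by
  rw [norm_mul, Complex.norm_real, Real.norm_eq_abs, abs_of_nonneg hr,
    Complex.norm_exp_ofReal_mul_I, mul_one]

lemma lb10 {r θ : ℝ} (hr0 : 0 ≤ r) (hr1 : r < 1) (hθ0 : 0 < θ) (hθ1 : θ < 2 * π) :
    min θ (2 * π - θ) / (2 * π) ≤ ‖1 - (r : ℂ) * Complex.exp (θ * Complex.I)‖ := by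
  set m : ℝ := min θ (2 * π - θ) with hm
  have hπ : 0 < π := pi_pos
  have hm0 : 0 < m := lt_min hθ0 (by linarith)
  have hmπ : m ≤ π := by
    rcases le_total θ π with h | h
    · exact (min_le_left _ _).trans h
    · exact (min_le_right _ _).trans (by linarith)
  -- Jordan-type bound
  have hcos : Real.cos θ ≤ 1 - 2 / π ^ 2 * m ^ 2 := by
    rcases le_total θ π with h | h
    · have hmeq : m = θ := min_eq_left (by linarith)
      rw [hmeq]
      exact Real.cos_le_one_sub_mul_cos_sq (by rw [abs_of_nonneg hθ0.le]; exact h)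
    · have hmeq : m = 2 * π - θ := min_eq_right (by linarith)
      have hce : Real.cos θ = Real.cos (2 * π - θ) := by
        rw [← Real.cos_two_pi_sub (2 * π - θ)]; ring_nf
      rw [hmeq, hce]
      exact Real.cos_le_one_sub_mul_cos_sq (by rw [abs_of_nonneg (by linarith)]; linarith)
  -- norm squared computation
  have hz : (r : ℂ) * Complex.exp (θ * Complex.I)
      = ((r * Real.cos θ : ℝ) : ℂ) + ((r * Real.sin θ : ℝ) : ℂ) * Complex.I := by
    rw [Complex.exp_mul_I, ← Complex.ofReal_cos, ← Complex.ofReal_sin]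
    push_cast
    ring
  have h2 : ‖1 - (r : ℂ) * Complex.exp (θ * Complex.I)‖ ^ 2
      = (1 - r * Real.cos θ) ^ 2 + (r * Real.sin θ) ^ 2 := by
    rw [hz, Complex.sq_norm, Complex.normSq_apply]
    simp [Complex.sub_re, Complex.sub_im, Complex.cos_ofReal_re, Complex.sin_ofReal_re]
    ring
  -- squares inequality
  have hsq : (m / (2 * π)) ^ 2 ≤ ‖1 - (r : ℂ) * Complex.exp (θ * Complex.I)‖ ^ 2 := by
    rw [h2]
    have hpyth := Real.sin_sq_add_cos_sq θ
    have hcos1 : -1 ≤ Real.cos θ := Real.neg_one_le_cos θ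
    set u : ℝ := 1 - Real.cos θ with hu
    have hu0 : 0 ≤ u := by have := Real.cos_le_one θ; simp [hu]; linarith
    have hu2 : u ≤ 2 := by simp [hu]; linarith
    have hA : u / 8 ≤ (1 - r) ^ 2 + 2 * r * u := by
      nlinarith [sq_nonneg (1 - r), mul_nonneg hr0 hu0, mul_nonneg hu0 (sub_nonneg.2 hr1.le),
        mul_nonneg (mul_nonneg hr0 hr0) hu0]
    have hB : (m / (2 * π)) ^ 2 ≤ u / 8 := by
      have hu1 : 2 / π ^ 2 * m ^ 2 ≤ u := by simp only [hu]; linarith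
      have hπ2 : (0:ℝ) < π ^ 2 := by positivity
      have hu1' : 2 * m ^ 2 ≤ u * π ^ 2 := by
        calc 2 * m ^ 2 = (2 / π ^ 2 * m ^ 2) * π ^ 2 := by field_simp
          _ ≤ u * π ^ 2 := mul_le_mul_of_nonneg_right hu1 hπ2.le
      rw [div_pow, pow_two (2 * π)]
      rw [div_le_div_iff₀ (by positivity) (by norm_num)]
      nlinarith [hu1']
    have hexp : (1 - r * Real.cos θ) ^ 2 + (r * Real.sin θ) ^ 2 = (1 - r) ^ 2 + 2 * r * u := by
      simp only [hu]; nlinarith [hpyth]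
    rw [hexp]
    linarith
  have hn0 : (0:ℝ) ≤ ‖1 - (r : ℂ) * Complex.exp (θ * Complex.I)‖ := norm_nonneg _
  have hq := Real.sqrt_le_sqrt hsq
  rwa [Real.sqrt_sq (by positivity), Real.sqrt_sq hn0] at hq







/-- For `0 < a < 1`, the function `Σ_{n≥1} n^{a-1} t^n` belongs to the Hardy space
`H¹` of the unit disc. -/
theorem stmt_10 (a : ℝ) (ha : 0 < a) (ha1 : a < 1) :
    ∃ C : ℝ, ∀ r : ℝ, 0 ≤ r → r < 1 →
      (∫ θ in (0 : ℝ)..(2 * π),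
        ‖∑' n : ℕ, (((n : ℝ) ^ (a - 1) : ℝ) : ℂ) *
          ((r : ℂ) * Complex.exp (θ * Complex.I)) ^ n‖) ≤ C := by
  have hπ : 0 < π := pi_pos
  set B : ℝ → ℝ := fun θ => (2 / a + 2) * (2 * π) ^ a * (θ ^ (-a) + (2 * π - θ) ^ (-a)) with hB
  refine ⟨∫ θ in (0:ℝ)..(2 * π), B θ, ?_⟩
  intro r hr0 hr1
  -- integrability of the bound
  have hB1 : IntervalIntegrable (fun θ : ℝ => θ ^ (-a)) MeasureTheory.volume 0 (2 * π) :=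
    intervalIntegral.intervalIntegrable_rpow' (by linarith)
  have hB2 : IntervalIntegrable (fun θ : ℝ => (2 * π - θ) ^ (-a)) MeasureTheory.volume 0 (2 * π) := by
    have h := (intervalIntegral.intervalIntegrable_rpow'
      (a := 0) (b := 2 * π) (r := -a) (by linarith)).comp_sub_left (2 * π)
    simpa using h.symm
  have hBint : IntervalIntegrable B MeasureTheory.volume 0 (2 * π) :=
    ((hB1.add hB2).const_mul _)
  -- continuity of the integrand
  have hFcont : Continuous fun θ : ℝ =>
      ∑' n : ℕ, (((n : ℝ) ^ (a - 1) : ℝ) : ℂ) * ((r : ℂ) * Complex.exp (θ * Complex.I)) ^ n := by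
    apply continuous_tsum (u := fun n : ℕ => r ^ n)
    · intro n
      apply Continuous.mul continuous_const
      apply Continuous.pow
      exact continuous_const.mul (Complex.continuous_exp.comp
        ((Complex.continuous_ofReal).mul continuous_const))
    · exact summable_geometric_of_lt_one hr0 hr1
    · intro n θ
      rw [norm_mul, Complex.norm_real, Real.norm_eq_abs, abs_of_nonneg (c_nonneg10 n),
        norm_pow, normz10 hr0]
      have h1 := c_le_one10 ha1 n
      have h2 : (0:ℝ) ≤ r ^ n := pow_nonneg hr0 n
      nlinarith [c_nonneg10 (a := a) n]
  have hFint : IntervalIntegrable (fun θ : ℝ =>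
      ‖∑' n : ℕ, (((n : ℝ) ^ (a - 1) : ℝ) : ℂ) * ((r : ℂ) * Complex.exp (θ * Complex.I)) ^ n‖)
      MeasureTheory.volume 0 (2 * π) :=
    (hFcont.norm).intervalIntegrable 0 (2 * π)
  apply intervalIntegral.integral_mono_ae_restrict (by positivity) hFint hBint
  -- a.e. pointwise bound
  have h0 : ∀ᵐ θ : ℝ, θ ∉ ({0, 2 * π} : Set ℝ) :=
    MeasureTheory.measure_eq_zero_iff_ae_notMem.mp (((Set.finite_singleton (2 * π)).insert 0).measure_zero _)
  filter_upwards [MeasureTheory.ae_restrict_of_ae h0,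
    MeasureTheory.ae_restrict_mem measurableSet_Icc] with θ hθn hθm
  obtain ⟨hθ0, hθ1⟩ := hθm
  have hθ0' : 0 < θ := lt_of_le_of_ne hθ0 (by simp at hθn; tauto)
  have hθ1' : θ < 2 * π := lt_of_le_of_ne hθ1 (by simp at hθn; tauto)
  set z : ℂ := (r : ℂ) * Complex.exp (θ * Complex.I) with hzdef
  have hzn : ‖z‖ < 1 := by rw [hzdef, normz10 hr0]; exact hr1
  have hkey := key10 ha ha1 z hzn
  set m : ℝ := min θ (2 * π - θ) with hm
  have hm0 : 0 < m := lt_min hθ0' (by linarith)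
  have hlb : m / (2 * π) ≤ ‖1 - z‖ := lb10 hr0 hr1 hθ0' hθ1'
  have hKnn : (0:ℝ) ≤ 2 / a + 2 := by positivity
  have hmono : ‖1 - z‖ ^ (-a) ≤ (m / (2 * π)) ^ (-a) :=
    Real.rpow_le_rpow_of_nonpos (by positivity) hlb (by linarith)
  have hsplit : (m / (2 * π)) ^ (-a) = m ^ (-a) * (2 * π) ^ a := by
    rw [Real.div_rpow hm0.le (by positivity), Real.rpow_neg (by positivity : (0:ℝ) ≤ 2 * π)]
    field_simp
  have hmin : m ^ (-a) ≤ θ ^ (-a) + (2 * π - θ) ^ (-a) := by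
    rcases min_cases θ (2 * π - θ) with ⟨h1, _⟩ | ⟨h1, _⟩
    · rw [hm, h1]
      have : (0:ℝ) ≤ (2 * π - θ) ^ (-a) := Real.rpow_nonneg (by linarith) _
      linarith
    · rw [hm, h1]
      have : (0:ℝ) ≤ θ ^ (-a) := Real.rpow_nonneg (by linarith) _
      linarith
  calc ‖∑' n : ℕ, (((n : ℝ) ^ (a - 1) : ℝ) : ℂ) * z ^ n‖
      ≤ (2 / a + 2) * ‖1 - z‖ ^ (-a) := hkey
    _ ≤ (2 / a + 2) * (m ^ (-a) * (2 * π) ^ a) := by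
        rw [← hsplit]; exact mul_le_mul_of_nonneg_left hmono hKnn
    _ ≤ (2 / a + 2) * (2 * π) ^ a * (θ ^ (-a) + (2 * π - θ) ^ (-a)) := by
        have h2 : (0:ℝ) ≤ (2 * π) ^ a := Real.rpow_nonneg (by positivity) _
        nlinarith [mul_le_mul_of_nonneg_left (mul_le_mul_of_nonneg_right hmin h2) hKnn]
    _ = B θ := rfl
end

section
/- Let m be a positive integer. If T is a (2m+1)-contraction, then T is a 2m-contraction and ‖T^n x‖² ≲ (n+1)^{2m} for every x ∈ H (with constant depending on x). -/
open Finset fwdDiff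

-- key translation lemma
lemma key15 (u : ℕ → ℝ) (k n : ℕ) :
    (fwdDiff 1)^[k] u n = (-1:ℝ)^k * ∑ j ∈ Finset.range (k+1),
      (-1:ℝ)^j * (Nat.choose k j) * u (n+j) := by
  rw [fwdDiff_iter_eq_sum_shift, Finset.mul_sum]
  refine Finset.sum_congr rfl fun j hj => ?_
  rw [Finset.mem_range, Nat.lt_succ_iff] at hj
  have h1 : (-1:ℝ)^(k-j) * (-1:ℝ)^j = (-1:ℝ)^k := by
    rw [← pow_add, Nat.sub_add_cancel hj]
  have h2 : (-1:ℝ)^j * (-1:ℝ)^j = 1 := by rw [← mul_pow]; norm_num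
  have : ((-1:ℤ)^(k-j) * (k.choose j)) • u (n + j • 1)
      = ((-1:ℝ)^(k-j) * (k.choose j)) * u (n + j) := by
    simp [zsmul_eq_mul, smul_eq_mul]
  rw [this, ← h1]
  linear_combination ((-1:ℝ)^(k-j) * (Nat.choose k j : ℝ) * u (n+j)) * h2.symm

-- if forward difference eventually ≤ c < 0, then tends to -∞
lemma tendsbot15 (w : ℕ → ℝ) (c : ℝ) (hc : c < 0) (N : ℕ)
    (h : ∀ n, N ≤ n → fwdDiff 1 w n ≤ c) :
    ∀ M : ℝ, ∃ N', ∀ n, N' ≤ n → w n ≤ M := by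
  have step : ∀ k : ℕ, w (N + k) ≤ w N + k * c := by
    intro k
    induction k with
    | zero => simp
    | succ k ih =>
        have hd := h (N + k) (Nat.le_add_right _ _)
        have : w (N + k + 1) - w (N + k) ≤ c := by
          simpa [fwdDiff] using hd
        push_cast
        have : w (N + (k+1)) ≤ w (N + k) + c := by
          have e : N + (k+1) = N + k + 1 := by ring
          rw [e]; linarith
        push_cast at ih ⊢
        linarith
  intro M
  refine ⟨N + ⌈(M - w N) / c⌉₊, fun n hn => ?_⟩
  have hk : ⌈(M - w N) / c⌉₊ ≤ n - N := by omega
  have hNn : N ≤ n := le_trans (Nat.le_add_right _ _) hn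
  have h1 : w n ≤ w N + (n - N : ℕ) * c := by
    have := step (n - N)
    rwa [Nat.add_sub_cancel' hNn] at this
  have h2 : (M - w N) / c ≤ (⌈(M - w N) / c⌉₊ : ℝ) := Nat.le_ceil _
  have h3 : ((⌈(M - w N) / c⌉₊ : ℝ)) ≤ ((n - N : ℕ) : ℝ) := by exact_mod_cast hk
  have h4 : ((n - N : ℕ) : ℝ) * c ≤ (⌈(M - w N) / c⌉₊ : ℝ) * c :=
    mul_le_mul_of_nonpos_right h3 (le_of_lt hc)
  have h5 : (⌈(M - w N) / c⌉₊ : ℝ) * c ≤ M - w N := by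
    rw [div_le_iff_of_neg hc] at h2
    linarith [h2]
  linarith

lemma anti15 (g : ℕ → ℝ) (hg : ∀ n, fwdDiff 1 g n ≤ 0) : ∀ a b, a ≤ b → g b ≤ g a := by
  have : ∀ n, g (n + 1) ≤ g n := fun n => by have := hg n; simp [fwdDiff] at this; linarith
  intro a b hab
  exact antitone_nat_of_succ_le this hab

-- main positivity lemma
lemma nonneg15 (u : ℕ → ℝ) (k : ℕ) (hu : ∀ n, 0 ≤ u n)
    (hd : ∀ n, (fwdDiff 1)^[k+1] u n ≤ 0) : ∀ n, 0 ≤ (fwdDiff 1)^[k] u n := by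
  have e : ∀ t : ℕ, fwdDiff (1:ℕ) ((fwdDiff 1)^[t] u) = (fwdDiff 1)^[t+1] u := by
    intro t; ext y; rw [Function.iterate_succ_apply']
  by_contra hcon
  push_neg at hcon
  obtain ⟨N, hN⟩ := hcon
  have hganti : ∀ a b, a ≤ b → (fwdDiff 1)^[k] u b ≤ (fwdDiff 1)^[k] u a := by
    apply anti15
    intro n
    rw [e k]
    exact hd n
  have H : ∀ j : ℕ, ∀ M : ℝ, ∃ N', ∀ n, N' ≤ n → (fwdDiff 1)^[k - 1 - j] u n ≤ M := by
    intro j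
    induction j with
    | zero =>
        rcases Nat.eq_zero_or_pos k with hk0 | hk1
        · exfalso
          have h0 := hu N
          rw [hk0, Function.iterate_zero_apply] at hN
          linarith
        · apply tendsbot15 _ ((fwdDiff 1)^[k] u N) hN N
          intro n hn
          have e2 : k - 1 - 0 + 1 = k := by omega
          rw [e (k-1-0), e2]
          exact hganti N n hn
    | succ j ih =>
        rcases Nat.eq_zero_or_pos (k - 1 - j) with h0 | hpos
        · have e2 : k - 1 - (j+1) = k - 1 - j := by omega
          rw [e2]; exact ih
        · obtain ⟨N1, hN1⟩ := ih (-1)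
          apply tendsbot15 _ (-1) (by norm_num) N1
          intro n hn
          have e2 : k - 1 - (j+1) + 1 = k - 1 - j := by omega
          rw [e (k-1-(j+1)), e2]
          exact hN1 n hn
  obtain ⟨N', hN'⟩ := H (k - 1) (-1)
  have e3 : k - 1 - (k - 1) = 0 := by omega
  rw [e3] at hN'
  have h1 := hN' N' le_rfl
  rw [Function.iterate_zero_apply] at h1
  linarith [hu N']

lemma growthstep15 (w : ℕ → ℝ) (C : ℝ) (hC : 0 ≤ C) (d : ℕ)
    (h : ∀ n, fwdDiff 1 w n ≤ C * ((n:ℝ)+1)^d) :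
    ∀ n, w n ≤ (max (w 0) C) * ((n:ℝ)+1)^(d+1) := by
  set D := max (w 0) C with hD
  have hDC : C ≤ D := le_max_right _ _
  have hD0 : 0 ≤ D := le_trans hC hDC
  intro n
  induction n with
  | zero => simp [hD]
  | succ n ih =>
      have hstep : w (n+1) ≤ w n + C * ((n:ℝ)+1)^d := by
        have := h n; simp only [fwdDiff] at this; linarith
      have a1 : (0:ℝ) ≤ (n:ℝ) + 1 := by positivity
      have hp : ((n:ℝ)+1)^d ≤ ((n:ℝ)+2)^d := by
        apply pow_le_pow_left₀ a1; linarith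
      have key : D * ((n:ℝ)+1)^(d+1) + C * ((n:ℝ)+1)^d ≤ D * ((n:ℝ)+2)^(d+1) := by
        have h1 : D * ((n:ℝ)+1)^(d+1) + C * ((n:ℝ)+1)^d
            ≤ D * (((n:ℝ)+1)^d * ((n:ℝ)+2)) := by
          have : ((n:ℝ)+1)^(d+1) = ((n:ℝ)+1)^d * ((n:ℝ)+1) := by ring
          rw [this]
          have := mul_le_mul_of_nonneg_right hDC (pow_nonneg a1 d)
          nlinarith [pow_nonneg a1 d]
        have h2 : D * (((n:ℝ)+1)^d * ((n:ℝ)+2)) ≤ D * (((n:ℝ)+2)^d * ((n:ℝ)+2)) := by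
          apply mul_le_mul_of_nonneg_left _ hD0
          apply mul_le_mul_of_nonneg_right hp; linarith
        have h3 : D * (((n:ℝ)+2)^d * ((n:ℝ)+2)) = D * ((n:ℝ)+2)^(d+1) := by ring
        linarith
      have e : ((n+1:ℕ):ℝ) + 1 = (n:ℝ) + 2 := by push_cast; ring
      rw [e]
      calc w (n+1) ≤ w n + C * ((n:ℝ)+1)^d := hstep
        _ ≤ D * ((n:ℝ)+1)^(d+1) + C * ((n:ℝ)+1)^d := by linarith
        _ ≤ D * ((n:ℝ)+2)^(d+1) := key

lemma growth15 : ∀ (k : ℕ) (u : ℕ → ℝ) (C : ℝ), 0 ≤ C → (∀ n, (fwdDiff 1)^[k] u n ≤ C) →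
    ∃ D, 0 ≤ D ∧ ∀ n, u n ≤ D * ((n:ℝ)+1)^k := by
  intro k
  induction k with
  | zero =>
      intro u C hC h
      exact ⟨C, hC, fun n => by simpa using h n⟩
  | succ k ih =>
      intro u C hC h
      obtain ⟨D, hD0, hD⟩ := ih (fwdDiff 1 u) C hC (fun n => by
        have := h n; rwa [Function.iterate_succ_apply] at this)
      refine ⟨max (max (u 0) D) 0, le_max_right _ _, fun n => ?_⟩
      have hb := growthstep15 u D hD0 k hD n
      have : max (u 0) D ≤ max (max (u 0) D) 0 := le_max_left _ _
      have hpow : (0:ℝ) ≤ ((n:ℝ)+1)^(k+1) := by positivity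
      calc u n ≤ (max (u 0) D) * ((n:ℝ)+1)^(k+1) := hb
        _ ≤ (max (max (u 0) D) 0) * ((n:ℝ)+1)^(k+1) := by
            apply mul_le_mul_of_nonneg_right this hpow

/-- If `T` is a `(2m+1)`-contraction, then `T` is a `2m`-contraction and
`‖T^n x‖² ≲ (n+1)^{2m}` for every `x` (constant depending on `x`). -/
theorem stmt_15 {H : Type*} [NormedAddCommGroup H] [InnerProductSpace ℂ H] [CompleteSpace H]
    (T : H →L[ℂ] H) (m : ℕ) (hm : 1 ≤ m)
    (hT : ∀ x : H, 0 ≤ ∑ j ∈ Finset.range (2 * m + 2),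
      (-1 : ℝ) ^ j * (Nat.choose (2 * m + 1) j) * ‖(T ^ j) x‖ ^ 2) :
    (∀ x : H, 0 ≤ ∑ j ∈ Finset.range (2 * m + 1),
      (-1 : ℝ) ^ j * (Nat.choose (2 * m) j) * ‖(T ^ j) x‖ ^ 2) ∧
    (∀ x : H, ∃ C : ℝ, ∀ n : ℕ, ‖(T ^ n) x‖ ^ 2 ≤ C * ((n : ℝ) + 1) ^ (2 * m)) := by
  -- setup
  have hu : ∀ (x : H) (n : ℕ), 0 ≤ ‖(T ^ n) x‖ ^ 2 := fun x n => by positivity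
  have hd : ∀ (x : H) (n : ℕ), (fwdDiff 1)^[2*m+1] (fun i => ‖(T ^ i) x‖ ^ 2) n ≤ 0 := by
    intro x n
    rw [key15]
    have hsum : ∑ j ∈ Finset.range (2*m+1+1),
        (-1:ℝ)^j * (Nat.choose (2*m+1) j) * ‖(T ^ (n+j)) x‖ ^ 2
        = ∑ j ∈ Finset.range (2*m+2),
        (-1:ℝ)^j * (Nat.choose (2*m+1) j) * ‖(T ^ j) ((T ^ n) x)‖ ^ 2 := by
      refine Finset.sum_congr rfl fun j _ => ?_
      congr 2
      rw [← ContinuousLinearMap.mul_apply, ← pow_add, Nat.add_comm n j]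
    rw [hsum]
    have h1 := hT ((T ^ n) x)
    have h2 : (-1:ℝ)^(2*m+1) = -1 := by
      rw [pow_succ, pow_mul]; norm_num
    rw [h2]
    nlinarith [h1]
  have hnn : ∀ (x : H) (n : ℕ), 0 ≤ (fwdDiff 1)^[2*m] (fun i => ‖(T ^ i) x‖ ^ 2) n := by
    intro x
    exact nonneg15 _ (2*m) (hu x) (hd x)
  have hpow2m : (-1:ℝ)^(2*m) = 1 := by rw [pow_mul]; norm_num
  constructor
  · intro x
    have := hnn x 0
    rw [key15, hpow2m, one_mul] at this
    simpa using this
  · intro x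
    set u : ℕ → ℝ := fun i => ‖(T ^ i) x‖ ^ 2 with hudef
    have hanti : ∀ a b, a ≤ b → (fwdDiff 1)^[2*m] u b ≤ (fwdDiff 1)^[2*m] u a := by
      apply anti15
      intro n
      have := hd x n
      rwa [Function.iterate_succ_apply'] at this
    set c : ℝ := max ((fwdDiff 1)^[2*m] u 0) 0 with hc
    have hbd : ∀ n, (fwdDiff 1)^[2*m] u n ≤ c :=
      fun n => le_trans (hanti 0 n (Nat.zero_le n)) (le_max_left _ _)
    obtain ⟨D, _, hD⟩ := growth15 (2*m) u c (le_max_right _ _) hbd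
    exact ⟨D, fun n => hD n⟩
end

section
/- Let m be a positive integer. If T is a 2m-contraction and ‖T^n x‖² = o(n^{2m-1}) as n → ∞ for every x ∈ H, then T is a (2m-1)-contraction. -/
open Filter Asymptotics Finset

noncomputable def Dseq (a : ℕ → ℝ) (k n : ℕ) : ℝ :=
  ∑ j ∈ Finset.range (k+1), (-1:ℝ)^j * (k.choose j) * a (n+j)

lemma Dseq_zero (a : ℕ → ℝ) (n : ℕ) : Dseq a 0 n = a n := by
  simp [Dseq]

lemma Dseq_succ (a : ℕ → ℝ) (k n : ℕ) :
    Dseq a (k+1) n = Dseq a k n - Dseq a k (n+1) := by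
  have h1 : Dseq a (k+1) n
      = (∑ j ∈ range (k+1), (-1:ℝ)^(j+1) * (((k+1).choose (j+1) : ℕ) : ℝ) * a (n+(j+1)))
        + a n := by
    unfold Dseq
    rw [Finset.sum_range_succ']
    simp
  have h2 : (∑ j ∈ range (k+1), (-1:ℝ)^(j+1) * (((k+1).choose (j+1) : ℕ) : ℝ) * a (n+(j+1)))
      = (∑ j ∈ range (k+1), -((-1:ℝ)^j * (k.choose j) * a ((n+1)+j)))
        + ∑ j ∈ range (k+1), (-1:ℝ)^(j+1) * (k.choose (j+1)) * a (n+(j+1)) := by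
    rw [← Finset.sum_add_distrib]
    apply Finset.sum_congr rfl
    intro j _
    have hcc : (((k+1).choose (j+1) : ℕ) : ℝ) = (k.choose j : ℝ) + (k.choose (j+1) : ℝ) := by
      rw [Nat.choose_succ_succ]; push_cast; ring
    have hadd : n + (j+1) = (n+1) + j := by omega
    rw [hcc, hadd]
    ring_nf
  have h3 : (∑ j ∈ range (k+1), (-1:ℝ)^(j+1) * (k.choose (j+1)) * a (n+(j+1)))
      = Dseq a k n - a n := by
    have h4 : Dseq a k n
        = (∑ j ∈ range k, (-1:ℝ)^(j+1) * (k.choose (j+1)) * a (n+(j+1))) + a n := by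
      unfold Dseq
      rw [Finset.sum_range_succ']
      simp
    rw [Finset.sum_range_succ, Nat.choose_succ_self]
    simp [h4]
  have h5 : (∑ j ∈ range (k+1), -((-1:ℝ)^j * (k.choose j) * a ((n+1)+j)))
      = - Dseq a k (n+1) := by
    rw [Finset.sum_neg_distrib]; rfl
  rw [h1, h2, h3, h5]; ring

lemma hockey (i : ℕ) (n : ℕ) :
    ∑ k ∈ range n, (k.choose i : ℝ) = (n.choose (i+1) : ℝ) := by
  induction n with
  | zero => simp
  | succ n ih => rw [sum_range_succ, ih, Nat.choose_succ_succ]; push_cast; ring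

lemma powsum (e : ℕ) (n : ℕ) : ∑ k ∈ range n, ((k:ℝ)+1)^e ≤ (n:ℝ)^(e+1) := by
  induction n with
  | zero => simp
  | succ n ih =>
    rw [sum_range_succ]
    have h2 : ((n:ℝ))^e ≤ ((n:ℝ)+1)^e :=
      pow_le_pow_left₀ (by positivity) (by linarith) e
    have h3 : ((n:ℝ)+1)^(e+1) = ((n:ℝ)+1)^e * (n:ℝ) + ((n:ℝ)+1)^e := by ring
    have h4 : ((n:ℝ))^(e+1) = ((n:ℝ))^e * (n:ℝ) := by ring
    push_cast
    nlinarith [pow_nonneg (show (0:ℝ) ≤ (n:ℝ) by positivity) e,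
      show (0:ℝ) ≤ (n:ℝ) from Nat.cast_nonneg n]

lemma accum (f g : ℕ → ℝ) (h : ∀ n, f (n+1) = f n + g n) (n : ℕ) :
    f n = f 0 + ∑ k ∈ range n, g k := by
  induction n with
  | zero => simp
  | succ n ih => rw [h, ih, sum_range_succ]; ring

lemma key (a : ℕ → ℝ) (p : ℕ) (hp : 1 ≤ p)
    (hpos : ∀ n, 0 ≤ a n)
    (hD : ∀ n, 0 ≤ Dseq a (p+1) n)
    (ho : (fun n : ℕ => a n) =o[atTop] (fun n : ℕ => (n:ℝ)^p)) :
    0 ≤ Dseq a p 0 := by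
  by_contra hneg
  push_neg at hneg
  set c : ℝ := -(Dseq a p 0) with hc
  have hc0 : 0 < c := by simp only [hc]; linarith
  have hmono : ∀ n, Dseq a p n ≤ -c := by
    intro n
    induction n with
    | zero => simp [hc]
    | succ n ih =>
      have h := hD n
      rw [Dseq_succ] at h
      linarith
  set b : ℕ → ℕ → ℝ := fun i n => (-1:ℝ)^(i+1) * Dseq a (p - i) n with hb
  have hb0 : ∀ n, c ≤ b 0 n := by
    intro n
    have := hmono n
    simp only [hb, Nat.sub_zero, zero_add, pow_one]
    linarith
  have hrec : ∀ i n, i + 1 ≤ p → b (i+1) (n+1) = b (i+1) n + b i n := by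
    intro i n hip
    have hk : p - (i+1) + 1 = p - i := by omega
    have h := Dseq_succ a (p - (i+1)) n
    rw [hk] at h
    simp only [hb]
    have h' : Dseq a (p-(i+1)) (n+1) = Dseq a (p-(i+1)) n - Dseq a (p-i) n := by linarith
    rw [h']
    rw [pow_succ (-1:ℝ) (i+1)]
    ring
  have hacc : ∀ i, i+1 ≤ p → ∀ n, b (i+1) n = b (i+1) 0 + ∑ k ∈ range n, b i k :=
    fun i hip n => accum _ _ (fun n => hrec i n hip) n
  have claim : ∀ i, 1 ≤ i → i ≤ p → ∃ K : ℝ, 0 ≤ K ∧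
      ∀ n : ℕ, c * ((n.choose i : ℕ):ℝ) - K * ((n:ℝ)+1)^(i-1) ≤ b i n := by
    intro i
    induction i with
    | zero => intro h; omega
    | succ i ih =>
      intro _ hip
      rcases Nat.eq_zero_or_pos i with hi0 | hi1
      · -- base case : i + 1 = 1
        subst hi0
        refine ⟨|b 1 0|, abs_nonneg _, fun n => ?_⟩
        have hsum : (n : ℝ) * c ≤ ∑ k ∈ range n, b 0 k := by
          have := Finset.card_nsmul_le_sum (range n) (b 0) c (fun k _ => hb0 k)
          simpa [nsmul_eq_mul] using this
        have heq := hacc 0 hip n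
        have : -|b 1 0| ≤ b 1 0 := neg_abs_le _
        simp only [zero_add, Nat.choose_one_right, Nat.sub_self, pow_zero]
        rw [heq]
        linarith
      · -- inductive step
        obtain ⟨K, hK0, hKb⟩ := ih hi1 (by omega)
        refine ⟨K + |b (i+1) 0|, by positivity, fun n => ?_⟩
        have heq := hacc i hip n
        have hlow : (∑ k ∈ range n, (c * ((k.choose i : ℕ):ℝ) - K * ((k:ℝ)+1)^(i-1)))
            ≤ ∑ k ∈ range n, b i k :=
          Finset.sum_le_sum (fun k _ => hKb k)
        have hsplit : (∑ k ∈ range n, (c * ((k.choose i : ℕ):ℝ) - K * ((k:ℝ)+1)^(i-1)))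
            = c * ((n.choose (i+1) : ℕ):ℝ) - K * ∑ k ∈ range n, ((k:ℝ)+1)^(i-1) := by
          rw [Finset.sum_sub_distrib, ← Finset.mul_sum, ← Finset.mul_sum, hockey]
        have hps : (∑ k ∈ range n, ((k:ℝ)+1)^(i-1)) ≤ (n:ℝ)^i := by
          have := powsum (i-1) n
          have hi : i - 1 + 1 = i := by omega
          rwa [hi] at this
        have hpow : ((n:ℝ))^i ≤ ((n:ℝ)+1)^i :=
          pow_le_pow_left₀ (by positivity) (by linarith [show (0:ℝ) ≤ (n:ℝ) from Nat.cast_nonneg n]) i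
        have hone : (1:ℝ) ≤ ((n:ℝ)+1)^i :=
          one_le_pow₀ (by linarith [show (0:ℝ) ≤ (n:ℝ) from Nat.cast_nonneg n])
        have habs : -|b (i+1) 0| ≤ b (i+1) 0 := neg_abs_le _
        have hKn : K * (∑ k ∈ range n, ((k:ℝ)+1)^(i-1)) ≤ K * ((n:ℝ)+1)^i :=
          mul_le_mul_of_nonneg_left (le_trans hps hpow) hK0
        have habs2 : |b (i+1) 0| * 1 ≤ |b (i+1) 0| * ((n:ℝ)+1)^i :=
          mul_le_mul_of_nonneg_left hone (abs_nonneg _)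
        have hii : i + 1 - 1 = i := by omega
        rw [hii, heq]
        nlinarith [hlow, hsplit]
  -- conclude : lower bound for a n
  obtain ⟨K, hK0, hKb⟩ := claim p hp le_rfl
  have hbp : ∀ n, b p n ≤ a n := by
    intro n
    simp only [hb, Nat.sub_self, Dseq_zero]
    have h1 : ((-1:ℝ))^(p+1) ≤ 1 := by
      calc ((-1:ℝ))^(p+1) ≤ |((-1:ℝ))^(p+1)| := le_abs_self _
      _ = 1 := by rw [abs_pow, abs_neg, abs_one, one_pow]
    nlinarith [hpos n]
  have lower : ∀ n : ℕ, c * ((n.choose p : ℕ):ℝ) - K * ((n:ℝ)+1)^(p-1) ≤ a n :=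
    fun n => le_trans (hKb n) (hbp n)
  -- littleO contradiction
  set c1 : ℝ := c / ((p.factorial : ℝ) * 2^p) with hc1
  have hfact : (0:ℝ) < (p.factorial : ℝ) := by exact_mod_cast p.factorial_pos
  have hc10 : 0 < c1 := by positivity
  have hε : (0:ℝ) < c1/2 := by positivity
  have hev := ho.def hε
  rw [eventually_atTop] at hev
  obtain ⟨N, hN⟩ := hev
  obtain ⟨n0, hn0⟩ := exists_nat_gt (K * 2^p / c1)
  set n : ℕ := max (max N (2*p + 1)) n0 with hn
  have hnN : N ≤ n := le_trans (le_max_left _ _) (le_max_left _ _)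
  have hn2p : 2*p + 1 ≤ n := le_trans (le_max_right _ _) (le_max_left _ _)
  have hnn0 : (K * 2^p / c1) < (n:ℝ) := lt_of_lt_of_le hn0 (by exact_mod_cast le_max_right _ n0)
  have hn1 : (1:ℝ) ≤ (n:ℝ) := by exact_mod_cast le_trans (by omega : 1 ≤ 2*p+1) hn2p
  have hn2pr : (2*(p:ℝ) + 1) ≤ (n:ℝ) := by exact_mod_cast hn2p
  -- a n ≤ (c1/2) n^p
  have hA : a n ≤ c1/2 * (n:ℝ)^p := by
    have := hN n hnN
    rwa [Real.norm_eq_abs, Real.norm_eq_abs, abs_of_nonneg (hpos n),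
      abs_of_nonneg (by positivity : (0:ℝ) ≤ (n:ℝ)^p)] at this
  -- choose lower bound
  have hch : (n:ℝ)^p / (2^p * (p.factorial:ℝ)) ≤ ((n.choose p : ℕ):ℝ) := by
    have h1 : (((n + 1 - p : ℕ) ^ p : ℕ) : ℝ) / (p.factorial:ℝ) ≤ ((n.choose p : ℕ):ℝ) := by
      exact_mod_cast Nat.pow_le_choose p n (α := ℝ)
    have hcast : ((n + 1 - p : ℕ) : ℝ) = (n:ℝ) + 1 - (p:ℝ) := by
      have : p ≤ n + 1 := by omega
      push_cast [Nat.cast_sub this]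
      ring
    have h2 : ((n:ℝ)/2) ≤ ((n + 1 - p : ℕ) : ℝ) := by rw [hcast]; linarith
    have h3 : ((n:ℝ)/2)^p ≤ (((n + 1 - p : ℕ) ^ p : ℕ) : ℝ) := by
      push_cast
      exact pow_le_pow_left₀ (by positivity) h2 p
    have h4 : ((n:ℝ)/2)^p / (p.factorial:ℝ) ≤ (((n + 1 - p : ℕ) ^ p : ℕ) : ℝ) / (p.factorial:ℝ) :=
      div_le_div_of_nonneg_right h3 hfact.le
    have h5 : ((n:ℝ)/2)^p / (p.factorial:ℝ) = (n:ℝ)^p / (2^p * (p.factorial:ℝ)) := by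
      rw [div_pow]; ring
    linarith
  have hclow : c1 * (n:ℝ)^p ≤ c * ((n.choose p : ℕ):ℝ) := by
    have := mul_le_mul_of_nonneg_left hch (le_of_lt hc0)
    calc c1 * (n:ℝ)^p = c * ((n:ℝ)^p / (2^p * (p.factorial:ℝ))) := by
          rw [hc1]; field_simp
    _ ≤ c * ((n.choose p : ℕ):ℝ) := this
  -- (n+1)^(p-1) ≤ 2^(p-1) n^(p-1)
  have hpow1 : ((n:ℝ)+1)^(p-1) ≤ 2^(p-1) * (n:ℝ)^(p-1) := by
    have h1 : ((n:ℝ)+1) ≤ 2 * (n:ℝ) := by linarith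
    have := pow_le_pow_left₀ (by linarith : (0:ℝ) ≤ (n:ℝ)+1) h1 (p-1)
    rwa [mul_pow] at this
  have hKpow : K * ((n:ℝ)+1)^(p-1) ≤ K * 2^(p-1) * (n:ℝ)^(p-1) := by
    have := mul_le_mul_of_nonneg_left hpow1 hK0
    linarith [this]
  -- combine
  have hmain : c1/2 * (n:ℝ)^p ≤ K * 2^(p-1) * (n:ℝ)^(p-1) := by
    have := lower n
    linarith
  have hps : (n:ℝ)^p = (n:ℝ) * (n:ℝ)^(p-1) := by
    rw [← pow_succ']
    congr 1
    omega
  have hnp1 : (0:ℝ) < (n:ℝ)^(p-1) := by positivity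
  have hfin : c1/2 * (n:ℝ) ≤ K * 2^(p-1) := by
    have h1 : (c1/2 * (n:ℝ)) * (n:ℝ)^(p-1) ≤ (K * 2^(p-1)) * (n:ℝ)^(p-1) := by
      rw [show (c1/2 * (n:ℝ)) * (n:ℝ)^(p-1) = c1/2 * ((n:ℝ) * (n:ℝ)^(p-1)) by ring, ← hps]
      linarith [hmain]
    exact le_of_mul_le_mul_right h1 hnp1
  have h2p : (2:ℝ)^p = 2 * 2^(p-1) := by
    rw [← pow_succ']
    congr 1
    omega
  have hK2p : K * 2^p = 2 * (K * (2:ℝ)^(p-1)) := by rw [h2p]; ring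
  have hlt : K * 2^p < (n:ℝ) * c1 := by
    rw [div_lt_iff₀ hc10] at hnn0
    linarith
  nlinarith [hfin, hlt, hK2p]

/-- If `T` is a `2m`-contraction and `‖T^n x‖² = o(n^{2m-1})` for every `x`, then `T` is
a `(2m-1)`-contraction. -/
theorem stmt_16 {H : Type*} [NormedAddCommGroup H] [InnerProductSpace ℂ H] [CompleteSpace H]
    (T : H →L[ℂ] H) (m : ℕ) (hm : 1 ≤ m)
    (hT : ∀ x : H, 0 ≤ ∑ j ∈ Finset.range (2 * m + 1),
      (-1 : ℝ) ^ j * (Nat.choose (2 * m) j) * ‖(T ^ j) x‖ ^ 2)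
    (ho : ∀ x : H, (fun n : ℕ => ‖(T ^ n) x‖ ^ 2) =o[atTop]
      (fun n : ℕ => (n : ℝ) ^ (2 * m - 1))) :
    ∀ x : H, 0 ≤ ∑ j ∈ Finset.range (2 * m),
      (-1 : ℝ) ^ j * (Nat.choose (2 * m - 1) j) * ‖(T ^ j) x‖ ^ 2 := by
  intro x
  have hpos : ∀ n : ℕ, 0 ≤ (fun n : ℕ => ‖(T ^ n) x‖ ^ 2) n := fun n => sq_nonneg _
  have hD : ∀ n, 0 ≤ Dseq (fun n : ℕ => ‖(T ^ n) x‖ ^ 2) ((2*m-1)+1) n := by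
    intro n
    have h := hT ((T ^ n) x)
    have e : Dseq (fun n : ℕ => ‖(T ^ n) x‖ ^ 2) ((2*m-1)+1) n
        = ∑ j ∈ Finset.range (2*m+1),
            (-1:ℝ)^j * ((2*m).choose j) * ‖(T ^ j) ((T ^ n) x)‖ ^ 2 := by
      unfold Dseq
      rw [show (2*m-1) + 1 = 2*m from by omega]
      refine Finset.sum_congr rfl fun j _ => ?_
      have hTT : (T ^ (n+j)) x = (T ^ j) ((T ^ n) x) := by
        rw [add_comm, pow_add, ContinuousLinearMap.mul_apply]
      simp only [hTT]
    rw [e]; exact h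
  have hfin := key (fun n : ℕ => ‖(T ^ n) x‖ ^ 2) (2*m-1) (by omega) hpos hD (ho x)
  have e2 : Dseq (fun n : ℕ => ‖(T ^ n) x‖ ^ 2) (2*m-1) 0
      = ∑ j ∈ Finset.range (2*m), (-1:ℝ)^j * ((2*m-1).choose j) * ‖(T ^ j) x‖ ^ 2 := by
    unfold Dseq
    rw [show (2*m-1) + 1 = 2*m from by omega]
    refine Finset.sum_congr rfl fun j _ => ?_
    simp only [Nat.zero_add, zero_add]
  rw [e2] at hfin
  exact hfin
end
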